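/- arXiv:2503.04591 — 6 statements merged into one kernel-verified Lean document; each statement's English description precedes it below -/
import Mathlib

section
/- Let n ≥ 1 and let μ be a finite sequence of nonempty subsets (blocks) of {0,…,n−1}. Then μ belongs to BS_n ∩ φ(BP_n) (i.e., μ is simultaneously a block-sequential update schedule and the block-sequence form of some block-parallel update schedule) if and only if μ is an ordered partition of {0,…,n−1} all of whose blocks have the same cardinality. -/
open Finset Nat

/-- `μ` is a block-parallel update schedule (partitioned order) of size `n`:
a finite set of nonempty lists (o-blocks) of elements of `Fin n` such that
every element of `Fin n` occurs exactly once in exactly one o-block. -/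
def IsBP (n : ℕ) (μ : Finset (List (Fin n))) : Prop :=
  (∀ S ∈ μ, S ≠ []) ∧ ∀ i : Fin n, (μ.sum fun S => S.count i) = 1

/-- The number of substeps `ℓ = lcm` of the o-block lengths. -/
def bpLen {n : ℕ} (μ : Finset (List (Fin n))) : ℕ := μ.lcm List.length

/-- The block updated at substep `t`: `W_t = { S[t mod |S|] : S ∈ μ }`. -/
def blockAt {n : ℕ} (μ : Finset (List (Fin n))) (t : ℕ) : Finset (Fin n) :=
  μ.biUnion fun S => (S[t % S.length]?).toFinset

/-- `φ(μ)`: the rewriting of a block-parallel update schedule as a sequence of blocks. -/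
def phiBP {n : ℕ} (μ : Finset (List (Fin n))) : List (Finset (Fin n)) :=
  (List.range (bpLen μ)).map (blockAt μ)

/-- `Ws` is a block-sequential update schedule of size `n`: an ordered partition
of `Fin n` into nonempty pairwise disjoint blocks covering everything. -/
def IsBS (n : ℕ) (Ws : List (Finset (Fin n))) : Prop :=
  (∀ W ∈ Ws, W.Nonempty) ∧ Ws.Pairwise Disjoint ∧ ∀ i : Fin n, ∃ W ∈ Ws, i ∈ W

lemma card_blockAt {n : ℕ} (μ : Finset (List (Fin n))) (h : IsBP n μ) (t : ℕ) :
    (blockAt μ t).card = μ.card := by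
  obtain ⟨hne, hcount⟩ := h
  have hidx : ∀ S ∈ μ, t % S.length < S.length := fun S hS =>
    Nat.mod_lt _ (List.length_pos_iff.mpr (hne S hS))
  have hfin : ∀ S (hS : S ∈ μ), (S[t % S.length]?).toFinset
      = {S[t % S.length]'(hidx S hS)} := by
    intro S hS
    rw [List.getElem?_eq_getElem (hidx S hS)]
    rfl
  have hdisj : ∀ S ∈ μ, ∀ S' ∈ μ, S ≠ S' → ∀ x : Fin n, x ∈ S → x ∈ S' → False := by
    intro S hS S' hS' hne' x hx hx'
    have h2 : 2 ≤ μ.sum fun S => S.count x := by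
      have : ({S, S'} : Finset (List (Fin n))).sum (fun S => S.count x)
          ≤ μ.sum fun S => S.count x := by
        apply Finset.sum_le_sum_of_subset
        intro y hy
        simp only [Finset.mem_insert, Finset.mem_singleton] at hy
        rcases hy with rfl | rfl <;> assumption
      rw [Finset.sum_pair hne'] at this
      have h1 : 1 ≤ S.count x := List.one_le_count_iff.mpr hx
      have h1' : 1 ≤ S'.count x := List.one_le_count_iff.mpr hx'
      omega
    rw [hcount x] at h2; omega
  unfold blockAt
  rw [Finset.card_biUnion]
  · rw [Finset.sum_congr rfl (fun S hS => by rw [hfin S hS, Finset.card_singleton])]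
    simp
  · intro S hS S' hS' hne'
    simp only [Function.onFun]
    rw [hfin S hS, hfin S' hS']
    simp only [Finset.disjoint_singleton]
    intro heq
    exact absurd heq (by
      intro heq'
      exact hdisj S hS S' hS' hne' _ (heq' ▸ List.getElem_mem _) (List.getElem_mem _))

lemma sum_countP {α β : Type*} (s : Finset α) (l : List β) (p : α → β → Bool) :
    ∑ k ∈ s, l.countP (p k) = (l.map (fun b => (s.filter (fun k => p k b)).card)).sum := by
  induction l with
  | nil => simp
  | cons b l ih =>
    simp only [List.countP_cons, List.map_cons, List.sum_cons, Finset.sum_add_distrib, ih]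
    rw [add_comm]
    congr 1
    rw [Finset.card_filter]

lemma sum_indicator_eq_one {n : ℕ} {Ws : List (Finset (Fin n))}
    (hp : Ws.Pairwise Disjoint) (i : Fin n) (h : ∃ W ∈ Ws, i ∈ W) :
    (Ws.map (fun W => if i ∈ W then 1 else 0)).sum = 1 := by
  induction Ws with
  | nil => simp at h
  | cons W Ws ih =>
    rw [List.pairwise_cons] at hp
    simp only [List.map_cons, List.sum_cons]
    by_cases hi : i ∈ W
    · have hz : (Ws.map (fun W => if i ∈ W then 1 else 0)).sum = 0 := by
        apply List.sum_eq_zero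
        intro x hx
        simp only [List.mem_map] at hx
        obtain ⟨W', hW', rfl⟩ := hx
        have := Finset.disjoint_left.mp (hp.1 W' hW') hi
        simp [this]
      simp [hi, hz]
    · have hex : ∃ W ∈ Ws, i ∈ W := by
        obtain ⟨W', hW', hiW'⟩ := h
        rcases hW' with _ | hW'
        · exact absurd hiW' hi
        · exact ⟨W', by assumption, hiW'⟩
      have := ih hp.2 hex
      simp [hi, this]

lemma filter_card_getD {n c : ℕ} (d : Fin n) (W : Finset (Fin n)) (hW : W.card = c)
    (i : Fin n) :
    ((Finset.univ : Finset (Fin c)).filter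
      (fun k : Fin c => ((W.sort (·≤·)).getD (k : ℕ) d == i))).card
      = if i ∈ W then 1 else 0 := by
  set l := W.sort (·≤·) with hl
  have hlen : l.length = c := by rw [hl, Finset.length_sort, hW]
  have hnd : l.Nodup := W.sort_nodup (·≤·)
  have hgd : ∀ k : Fin c, l.getD (k : ℕ) d = l[(k : ℕ)]'(hlen ▸ k.isLt) := by
    intro k; exact List.getD_eq_getElem l d (hlen ▸ k.isLt)
  by_cases hi : i ∈ W
  · have hil : i ∈ l := (Finset.mem_sort _).mpr hi
    obtain ⟨k₀, hk₀, hget⟩ := List.mem_iff_getElem.mp hil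
    rw [if_pos hi]
    have heq : (Finset.univ.filter (fun k : Fin c => (l.getD (k : ℕ) d == i)))
        = {(⟨k₀, hlen ▸ hk₀⟩ : Fin c)} := by
      ext k
      simp only [Finset.mem_filter, Finset.mem_univ, true_and, Finset.mem_singleton,
        hgd k, beq_iff_eq]
      constructor
      · intro hk
        have h2 : l[(k : ℕ)]'(hlen ▸ k.isLt) = l[k₀] := by rw [hk, hget]
        exact Fin.ext ((List.Nodup.getElem_inj_iff hnd).mp h2)
      · rintro rfl; exact hget
    rw [heq, Finset.card_singleton]
  · rw [if_neg hi]
    rw [Finset.card_eq_zero, Finset.filter_eq_empty_iff]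
    intro k _
    simp only [hgd k, beq_iff_eq]
    intro hk
    have hm := List.getElem_mem (hlen ▸ k.isLt : (k : ℕ) < l.length)
    rw [hk] at hm
    exact hi ((Finset.mem_sort _).mp hm)

lemma exists_mu {n : ℕ} (hn : 1 ≤ n) (Ws : List (Finset (Fin n))) (hBS : IsBS n Ws)
    (c : ℕ) (hc : ∀ W ∈ Ws, W.card = c) :
    ∃ μ : Finset (List (Fin n)), IsBP n μ ∧ phiBP μ = Ws := by
  obtain ⟨hne, hpw, hcov⟩ := hBS
  set d : Fin n := ⟨0, hn⟩ with hd
  have hWsne : Ws ≠ [] := by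
    obtain ⟨W, hW, _⟩ := hcov d
    intro h; rw [h] at hW; exact absurd hW List.not_mem_nil
  set L := Ws.length with hL
  have hLpos : 0 < L := List.length_pos_iff.mpr hWsne
  have hW0 : Ws[0]'hLpos ∈ Ws := List.getElem_mem _
  have hcpos : 0 < c := by
    rw [← hc _ hW0]; exact Finset.card_pos.mpr (hne _ hW0)
  set f : Fin c → List (Fin n) :=
    fun k => Ws.map (fun W => (W.sort (·≤·)).getD (k : ℕ) d) with hf
  have hflen : ∀ k, (f k).length = L := fun k => by rw [hf]; simp [hL]
  have hfget : ∀ (k : Fin c) (t : ℕ) (ht : t < L),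
      (f k)[t]'((hflen k).symm ▸ ht) = ((Ws[t]'ht).sort (·≤·)).getD (k : ℕ) d := by
    intro k t ht
    simp only [hf, List.getElem_map]
  have hfinj : Function.Injective f := by
    intro k k' hkk
    have h0 : (f k)[0]'((hflen k).symm ▸ hLpos) = (f k')[0]'((hflen k').symm ▸ hLpos) := by
      congr 1
    rw [hfget k 0 hLpos, hfget k' 0 hLpos] at h0
    set l := ((Ws[0]'hLpos).sort (·≤·)) with hl
    have hlen : l.length = c := by rw [hl, Finset.length_sort, hc _ hW0]
    have hnd : l.Nodup := Finset.sort_nodup _ _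
    rw [List.getD_eq_getElem l d (hlen ▸ k.isLt), List.getD_eq_getElem l d (hlen ▸ k'.isLt)] at h0
    exact Fin.ext ((List.Nodup.getElem_inj_iff hnd).mp h0)
  set μ : Finset (List (Fin n)) := Finset.image f Finset.univ with hμ
  have hmemμ : ∀ S, S ∈ μ ↔ ∃ k, f k = S := by
    intro S; rw [hμ]; simp
  have hIsBP : IsBP n μ := by
    constructor
    · intro S hS
      obtain ⟨k, rfl⟩ := (hmemμ S).mp hS
      intro hnil
      have h1 := hflen k
      rw [hnil] at h1
      simp at h1
      omega
    · intro i
      rw [hμ, Finset.sum_image (fun a _ b _ h => hfinj h)]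
      have hcnt : ∀ k : Fin c, (f k).count i
          = Ws.countP (fun W => ((W.sort (·≤·)).getD (k : ℕ) d == i)) := by
        intro k
        rw [hf]
        simp only [List.count_eq_countP, List.countP_map]
        rfl
      calc ∑ k : Fin c, (f k).count i
          = ∑ k : Fin c, Ws.countP (fun W => ((W.sort (·≤·)).getD (k : ℕ) d == i)) :=
            Finset.sum_congr rfl (fun k _ => hcnt k)
        _ = (Ws.map (fun W => ((Finset.univ : Finset (Fin c)).filter
              (fun k : Fin c => ((W.sort (·≤·)).getD (k : ℕ) d == i))).card)).sum :=
            sum_countP _ _ _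
        _ = (Ws.map (fun W => if i ∈ W then 1 else 0)).sum := by
            congr 1
            apply List.map_congr_left
            intro W hW
            exact filter_card_getD d W (hc W hW) i
        _ = 1 := sum_indicator_eq_one hpw i (hcov i)
  refine ⟨μ, hIsBP, ?_⟩
  have hlcm : bpLen μ = L := by
    unfold bpLen
    apply Nat.dvd_antisymm
    · apply Finset.lcm_dvd
      intro S hS
      obtain ⟨k, rfl⟩ := (hmemμ S).mp hS
      rw [hflen k]
    · have hm : f ⟨0, hcpos⟩ ∈ μ := (hmemμ _).mpr ⟨_, rfl⟩
      have hdv := Finset.dvd_lcm (f := List.length) hm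
      rwa [hflen] at hdv
  have hblock : ∀ (t : ℕ) (ht : t < L), blockAt μ t = Ws[t]'ht := by
    intro t ht
    have hsortlen : ((Ws[t]'ht).sort (·≤·)).length = c := by
      rw [Finset.length_sort, hc _ (List.getElem_mem _)]
    unfold blockAt
    ext x
    rw [Finset.mem_biUnion]
    constructor
    · rintro ⟨S, hS, hx⟩
      obtain ⟨k, rfl⟩ := (hmemμ S).mp hS
      have e1 : t % (f k).length = t := by rw [hflen k]; exact Nat.mod_eq_of_lt ht
      rw [e1, List.getElem?_eq_getElem ((hflen k).symm ▸ ht)] at hx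
      simp only [Option.toFinset_some, Finset.mem_singleton] at hx
      subst hx
      rw [hfget k t ht]
      have hmem : ((Ws[t]'ht).sort (·≤·)).getD (k : ℕ) d ∈ ((Ws[t]'ht).sort (·≤·)) := by
        rw [List.getD_eq_getElem _ d (hsortlen ▸ k.isLt)]
        exact List.getElem_mem _
      exact (Finset.mem_sort _).mp hmem
    · intro hx
      have hxl : x ∈ ((Ws[t]'ht).sort (·≤·)) := (Finset.mem_sort _).mpr hx
      obtain ⟨k₀, hk₀, hget⟩ := List.mem_iff_getElem.mp hxl
      have hk₀c : k₀ < c := hsortlen ▸ hk₀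
      refine ⟨f ⟨k₀, hk₀c⟩, (hmemμ _).mpr ⟨_, rfl⟩, ?_⟩
      have e1 : t % (f ⟨k₀, hk₀c⟩).length = t := by rw [hflen]; exact Nat.mod_eq_of_lt ht
      rw [e1, List.getElem?_eq_getElem ((hflen ⟨k₀, hk₀c⟩).symm ▸ ht)]
      simp only [Option.toFinset_some, Finset.mem_singleton]
      rw [hfget ⟨k₀, hk₀c⟩ t ht]
      rw [List.getD_eq_getElem _ d hk₀]
      exact hget.symm
  unfold phiBP
  rw [hlcm]
  apply List.ext_getElem
  · simp [hL]
  · intro t h1 h2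
    simp only [List.getElem_map, List.getElem_range]
    exact hblock t h2


/-- A sequence of nonempty blocks is simultaneously block-sequential and the
block-sequence form of some block-parallel schedule iff it is an ordered
partition all of whose blocks have the same cardinality. -/

theorem bs_inter_phi_bp_iff (n : ℕ) (hn : 1 ≤ n) (Ws : List (Finset (Fin n)))
    (hne : ∀ W ∈ Ws, W.Nonempty) :
    (IsBS n Ws ∧ ∃ μ : Finset (List (Fin n)), IsBP n μ ∧ phiBP μ = Ws) ↔
      (IsBS n Ws ∧ ∃ c : ℕ, ∀ W ∈ Ws, W.card = c) := by
  constructor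
  · rintro ⟨hBS, μ, hBP, hphi⟩
    refine ⟨hBS, μ.card, ?_⟩
    intro W hW
    rw [← hphi] at hW
    unfold phiBP at hW
    simp only [List.mem_map, List.mem_range] at hW
    obtain ⟨t, _, rfl⟩ := hW
    exact card_blockAt μ hBP t
  · rintro ⟨hBS, c, hc⟩
    exact ⟨hBS, exists_mu hn Ws hBS c hc⟩
end

section
/- For every n ≥ 1, the number of sequences of blocks that are simultaneously block-sequential and block-parallel, i.e., |BS_n ∩ φ(BP_n)|, equals Σ_{d | n} n! / ((n/d)!)^d. Equivalently, the number of ordered partitions of an n-element set into blocks all of equal size equals Σ_{d | n} n! / ((n/d)!)^d (the sum ranging over positive divisors d of n, with d the number of blocks and n/d the common block size). -/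
open Finset Nat

section Helpers
variable {n : ℕ}

lemma mem_foldr_union {β : Type*} [DecidableEq β] (l : List (Finset β)) (i : β) :
    i ∈ l.foldr (· ∪ ·) ∅ ↔ ∃ W ∈ l, i ∈ W := by
  induction l with
  | nil => simp
  | cons W l ih => simp [ih]

lemma card_foldr_union {β : Type*} [DecidableEq β] (l : List (Finset β))
    (h : l.Pairwise Disjoint) :
    (l.foldr (· ∪ ·) ∅).card = (l.map Finset.card).sum := by
  induction l with
  | nil => simp
  | cons W l ih =>
    rw [List.pairwise_cons] at h
    have hdisj : Disjoint W (l.foldr (· ∪ ·) ∅) := by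
      rw [Finset.disjoint_left]
      intro a haW hafold
      rcases (mem_foldr_union l a).1 hafold with ⟨V, hV, haV⟩
      exact Finset.disjoint_left.1 (h.1 V hV) haW haV
    simp only [List.foldr_cons, List.map_cons, List.sum_cons]
    rw [Finset.card_union_of_disjoint hdisj, ih h.2]

lemma isBS_sum_card {Ws : List (Finset (Fin n))} (h : IsBS n Ws) :
    (Ws.map Finset.card).sum = n := by
  have hu : Ws.foldr (· ∪ ·) ∅ = Finset.univ := by
    ext i
    simp only [Finset.mem_univ, iff_true, mem_foldr_union]
    exact h.2.2 i
  rw [← card_foldr_union Ws h.2.1, hu, Finset.card_univ, Fintype.card_fin]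

end Helpers

section Phi
variable {n : ℕ}

lemma isBP_not_mem_two {μ : Finset (List (Fin n))} (h : IsBP n μ)
    {S S' : List (Fin n)} (hS : S ∈ μ) (hS' : S' ∈ μ) (hne : S ≠ S')
    {i : Fin n} (hiS : i ∈ S) (hiS' : i ∈ S') : False := by
  have hsub : ({S, S'} : Finset (List (Fin n))) ⊆ μ := by
    intro x hx; rcases Finset.mem_insert.1 hx with h1 | h1
    · exact h1 ▸ hS
    · exact (Finset.mem_singleton.1 h1) ▸ hS'
  have hle : ∑ X ∈ ({S, S'} : Finset (List (Fin n))), X.count i ≤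
      ∑ X ∈ μ, X.count i := Finset.sum_le_sum_of_subset hsub
  rw [Finset.sum_pair hne, h.2 i] at hle
  have h1 : 1 ≤ S.count i := List.count_pos_iff.2 hiS
  have h2 : 1 ≤ S'.count i := List.count_pos_iff.2 hiS'
  omega

lemma blockAt_card {μ : Finset (List (Fin n))} (h : IsBP n μ) (t : ℕ) :
    (blockAt μ t).card = μ.card := by
  unfold blockAt
  rw [Finset.card_biUnion]
  · rw [Finset.sum_congr rfl fun S hS => ?_, Finset.sum_const, smul_eq_mul, mul_one]
    have hlen : 0 < S.length := List.length_pos_iff.2 (h.1 S hS)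
    rw [List.getElem?_eq_getElem (Nat.mod_lt _ hlen)]
    simp
  · intro S hS S' hS' hne
    simp only [Finset.disjoint_left]
    intro a ha ha'
    have hlen : 0 < S.length := List.length_pos_iff.2 (h.1 S hS)
    have hlen' : 0 < S'.length := List.length_pos_iff.2 (h.1 S' hS')
    rw [List.getElem?_eq_getElem (Nat.mod_lt _ hlen)] at ha
    rw [List.getElem?_eq_getElem (Nat.mod_lt _ hlen')] at ha'
    simp only [Option.toFinset_some, Finset.mem_singleton] at ha ha'
    exact isBP_not_mem_two h hS hS' hne (ha ▸ List.getElem_mem _)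
      (ha' ▸ List.getElem_mem _)

end Phi

section SsubT
variable {n : ℕ}

lemma phi_equal_cards {Ws : List (Finset (Fin n))} (hn : 1 ≤ n) (hBS : IsBS n Ws)
    {μ : Finset (List (Fin n))} (hBP : IsBP n μ) (hφ : phiBP μ = Ws) :
    Ws.length ∣ n ∧ ∀ W ∈ Ws, W.card = n / Ws.length := by
  have hcard : ∀ W ∈ Ws, W.card = μ.card := by
    intro W hW
    rw [← hφ] at hW
    rcases List.mem_map.1 hW with ⟨t, _, rfl⟩
    exact blockAt_card hBP t
  have hsum : (Ws.map Finset.card).sum = Ws.length * μ.card := by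
    rw [List.sum_eq_card_nsmul _ μ.card, List.length_map, smul_eq_mul]
    intro x hx
    rcases List.mem_map.1 hx with ⟨W, hW, rfl⟩
    exact hcard W hW
  have hn' : Ws.length * μ.card = n := by rw [← hsum, isBS_sum_card hBS]
  have hlpos : 0 < Ws.length := by
    rcases Nat.eq_zero_or_pos Ws.length with h0 | h
    · exfalso
      rcases hBS.2.2 ⟨0, hn⟩ with ⟨W, hW, _⟩
      rw [List.length_eq_zero_iff.1 h0] at hW
      exact List.not_mem_nil hW
    · exact h
  refine ⟨⟨μ.card, hn'.symm⟩, fun W hW => ?_⟩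
  rw [hcard W hW]
  exact (Nat.div_eq_of_eq_mul_left hlpos (by rw [Nat.mul_comm]; exact hn'.symm)).symm

end SsubT

section TsubS
variable {n : ℕ}

lemma exists_bp (hn : 1 ≤ n) (Ws : List (Finset (Fin n))) (hBS : IsBS n Ws)
    (hdvd : Ws.length ∣ n) (hc : ∀ W ∈ Ws, W.card = n / Ws.length) :
    ∃ μ : Finset (List (Fin n)), IsBP n μ ∧ phiBP μ = Ws := by
  set m := n / Ws.length with hm
  set d := Ws.length with hdd
  have hdpos : 0 < d := by
    rcases Nat.eq_zero_or_pos d with h0 | h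
    · exfalso
      rcases hBS.2.2 ⟨0, hn⟩ with ⟨W, hW, _⟩
      rw [List.length_eq_zero_iff.1 h0] at hW
      exact List.not_mem_nil hW
    · exact h
  have hdm : d * m = n := Nat.mul_div_cancel' hdvd
  have hmpos : 0 < m := by
    rcases Nat.eq_zero_or_pos m with h0 | h
    · rw [h0, Nat.mul_zero] at hdm; omega
    · exact h
  -- the sorted list of each block
  set srt : Finset (Fin n) → List (Fin n) := fun W => W.sort (· ≤ ·) with hsrt
  have hlen_srt : ∀ t : Fin d, (srt Ws[(t : ℕ)]).length = m := by
    intro t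
    rw [hsrt, Finset.length_sort, hc _ (List.getElem_mem _)]
  set e : Fin d → Fin m → Fin n := fun t j => (srt Ws[(t : ℕ)]).getD j ⟨0, hn⟩ with he
  have he_eq : ∀ (t : Fin d) (j : Fin m),
      e t j = (srt Ws[(t : ℕ)])[(j : ℕ)]'(by rw [hlen_srt]; exact j.isLt) := by
    intro t j
    rw [he]
    exact List.getD_eq_getElem _ _ _
  have he_mem : ∀ (t : Fin d) (j : Fin m), e t j ∈ Ws[(t : ℕ)] := by
    intro t j
    rw [he_eq]
    exact (Finset.mem_sort _).1 (List.getElem_mem _)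
  have hblock_disj : ∀ t t' : Fin d, t ≠ t' → Disjoint Ws[(t : ℕ)] Ws[(t' : ℕ)] := by
    intro t t' hne
    have hp := List.pairwise_iff_get.1 hBS.2.1
    rcases lt_or_gt_of_ne hne with h | h
    · exact hp t t' h
    · exact (hp t' t h).symm
  have ht_unique : ∀ (i : Fin n) (t t' : Fin d), i ∈ Ws[(t : ℕ)] → i ∈ Ws[(t' : ℕ)] → t = t' := by
    intro i t t' h1 h2
    by_contra hne
    exact Finset.disjoint_left.1 (hblock_disj t t' hne) h1 h2
  have he_inj_j : ∀ t : Fin d, Function.Injective (e t) := by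
    intro t j j' hjj
    rw [he_eq, he_eq] at hjj
    have hnd : (srt Ws[(t : ℕ)]).Nodup := Finset.sort_nodup _ _
    have := List.Nodup.getElem_inj_iff hnd |>.1 hjj
    exact Fin.ext this
  have he_inj_t : ∀ j : Fin m, Function.Injective (fun t => e t j) := by
    intro j t t' h
    have h' : e t j = e t' j := h
    exact ht_unique (e t j) t t' (he_mem t j) (by rw [h']; exact he_mem t' j)
  set ob : Fin m → List (Fin n) := fun j => (List.finRange d).map (fun t => e t j) with hob
  have hob_len : ∀ j, (ob j).length = d := by intro j; simp [hob]
  have hob_get : ∀ (j : Fin m) (t : ℕ) (ht : t < d),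
      (ob j)[t]'(by rw [hob_len]; exact ht) = e ⟨t, ht⟩ j := by
    intro j t ht
    simp [hob]
  have hmem_ob : ∀ (i : Fin n) (j : Fin m), i ∈ ob j ↔ ∃ t, e t j = i := by
    intro i j
    simp [hob]
  have hob_nodup : ∀ j, (ob j).Nodup := by
    intro j
    exact (List.nodup_finRange d).map (he_inj_t j)
  have hob_inj : Function.Injective ob := by
    intro j j' h
    have h0 : (0 : ℕ) < d := hdpos
    have := hob_get j 0 h0
    have h2 := hob_get j' 0 h0
    have h3 : (ob j)[0]'(by rw [hob_len]; exact h0) = (ob j')[0]'(by rw [hob_len]; exact h0) := by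
      congr 1
    rw [this, h2] at h3
    exact he_inj_j _ h3
  set μ : Finset (List (Fin n)) := Finset.image ob Finset.univ with hμ
  have hmem_μ : ∀ S, S ∈ μ ↔ ∃ j, ob j = S := by
    intro S; simp [hμ]
  -- for each i, find its block index and sorted position
  have hfind : ∀ i : Fin n, ∃ (t : Fin d) (j : Fin m), e t j = i := by
    intro i
    rcases hBS.2.2 i with ⟨W, hW, hiW⟩
    rcases List.mem_iff_getElem.1 hW with ⟨t, ht, rfl⟩
    have hisrt : i ∈ srt Ws[t] := by
      rw [hsrt]; exact (Finset.mem_sort _).2 hiW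
    rcases List.mem_iff_getElem.1 hisrt with ⟨j, hj, hji⟩
    have hjm : j < m := by rw [← hlen_srt ⟨t, ht⟩]; exact hj
    exact ⟨⟨t, ht⟩, ⟨j, hjm⟩, by rw [he_eq]; exact hji⟩
  have hBP : IsBP n μ := by
    constructor
    · intro S hS
      rcases (hmem_μ S).1 hS with ⟨j, rfl⟩
      intro hnil
      have := hob_len j
      rw [hnil] at this
      simp at this
      omega
    · intro i
      rw [hμ, Finset.sum_image (fun a _ b _ h => hob_inj h)]
      rcases hfind i with ⟨ti, ji, hei⟩
      have hcnt : ∀ j : Fin m, (ob j).count i = if j = ji then 1 else 0 := by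
        intro j
        split_ifs with hj
        · subst hj
          exact List.count_eq_one_of_mem (hob_nodup j) ((hmem_ob i j).2 ⟨ti, hei⟩)
        · refine List.count_eq_zero_of_not_mem (fun hmem => hj ?_)
          rcases (hmem_ob i j).1 hmem with ⟨t, het⟩
          have htti : t = ti := ht_unique i t ti (het ▸ he_mem t j) (hei ▸ he_mem ti ji)
          subst htti
          exact he_inj_j t (het.trans hei.symm)
      rw [Finset.sum_congr rfl (fun j _ => hcnt j)]
      simp
  have hbpLen : bpLen μ = d := by
    unfold bpLen
    apply Nat.dvd_antisymm
    · apply Finset.lcm_dvd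
      intro S hS
      rcases (hmem_μ S).1 hS with ⟨j, rfl⟩
      rw [hob_len]
    · have hj0 : ob ⟨0, hmpos⟩ ∈ μ := (hmem_μ _).2 ⟨_, rfl⟩
      have := Finset.dvd_lcm (f := List.length) hj0
      rwa [hob_len] at this
  have hblockAt : ∀ (t : ℕ) (ht : t < d), blockAt μ t = Ws[t]'ht := by
    intro t ht
    ext i
    unfold blockAt
    rw [Finset.mem_biUnion]
    constructor
    · rintro ⟨S, hS, hiS⟩
      rcases (hmem_μ S).1 hS with ⟨j, rfl⟩
      rw [List.getElem?_eq_getElem (by rw [hob_len]; exact Nat.mod_lt _ hdpos)] at hiS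
      simp only [Option.toFinset_some, Finset.mem_singleton] at hiS
      have hmod : t % (ob j).length = t := by rw [hob_len]; exact Nat.mod_eq_of_lt ht
      subst hiS
      have : (ob j)[t % (ob j).length]'(Nat.mod_lt _ (by rw [hob_len]; exact hdpos)) = e ⟨t, ht⟩ j := by
        simp only [hmod]
        exact hob_get j t ht
      rw [this]
      exact he_mem ⟨t, ht⟩ j
    · intro hi
      have hisrt : i ∈ srt (Ws[t]'ht) := by
        rw [hsrt]; exact (Finset.mem_sort _).2 hi
      rcases List.mem_iff_getElem.1 hisrt with ⟨j, hj, hji⟩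
      have hjm : j < m := by rw [← hlen_srt ⟨t, ht⟩]; exact hj
      refine ⟨ob ⟨j, hjm⟩, (hmem_μ _).2 ⟨_, rfl⟩, ?_⟩
      rw [List.getElem?_eq_getElem (by rw [hob_len]; exact Nat.mod_lt _ hdpos)]
      simp only [Option.toFinset_some, Finset.mem_singleton]
      have hmod : t % (ob ⟨j, hjm⟩).length = t := by rw [hob_len]; exact Nat.mod_eq_of_lt ht
      have : (ob ⟨j, hjm⟩)[t % (ob ⟨j, hjm⟩).length]'(Nat.mod_lt _ (by rw [hob_len]; exact hdpos)) = e ⟨t, ht⟩ ⟨j, hjm⟩ := by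
        simp only [hmod]
        exact hob_get _ t ht
      rw [this, he_eq]
      exact hji.symm
  refine ⟨μ, hBP, ?_⟩
  apply List.ext_getElem
  · simp only [phiBP, List.length_map, List.length_range, hbpLen, hdd]
  · intro t h1 h2
    simp only [phiBP, List.getElem_map, List.getElem_range]
    simp only [phiBP, List.length_map, List.length_range, hbpLen] at h1
    exact hblockAt t h1

end TsubS

/-- The "function form" of an equal-block ordered partition. -/
def QPart (n d : ℕ) (W : Fin d → Finset (Fin n)) : Prop :=
  (∀ t t', t ≠ t' → Disjoint (W t) (W t')) ∧ (∀ i, ∃ t, i ∈ W t) ∧ ∀ t, (W t).card = n / d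

lemma count_QPart (n d : ℕ) (hd : d ∣ n) :
    Nat.card {W : Fin d → Finset (Fin n) // QPart n d W} * ((n / d)!) ^ d = n ! := by
  classical
  set m := n / d with hm
  have hdm : d * m = n := Nat.mul_div_cancel' hd
  have key : ∀ (W : {W : Fin d → Finset (Fin n) // QPart n d W})
      (σ : ∀ t : Fin d, Fin m ≃ {x : Fin n // x ∈ W.1 t}),
      Function.Bijective (fun p : Fin d × Fin m => ((σ p.1 p.2 : Fin n))) := by
    rintro ⟨W, hW⟩ σ
    rw [Fintype.bijective_iff_injective_and_card]
    constructor
    · rintro ⟨t, j⟩ ⟨t', j'⟩ h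
      simp only at h
      by_cases htt : t = t'
      · subst htt
        have : σ t j = σ t j' := Subtype.ext h
        rw [(σ t).injective this]
      · exfalso
        exact Finset.disjoint_left.1 (hW.1 t t' htt) (σ t j).2 (h ▸ (σ t' j').2)
    · simp [hdm]
  set g : (Σ W : {W : Fin d → Finset (Fin n) // QPart n d W},
      ∀ t : Fin d, Fin m ≃ {x : Fin n // x ∈ W.1 t}) → (Fin d × Fin m ≃ Fin n) :=
    fun x => Equiv.ofBijective _ (key x.1 x.2) with hg
  have hgbij : Function.Bijective g := by
    constructor
    · rintro ⟨⟨W, hW⟩, σ⟩ ⟨⟨W', hW'⟩, σ'⟩ h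
      have hpt : ∀ (t : Fin d) (j : Fin m), ((σ t j : Fin n)) = ((σ' t j : Fin n)) := by
        intro t j
        exact Equiv.ext_iff.1 h (t, j)
      have hWW : W = W' := by
        funext t
        ext i
        constructor
        · intro hi
          obtain ⟨j, hj⟩ := (σ t).surjective ⟨i, hi⟩
          have : (σ t j : Fin n) = i := congrArg Subtype.val hj
          rw [← this, hpt t j]
          exact (σ' t j).2
        · intro hi
          obtain ⟨j, hj⟩ := (σ' t).surjective ⟨i, hi⟩
          have : (σ' t j : Fin n) = i := congrArg Subtype.val hj
          rw [← this, ← hpt t j]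
          exact (σ t j).2
      subst hWW
      have hσ : σ = σ' := by
        funext t
        apply Equiv.ext
        intro j
        exact Subtype.ext (hpt t j)
      rw [hσ]
    · intro e
      set W : Fin d → Finset (Fin n) := fun t => Finset.image (fun j => e (t, j)) Finset.univ
        with hWdef
      have hWmem : ∀ (t : Fin d) (j : Fin m), e (t, j) ∈ W t := by
        intro t j
        exact Finset.mem_image.2 ⟨j, Finset.mem_univ j, rfl⟩
      have hW : QPart n d W := by
        refine ⟨?_, ?_, ?_⟩
        · intro t t' htt
          rw [Finset.disjoint_left]
          intro i hi hi'
          rcases Finset.mem_image.1 hi with ⟨j, _, hj⟩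
          rcases Finset.mem_image.1 hi' with ⟨j', _, hj'⟩
          have : (t, j) = (t', j') := e.injective (by rw [hj, hj'])
          exact htt (congrArg Prod.fst this)
        · intro i
          obtain ⟨⟨t, j⟩, hp⟩ := e.surjective i
          exact ⟨t, hp ▸ hWmem t j⟩
        · intro t
          rw [hWdef]
          rw [Finset.card_image_of_injective _ (fun j j' h => by
            have : (t, j) = (t, j') := e.injective h
            exact congrArg Prod.snd this)]
          simp [hm]
      set σ : ∀ t : Fin d, Fin m ≃ {x : Fin n // x ∈ W t} := fun t =>
        Equiv.ofBijective (fun j => ⟨e (t, j), hWmem t j⟩)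
          ⟨fun j j' h => by
            have h2 : e (t, j) = e (t, j') := congrArg Subtype.val h
            have : (t, j) = (t, j') := e.injective h2
            exact congrArg Prod.snd this,
           fun ⟨i, hi⟩ => by
            rcases Finset.mem_image.1 hi with ⟨j, _, hj⟩
            exact ⟨j, Subtype.ext hj⟩⟩ with hσdef
      refine ⟨⟨⟨W, hW⟩, σ⟩, ?_⟩
      apply Equiv.ext
      rintro ⟨t, j⟩
      rfl
  have hcard := Nat.card_eq_of_bijective g hgbij
  rw [Nat.card_eq_fintype_card, Nat.card_eq_fintype_card] at hcard
  rw [Fintype.card_equiv ((Fintype.equivOfCardEq (by simp [hdm]) : Fin d × Fin m ≃ Fin n))]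
    at hcard
  rw [Fintype.card_sigma] at hcard
  have hconst : ∀ W : {W : Fin d → Finset (Fin n) // QPart n d W},
      Fintype.card (∀ t : Fin d, Fin m ≃ {x : Fin n // x ∈ W.1 t}) = (m !) ^ d := by
    intro W
    rw [Fintype.card_pi]
    have : ∀ t : Fin d, Fintype.card (Fin m ≃ {x : Fin n // x ∈ W.1 t}) = m ! := by
      intro t
      rw [Fintype.card_equiv (Fintype.equivOfCardEq (by
        rw [Fintype.card_fin, Fintype.card_coe, W.2.2.2 t]))]
      simp
    rw [Finset.prod_congr rfl fun t _ => this t]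
    simp
  rw [Finset.sum_congr rfl fun W _ => hconst W, Finset.sum_const, smul_eq_mul] at hcard
  simp only [Fintype.card_prod, Fintype.card_fin, hdm] at hcard
  rw [Nat.card_eq_fintype_card]
  simpa using hcard

/-- The number of sequences of blocks that are simultaneously block-sequential
and block-parallel, i.e. `|BS_n ∩ φ(BP_n)|`, equals `Σ_{d ∣ n} n! / ((n/d)!)^d`. -/
theorem card_bs_inter_phi_bp (n : ℕ) (hn : 1 ≤ n) :
    {Ws : List (Finset (Fin n)) |
        IsBS n Ws ∧ ∃ μ : Finset (List (Fin n)), IsBP n μ ∧ phiBP μ = Ws}.ncard =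
      ∑ d ∈ n.divisors, n ! / ((n / d)!) ^ d := by
  classical
  set S : Set (List (Finset (Fin n))) := {Ws : List (Finset (Fin n)) |
        IsBS n Ws ∧ ∃ μ : Finset (List (Fin n)), IsBP n μ ∧ phiBP μ = Ws} with hS
  -- global bijection
  set h : (Σ d : {d // d ∈ n.divisors},
      {W : Fin (d : ℕ) → Finset (Fin n) // QPart n d W}) → S := by
    rintro ⟨⟨d, hd⟩, ⟨W, hW⟩⟩
    refine ⟨List.ofFn W, ?_, ?_⟩
    all_goals {
      have hdvd : d ∣ n := (Nat.mem_divisors.1 hd).1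
      have hdpos : 0 < d := Nat.pos_of_mem_divisors hd
      have hmpos : 0 < n / d := Nat.div_pos (Nat.le_of_dvd hn hdvd) hdpos
      have hBS : IsBS n (List.ofFn W) := by
        refine ⟨?_, ?_, ?_⟩
        · intro V hV
          rcases (List.mem_ofFn).1 hV with ⟨t, rfl⟩
          exact Finset.card_pos.1 (by rw [hW.2.2 t]; exact hmpos)
        · rw [List.pairwise_iff_get]
          intro i j hij
          rw [List.get_ofFn, List.get_ofFn]
          exact hW.1 _ _ (by
            intro hc
            have : (i : ℕ) = (j : ℕ) := by
              have := congrArg (fun x : Fin d => (x : ℕ)) hc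
              simpa using this
            omega)
        · intro i
          rcases hW.2.1 i with ⟨t, ht⟩
          exact ⟨W t, (List.mem_ofFn).2 ⟨t, rfl⟩, ht⟩
      have hlen : (List.ofFn W).length = d := List.length_ofFn
      have hdvd' : (List.ofFn W).length ∣ n := by rw [hlen]; exact hdvd
      have hc : ∀ V ∈ List.ofFn W, V.card = n / (List.ofFn W).length := by
        intro V hV
        rcases (List.mem_ofFn).1 hV with ⟨t, rfl⟩
        rw [hlen]
        exact hW.2.2 t
      first
      | exact hBS
      | exact exists_bp hn (List.ofFn W) hBS hdvd' hc }
  have hhbij : Function.Bijective h := by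
    constructor
    · rintro ⟨⟨d, hd⟩, ⟨W, hW⟩⟩ ⟨⟨d', hd'⟩, ⟨W', hW'⟩⟩ hval
      have heq : List.ofFn W = List.ofFn W' := congrArg Subtype.val hval
      have hdd : d = d' := by
        have := congrArg List.length heq
        simpa using this
      subst hdd
      have hWW : W = W' := List.ofFn_injective heq
      subst hWW
      rfl
    · rintro ⟨Ws, hWs⟩
      obtain ⟨hBS, μ, hBP, hφ⟩ := hWs
      obtain ⟨hdvd, hc⟩ := phi_equal_cards hn hBS hBP hφ
      have hd : Ws.length ∈ n.divisors := Nat.mem_divisors.2 ⟨hdvd, by omega⟩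
      set W : Fin Ws.length → Finset (Fin n) := fun t => Ws[(t : ℕ)] with hWdef
      have hQ : QPart n Ws.length W := by
        refine ⟨?_, ?_, ?_⟩
        · intro t t' htt
          have hp := List.pairwise_iff_get.1 hBS.2.1
          rcases lt_or_gt_of_ne htt with hlt | hlt
          · exact hp t t' hlt
          · exact (hp t' t hlt).symm
        · intro i
          rcases hBS.2.2 i with ⟨V, hV, hiV⟩
          rcases List.mem_iff_getElem.1 hV with ⟨t, ht, rfl⟩
          exact ⟨⟨t, ht⟩, hiV⟩
        · intro t
          exact hc _ (List.getElem_mem _)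
      refine ⟨⟨⟨Ws.length, hd⟩, ⟨W, hQ⟩⟩, ?_⟩
      apply Subtype.ext
      show List.ofFn W = Ws
      exact List.ofFn_get Ws
  have hcard : S.ncard = ∑ d ∈ n.divisors,
      Nat.card {W : Fin d → Finset (Fin n) // QPart n d W} := by
    rw [← Nat.card_coe_set_eq, ← Nat.card_eq_of_bijective h hhbij]
    letI : ∀ d : {d // d ∈ n.divisors},
        Fintype {W : Fin (d : ℕ) → Finset (Fin n) // QPart n d W} :=
      fun d => Fintype.ofFinite _
    rw [Nat.card_eq_fintype_card, Fintype.card_sigma]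
    rw [← Finset.sum_coe_sort n.divisors
      (fun d => Nat.card {W : Fin d → Finset (Fin n) // QPart n d W})]
    exact Finset.sum_congr rfl fun d _ => (Nat.card_eq_fintype_card).symm
  rw [hcard]
  refine Finset.sum_congr rfl fun d hd => ?_
  have hdvd : d ∣ n := (Nat.mem_divisors.1 hd).1
  have hpos : 0 < ((n / d)!) ^ d := Nat.pow_pos (Nat.factorial_pos _)
  exact (Nat.div_eq_of_eq_mul_left hpos (count_QPart n d hdvd).symm).symm
end

section
/- For every n ≥ 1, the number of block-parallel update schedules of size n (equivalently, the number of sets of nonempty lists whose underlying elements partition an n-element set, with each element occurring exactly once) is |BP_n| = Σ_{λ ⊢ n} n! / ∏_{j=1}^{d(λ)} m_λ(j)!, where the sum ranges over all integer partitions λ of n. -/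
open Finset Nat

namespace BPaux

set_option linter.unusedSectionVars false

variable {β : Type*} [DecidableEq β]

/-- chop a list into pieces of given sizes -/
def chop : List ℕ → List β → List (List β)
  | [], _ => []
  | k :: ks, l => l.take k :: chop ks (l.drop k)

@[simp] lemma chop_nil (l : List β) : chop [] l = [] := rfl
@[simp] lemma chop_cons (k : ℕ) (ks : List ℕ) (l : List β) :
    chop (k :: ks) l = l.take k :: chop ks (l.drop k) := rfl

lemma flatten_chop (ps : List ℕ) (l : List β) :
    (chop ps l).flatten = l.take ps.sum := by
  induction ps generalizing l with
  | nil => simp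
  | cons k ks ih => simp [ih, List.take_add, List.sum_cons]

lemma map_length_chop (ps : List ℕ) (l : List β) (h : ps.sum ≤ l.length) :
    (chop ps l).map List.length = ps := by
  induction ps generalizing l with
  | nil => simp
  | cons k ks ih =>
    rw [List.sum_cons] at h
    have hk : k ≤ l.length := by omega
    have h2 : ks.sum ≤ (l.drop k).length := by
      rw [List.length_drop]; omega
    simp [ih _ h2, List.length_take, Nat.min_eq_left hk]

lemma subset_of_mem_chop {ps : List ℕ} {l : List β} {b : List β}
    (hb : b ∈ chop ps l) : b ⊆ l := by
  induction ps generalizing l with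
  | nil => simp at hb
  | cons k ks ih =>
    rw [chop_cons, List.mem_cons] at hb
    rcases hb with rfl | hmem
    · exact List.take_subset _ _
    · exact List.Subset.trans (ih hmem) (List.drop_subset _ _)

lemma ne_nil_of_mem_chop {ps : List ℕ} {l : List β} {b : List β}
    (hps : ∀ k ∈ ps, 1 ≤ k) (h : ps.sum ≤ l.length) (hb : b ∈ chop ps l) :
    b ≠ [] := by
  induction ps generalizing l with
  | nil => simp at hb
  | cons k ks ih =>
    have hk : 1 ≤ k := hps k (by simp)
    rw [List.sum_cons] at h
    rw [chop_cons, List.mem_cons] at hb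
    rcases hb with rfl | hmem
    · intro hnil
      have : (l.take k).length = k := by
        rw [List.length_take]; omega
      rw [hnil] at this
      simp at this; omega
    · exact ih (fun j hj => hps j (by simp [hj]))
        (by rw [List.length_drop]; omega) hmem

lemma chop_pairwise_disjoint {l : List β} (hnd : l.Nodup) (ps : List ℕ) :
    (chop ps l).Pairwise List.Disjoint := by
  induction ps generalizing l with
  | nil => simp
  | cons k ks ih =>
    rw [chop_cons, List.pairwise_cons]
    constructor
    · intro b hb
      have hsub : b ⊆ l.drop k := subset_of_mem_chop hb
      have : l.Nodup := hnd
      rw [← List.take_append_drop k l, List.nodup_append] at this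
      exact List.disjoint_of_subset_right hsub (by intro a ha hb; exact this.2.2 a ha a hb rfl)
    · exact ih (hnd.sublist (List.drop_sublist _ _))

lemma chop_nodup {l : List β} (hnd : l.Nodup) {ps : List ℕ}
    (hps : ∀ k ∈ ps, 1 ≤ k) (h : ps.sum ≤ l.length) :
    (chop ps l).Nodup := by
  refine (chop_pairwise_disjoint hnd ps).imp_of_mem ?_
  intro a b ha _ hd
  intro hab
  subst hab
  rcases List.exists_mem_of_ne_nil a (ne_nil_of_mem_chop hps h ha) with ⟨x, hx⟩
  exact hd hx hx

lemma chop_flatten_of_map_length {bs : List (List β)} {ps : List ℕ}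
    (h : bs.map List.length = ps) : chop ps bs.flatten = bs := by
  induction bs generalizing ps with
  | nil => subst h; simp
  | cons b bs ih =>
    subst h
    simp only [List.map_cons, List.flatten_cons, chop_cons]
    rw [List.take_left, List.drop_left]
    exact congrArg _ (ih rfl)



lemma count_perm_profile (n : ℕ) (w : β → ℕ) :
    ∀ (ps : List ℕ) (v : List β), v.Nodup → (∀ k ∈ ps, k ∈ Finset.Icc 1 n) →
    (v.map w).Perm ps →
    ((v.permutations.toFinset).filter (fun bs => bs.map w = ps)).card
      = ∏ j ∈ Finset.Icc 1 n, (ps.count j)! := by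
  intro ps
  induction ps with
  | nil =>
    intro v hnd _ hperm
    have hv : v = [] := by
      have := hperm.length_eq; simp at this; exact this
    subst hv
    simp [List.permutations, Finset.filter_singleton]
  | cons k ps' ih =>
    intro v hnd hicc hperm
    have hset : (v.permutations.toFinset.filter (fun bs => bs.map w = k :: ps'))
        = (v.toFinset.filter (fun b => w b = k)).biUnion
            (fun b => ((v.erase b).permutations.toFinset.filter
              (fun bs => bs.map w = ps')).image (b :: ·)) := by
      ext bs
      simp only [Finset.mem_filter, Finset.mem_biUnion, List.mem_toFinset,
        List.mem_permutations, Finset.mem_image]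
      constructor
      · rintro ⟨hp, hmap⟩
        cases bs with
        | nil => simp at hmap
        | cons b bs' =>
          simp only [List.map_cons, List.cons.injEq] at hmap
          have hb : b ∈ v := hp.subset List.mem_cons_self
          have hbs' : List.Perm bs' (v.erase b) := (List.cons_perm_iff_perm_erase.mp hp).2
          exact ⟨b, ⟨hb, hmap.1⟩, bs', ⟨hbs', hmap.2⟩, rfl⟩
      · rintro ⟨b, ⟨hb, hwb⟩, bs', ⟨hp', hm'⟩, rfl⟩
        exact ⟨List.cons_perm_iff_perm_erase.mpr ⟨hb, hp'⟩, by simp [hm', hwb]⟩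
    rw [hset, Finset.card_biUnion (by
      intro b₁ _ b₂ _ hne
      rw [Function.onFun, Finset.disjoint_left]
      rintro x hx₁ hx₂
      simp only [Finset.mem_image] at hx₁ hx₂
      rcases hx₁ with ⟨y₁, _, rfl⟩
      rcases hx₂ with ⟨y₂, _, h₂⟩
      exact hne ((List.cons_eq_cons.mp h₂).1.symm))]
    have hterm : ∀ b ∈ v.toFinset.filter (fun b => w b = k),
        (((v.erase b).permutations.toFinset.filter
          (fun bs => bs.map w = ps')).image (b :: ·)).card
        = ∏ j ∈ Finset.Icc 1 n, (ps'.count j)! := by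
      intro b hb
      rw [Finset.mem_filter, List.mem_toFinset] at hb
      rw [Finset.card_image_of_injective _ (List.cons_injective)]
      apply ih
      · exact hnd.erase b
      · exact fun j hj => hicc j (by simp [hj])
      · have h1 : v.Perm (b :: v.erase b) := List.perm_cons_erase hb.1
        have h2 : (v.map w).Perm (w b :: (v.erase b).map w) := by
          simpa using h1.map w
        have h3 : (w b :: (v.erase b).map w).Perm (k :: ps') := h2.symm.trans hperm
        rw [hb.2] at h3
        exact h3.cons_inv
    rw [Finset.sum_congr rfl hterm, Finset.sum_const, smul_eq_mul]
    have hcard : (v.toFinset.filter (fun b => w b = k)).card = (k :: ps').count k := by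
      have h1 : (v.toFinset.filter (fun b => w b = k))
          = (v.filter (fun b => w b = k)).toFinset := by
        rw [List.toFinset_filter]
        apply Finset.filter_congr
        intro x _
        simp
      rw [h1, List.toFinset_card_of_nodup (hnd.filter _), ← List.countP_eq_length_filter]
      have h2 : v.countP (fun b => decide (w b = k)) = (v.map w).count k := by
        rw [List.count_eq_countP, List.countP_map]
        apply List.countP_congr
        intro x _
        rw [Bool.eq_iff_iff]
        simp
      rw [h2, hperm.count_eq]
    rw [hcard]
    have hk : k ∈ Finset.Icc 1 n := hicc k (by simp)
    rw [← Finset.mul_prod_erase _ _ hk,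
      ← Finset.mul_prod_erase _ (fun j => (List.count j (k :: ps'))!) hk]
    have hckk : (k :: ps').count k = ps'.count k + 1 := by
      simp [List.count_cons]
    have hothers : ∀ j ∈ (Finset.Icc 1 n).erase k, ((k :: ps').count j)! = (ps'.count j)! := by
      intro j hj
      rw [List.count_cons_of_ne (Finset.mem_erase.mp hj).1.symm]
    rw [Finset.prod_congr rfl hothers, hckk, Nat.factorial_succ]
    ring

lemma toFinset_val_of_nodup {γ : Type*} [DecidableEq γ] {l : List γ} (h : l.Nodup) :
    l.toFinset.val = ↑l := by
  rw [List.toFinset_val]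
  exact congrArg _ (List.dedup_eq_self.mpr h)

lemma exists_list_of_map_eq {γ : Type*} [DecidableEq γ] (w : γ → ℕ) :
    ∀ (ps : List ℕ) (M : Multiset γ), M.map w = ↑ps →
      ∃ bs : List γ, (↑bs : Multiset γ) = M ∧ bs.map w = ps := by
  intro ps
  induction ps with
  | nil =>
    intro M h
    refine ⟨[], ?_, rfl⟩
    have : M = 0 := (Multiset.map_eq_zero (f := w)).mp (by simpa using h)
    simp [this]
  | cons k ks ih =>
    intro M h
    have hk : k ∈ M.map w := by rw [h]; simp
    rcases Multiset.mem_map.mp hk with ⟨b, hbM, hwb⟩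
    have hM : b ::ₘ M.erase b = M := Multiset.cons_erase hbM
    have h' : (M.erase b).map w = ↑ks := by
      have h2 : (b ::ₘ M.erase b).map w = k ::ₘ (↑ks : Multiset ℕ) := by
        rw [hM, h, ← Multiset.cons_coe]
      rw [Multiset.map_cons, hwb] at h2
      exact (Multiset.cons_inj_right k).mp h2
    rcases ih _ h' with ⟨bs, hbs, hmap⟩
    refine ⟨b :: bs, ?_, by simp [hmap, hwb]⟩
    rw [← Multiset.cons_coe, hbs, hM]

section main

variable {n : ℕ}

lemma sum_count_univ (l : List (Fin n)) : ∑ i, l.count i = l.length := by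
  have h := Multiset.sum_count_eq_card (s := Finset.univ) (m := (↑l : Multiset (Fin n))) (fun a _ => Finset.mem_univ a)
  simpa using h

def fullLists (n : ℕ) : Finset (List (Fin n)) := (List.finRange n).permutations.toFinset

lemma mem_fullLists {l : List (Fin n)} : l ∈ fullLists n ↔ ∀ i, l.count i = 1 := by
  rw [fullLists, List.mem_toFinset, List.mem_permutations]
  constructor
  · intro h i
    rw [h.count_eq]
    exact List.count_eq_one_of_mem (List.nodup_finRange n) (List.mem_finRange i)
  · intro h
    rw [List.perm_iff_count]
    intro a
    rw [h a, List.count_eq_one_of_mem (List.nodup_finRange n) (List.mem_finRange a)]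

lemma card_fullLists : (fullLists n).card = n ! := by
  rw [fullLists,
    List.toFinset_card_of_nodup (List.nodup_permutations _ (List.nodup_finRange n)),
    List.length_permutations, List.length_finRange]

lemma length_of_mem_fullLists {l : List (Fin n)} (h : l ∈ fullLists n) : l.length = n := by
  rw [← sum_count_univ, Finset.sum_congr rfl fun i _ => mem_fullLists.mp h i]
  simp

lemma nodup_of_mem_fullLists {l : List (Fin n)} (h : l ∈ fullLists n) : l.Nodup :=
  List.nodup_iff_count_le_one.mpr fun a => le_of_eq (mem_fullLists.mp h a)

def sortedParts (P : n.Partition) : List ℕ := P.parts.sort (· ≤ ·)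

lemma coe_sortedParts (P : n.Partition) : (↑(sortedParts P) : Multiset ℕ) = P.parts :=
  Multiset.sort_eq _ _

lemma sum_sortedParts (P : n.Partition) : (sortedParts P).sum = n := by
  have h := congrArg Multiset.sum (coe_sortedParts P)
  rw [Multiset.sum_coe, P.parts_sum] at h
  exact h

lemma mem_sortedParts_icc (P : n.Partition) : ∀ k ∈ sortedParts P, k ∈ Finset.Icc 1 n := by
  intro k hk
  have hk' : k ∈ P.parts := by
    rw [← coe_sortedParts P]; exact_mod_cast hk
  refine Finset.mem_Icc.mpr ⟨P.parts_pos hk', ?_⟩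
  have := Multiset.single_le_sum (fun x _ => Nat.zero_le x) k hk'
  rwa [P.parts_sum] at this

lemma count_sortedParts (P : n.Partition) (j : ℕ) :
    (sortedParts P).count j = P.parts.count j := by
  rw [← coe_sortedParts P, Multiset.coe_count]

lemma one_le_sortedParts (P : n.Partition) : ∀ k ∈ sortedParts P, 1 ≤ k :=
  fun k hk => (Finset.mem_Icc.mp (mem_sortedParts_icc P k hk)).1

def psiBP (P : n.Partition) (l : List (Fin n)) : Finset (List (Fin n)) :=
  (chop (sortedParts P) l).toFinset

section perL
variable {P : n.Partition} {l : List (Fin n)} (hl : l ∈ fullLists n)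
include hl

lemma sum_le_len : (sortedParts P).sum ≤ l.length := by
  rw [sum_sortedParts, length_of_mem_fullLists hl]

lemma chop_nodup_full : (chop (sortedParts P) l).Nodup :=
  chop_nodup (nodup_of_mem_fullLists hl) (one_le_sortedParts P) (sum_le_len hl)

lemma psiBP_val : (psiBP P l).val = ↑(chop (sortedParts P) l) :=
  toFinset_val_of_nodup (chop_nodup_full hl)

lemma map_length_psiBP : (psiBP P l).val.map List.length = P.parts := by
  rw [psiBP_val hl, Multiset.map_coe, map_length_chop _ _ (sum_le_len hl), coe_sortedParts]

lemma isBP_psiBP : IsBP n (psiBP P l) := by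
  constructor
  · intro S hS
    rw [psiBP, List.mem_toFinset] at hS
    exact ne_nil_of_mem_chop (one_le_sortedParts P) (sum_le_len hl) hS
  · intro i
    rw [Finset.sum_eq_multiset_sum, psiBP_val hl, Multiset.map_coe, Multiset.sum_coe,
      ← List.count_flatten, flatten_chop, sum_sortedParts,
      List.take_of_length_le (le_of_eq (length_of_mem_fullLists hl))]
    exact mem_fullLists.mp hl i

end perL

lemma exists_rep {μ : Finset (List (Fin n))} (hμ : IsBP n μ) :
    ∃ P : n.Partition, ∃ l ∈ fullLists n, psiBP P l = μ := by
  have hsum : (μ.val.map List.length).sum = n := by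
    have h1 : ∀ S ∈ μ, S.length = ∑ i, S.count i := fun S _ => (sum_count_univ S).symm
    have h2 : ∑ S ∈ μ, S.length = ∑ S ∈ μ, ∑ i, S.count i := Finset.sum_congr rfl h1
    rw [Finset.sum_comm] at h2
    have h3 : ∑ i : Fin n, ∑ S ∈ μ, S.count i = ∑ i : Fin n, 1 :=
      Finset.sum_congr rfl fun i _ => hμ.2 i
    rw [h3] at h2
    rw [← Finset.sum_eq_multiset_sum, h2]
    simp
  have hpos : ∀ {i : ℕ}, i ∈ μ.val.map List.length → 0 < i := by
    intro i hi
    rcases Multiset.mem_map.mp hi with ⟨S, hS, rfl⟩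
    exact List.length_pos_iff.mpr (hμ.1 S hS)
  set P : n.Partition := ⟨μ.val.map List.length, hpos, hsum⟩ with hP
  have hcoe : μ.val.map List.length = ↑(sortedParts P) := (coe_sortedParts P).symm
  rcases exists_list_of_map_eq List.length (sortedParts P) μ.val hcoe with ⟨bs, hbs, hmap⟩
  refine ⟨P, bs.flatten, ?_, ?_⟩
  · rw [mem_fullLists]
    intro i
    rw [List.count_flatten]
    have : ((↑bs : Multiset (List (Fin n))).map (List.count i)).sum
        = (μ.val.map fun S => S.count i).sum := by rw [hbs]
    rw [Multiset.map_coe, Multiset.sum_coe] at this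
    rw [this, ← Finset.sum_eq_multiset_sum]
    exact hμ.2 i
  · rw [psiBP, chop_flatten_of_map_length hmap]
    have hnd : bs.Nodup := by
      rw [← Multiset.coe_nodup, hbs]; exact μ.nodup
    apply Finset.val_inj.mp
    rw [toFinset_val_of_nodup hnd, hbs]

lemma fiber_card (P : n.Partition) (μ : Finset (List (Fin n)))
    (hμmem : μ ∈ (fullLists n).image (psiBP P)) :
    ((fullLists n).filter (fun l => psiBP P l = μ)).card
      = ∏ j ∈ Finset.Icc 1 n, (P.parts.count j)! := by
  obtain ⟨l₀, hl₀, hl₀eq⟩ := Finset.mem_image.mp hμmem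
  have hprofile : μ.val.map List.length = P.parts := by
    rw [← hl₀eq]; exact map_length_psiBP hl₀
  have hμBP : IsBP n μ := hl₀eq ▸ isBP_psiBP hl₀
  have hperm : (μ.toList.map List.length).Perm (sortedParts P) := by
    rw [← Multiset.coe_eq_coe, ← Multiset.map_coe, Finset.coe_toList, hprofile,
      coe_sortedParts]
  have hkey := count_perm_profile n List.length (sortedParts P) μ.toList
    μ.nodup_toList (mem_sortedParts_icc P) hperm
  have hcount : ∀ j, (sortedParts P).count j = P.parts.count j := count_sortedParts P
  rw [Finset.prod_congr rfl fun j _ => by rw [← hcount j]]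
  rw [← hkey]
  apply Finset.card_bij (fun l _ => chop (sortedParts P) l)
  · intro l hlmem
    rw [Finset.mem_filter] at hlmem
    obtain ⟨hl, hψ⟩ := hlmem
    rw [Finset.mem_filter, List.mem_toFinset, List.mem_permutations]
    constructor
    · rw [← Multiset.coe_eq_coe, Finset.coe_toList, ← hψ, psiBP_val hl]
    · exact map_length_chop _ _ (sum_le_len hl)
  · intro l₁ h₁ l₂ h₂ heq
    rw [Finset.mem_filter] at h₁ h₂
    have e₁ : (chop (sortedParts P) l₁).flatten = l₁ := by
      rw [flatten_chop, sum_sortedParts,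
        List.take_of_length_le (le_of_eq (length_of_mem_fullLists h₁.1))]
    have e₂ : (chop (sortedParts P) l₂).flatten = l₂ := by
      rw [flatten_chop, sum_sortedParts,
        List.take_of_length_le (le_of_eq (length_of_mem_fullLists h₂.1))]
    rw [← e₁, ← e₂, heq]
  · intro bs hbs
    rw [Finset.mem_filter, List.mem_toFinset, List.mem_permutations] at hbs
    obtain ⟨hbperm, hbmap⟩ := hbs
    have hchop : chop (sortedParts P) bs.flatten = bs :=
      chop_flatten_of_map_length hbmap
    have hfl : bs.flatten ∈ fullLists n := by
      rw [mem_fullLists]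
      intro i
      rw [List.count_flatten, (hbperm.map (List.count i)).sum_eq]
      have : ((μ.val.map fun S => S.count i)).sum = 1 := by
        rw [← Finset.sum_eq_multiset_sum]; exact hμBP.2 i
      rw [← this, ← Multiset.sum_coe, ← Multiset.map_coe, Finset.coe_toList]
    refine ⟨bs.flatten, ?_, hchop⟩
    rw [Finset.mem_filter]
    refine ⟨hfl, ?_⟩
    rw [psiBP, hchop, List.toFinset_eq_of_perm _ _ hbperm, Finset.toList_toFinset]

end main

end BPaux

open BPaux

/-- The number of block-parallel update schedules of size `n` is
`Σ_{λ ⊢ n} n! / ∏_j m_λ(j)!` (the product over part sizes `j`; factors with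
`m_λ(j) = 0` contribute `0! = 1`, so we may take the product over `1 ≤ j ≤ n`). -/
theorem card_bp (n : ℕ) (hn : 1 ≤ n) :
    {μ : Finset (List (Fin n)) | IsBP n μ}.ncard =
      ∑ P : Nat.Partition n, n ! / ∏ j ∈ Finset.Icc 1 n, (P.parts.count j)! := by
  classical
  have hset : {μ : Finset (List (Fin n)) | IsBP n μ}
      = ↑(Finset.univ.biUnion fun P : n.Partition => (fullLists n).image (psiBP P)) := by
    ext μ
    simp only [Set.mem_setOf_eq, Finset.coe_biUnion, Set.mem_iUnion, Finset.mem_coe,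
      Finset.mem_image, Finset.mem_univ, exists_prop, true_and]
    constructor
    · intro h
      rcases exists_rep h with ⟨P, l, hl, hψ⟩
      exact ⟨P, l, hl, hψ⟩
    · rintro ⟨P, l, hl, rfl⟩
      exact isBP_psiBP hl
  rw [hset, Set.ncard_coe_finset]
  rw [Finset.card_biUnion (by
    intro P _ Q _ hne
    rw [Function.onFun, Finset.disjoint_left]
    intro μ hμP hμQ
    apply hne
    ext1
    obtain ⟨l₁, hl₁, h₁⟩ := Finset.mem_image.mp hμP
    obtain ⟨l₂, hl₂, h₂⟩ := Finset.mem_image.mp hμQ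
    rw [show P.parts = μ.val.map List.length from by rw [← h₁]; exact (map_length_psiBP hl₁).symm,
      show Q.parts = μ.val.map List.length from by rw [← h₂]; exact (map_length_psiBP hl₂).symm])]
  apply Finset.sum_congr rfl
  intro P _
  have hfib : (fullLists n).card
      = ∑ μ ∈ (fullLists n).image (psiBP P),
          ((fullLists n).filter fun l => psiBP P l = μ).card :=
    Finset.card_eq_sum_card_fiberwise fun x hx => Finset.mem_image_of_mem _ hx
  rw [card_fullLists, Finset.sum_congr rfl (fun μ hμ => fiber_card P μ hμ),
    Finset.sum_const, smul_eq_mul] at hfib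
  have hpos : 0 < ∏ j ∈ Finset.Icc 1 n, (P.parts.count j)! :=
    Finset.prod_pos fun j _ => Nat.factorial_pos _
  exact (Nat.div_eq_of_eq_mul_left hpos hfib).symm
end

section
/- For every n ≥ 1, the number of equivalence classes of block-parallel update schedules of size n under the relation ≡_0 (where μ ≡_0 μ' iff φ(μ) = φ(μ')) is |BP_n / ≡_0| = Σ_{λ ⊢ n} n! / ∏_{j=1}^{d(λ)} (m_λ(j)!)^j, the sum ranging over all integer partitions λ of n. -/
open Finset Nat

section BPAux

variable {n : ℕ}

/-- The fiber of `g` at `b`. -/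
def fibG (g : Fin n → ℕ × ℕ) (b : ℕ × ℕ) : Finset (Fin n) :=
  Finset.univ.filter (fun i => g i = b)

/-- `g` is a valid position map. -/
def ValidG (g : Fin n → ℕ × ℕ) : Prop :=
  (∀ i, (g i).2 < (g i).1) ∧
    ∀ j p, p < j → (fibG g (j, p)).card = (fibG g (j, 0)).card

/-- abstract length -/
def glen (g : Fin n → ℕ × ℕ) : ℕ := Finset.univ.lcm (fun i => (g i).1)

/-- abstract φ -/
def phiG (g : Fin n → ℕ × ℕ) : List (Finset (Fin n)) :=
  (List.range (glen g)).map
    (fun t => Finset.univ.filter (fun i => t % (g i).1 = (g i).2))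

/-- `g` records, for each vertex, the length of its o-block and its position in it. -/
def PosMap (μ : Finset (List (Fin n))) (g : Fin n → ℕ × ℕ) : Prop :=
  ∀ i, ∃ S ∈ μ, i ∈ S ∧ (g i).1 = S.length ∧ (g i).2 = S.idxOf i

variable {μ : Finset (List (Fin n))} {g g' : Fin n → ℕ × ℕ}

lemma bp_count_eq_one (h : IsBP n μ) {S : List (Fin n)} (hS : S ∈ μ) {i : Fin n}
    (hi : i ∈ S) : S.count i = 1 := by
  have h1 := h.2 i
  have h2 : S.count i ≤ μ.sum (fun S => S.count i) :=
    Finset.single_le_sum (fun T _ => Nat.zero_le _) hS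
  have h3 : 0 < S.count i := List.count_pos_iff.mpr hi
  omega

lemma bp_nodup (h : IsBP n μ) {S : List (Fin n)} (hS : S ∈ μ) : S.Nodup := by
  rw [List.nodup_iff_count_le_one]
  intro a
  by_cases ha : a ∈ S
  · rw [bp_count_eq_one h hS ha]
  · rw [List.count_eq_zero_of_not_mem ha]; omega

lemma bp_uniq (h : IsBP n μ) {S S' : List (Fin n)} (hS : S ∈ μ) (hS' : S' ∈ μ)
    {i : Fin n} (hi : i ∈ S) (hi' : i ∈ S') : S = S' := by
  by_contra hne
  have h1 := h.2 i
  have h2 : ∑ T ∈ ({S, S'} : Finset (List (Fin n))), T.count i ≤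
      μ.sum (fun T => T.count i) := by
    apply Finset.sum_le_sum_of_subset
    intro T hT
    simp only [Finset.mem_insert, Finset.mem_singleton] at hT
    rcases hT with rfl | rfl <;> assumption
  rw [Finset.sum_pair hne, bp_count_eq_one h hS hi, bp_count_eq_one h hS' hi'] at h2
  omega

lemma bp_exists_mem (h : IsBP n μ) (i : Fin n) : ∃ S ∈ μ, i ∈ S := by
  have h1 := h.2 i
  obtain ⟨S, hS, hc⟩ := Finset.exists_ne_zero_of_sum_ne_zero (by omega :
    μ.sum (fun S => S.count i) ≠ 0)
  exact ⟨S, hS, List.count_pos_iff.mp (Nat.pos_of_ne_zero hc)⟩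

lemma posMap_exists (h : IsBP n μ) : ∃ g : Fin n → ℕ × ℕ, PosMap μ g := by
  choose S hS hmem using bp_exists_mem h
  exact ⟨fun i => ((S i).length, (S i).idxOf i),
    fun i => ⟨S i, hS i, hmem i, rfl, rfl⟩⟩

/-- Main lemma relating a BP schedule to its position map. -/
lemma phiBP_eq_phiG (h : IsBP n μ) (hg : PosMap μ g) :
    ValidG g ∧ phiBP μ = phiG g := by
  choose S hmem hin hlen hidx using hg
  -- μ is the image of S
  have himg : μ = Finset.univ.image S := by
    ext T
    simp only [Finset.mem_image, Finset.mem_univ, true_and]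
    constructor
    · intro hT
      obtain ⟨x, hx⟩ := List.exists_mem_of_ne_nil T (h.1 T hT)
      exact ⟨x, bp_uniq h (hmem x) hT (hin x) hx⟩
    · rintro ⟨i, rfl⟩; exact hmem i
  -- the block at each substep
  have hblock : ∀ t, blockAt μ t =
      Finset.univ.filter (fun i => t % (g i).1 = (g i).2) := by
    intro t
    ext x
    simp only [blockAt, Finset.mem_biUnion, Option.mem_toFinset, Option.mem_def,
      Finset.mem_filter, Finset.mem_univ, true_and]
    constructor
    · rintro ⟨T, hT, hTx⟩
      rw [List.getElem?_eq_some_iff] at hTx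
      obtain ⟨hlt, heq⟩ := hTx
      have hxT : x ∈ T := heq ▸ List.getElem_mem hlt
      have hTeq : T = S x := bp_uniq h hT (hmem x) hxT (hin x)
      subst hTeq
      have hidxlt : (S x).idxOf x < (S x).length :=
        List.idxOf_lt_length_iff.mpr hxT
      have h2 : (S x)[t % (S x).length] = (S x)[(S x).idxOf x] := by
        rw [heq, List.getElem_idxOf hidxlt]
      have h3 : t % (S x).length = (S x).idxOf x :=
        (List.Nodup.getElem_inj_iff (bp_nodup h (hmem x))).mp h2
      rw [hlen x, hidx x]
      exact h3
    · intro hx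
      refine ⟨S x, hmem x, ?_⟩
      have hidxlt : (S x).idxOf x < (S x).length :=
        List.idxOf_lt_length_iff.mpr (hin x)
      have h4 : t % (S x).length = (S x).idxOf x := by
        rw [← hlen x, ← hidx x]; exact hx
      rw [h4, List.getElem?_eq_getElem hidxlt, List.getElem_idxOf hidxlt]
  -- lengths
  have hlcm : bpLen μ = glen g := by
    rw [bpLen, himg, Finset.lcm_image, glen]
    apply Finset.lcm_congr rfl
    intro a _
    exact (hlen a).symm
  -- o-block position cards
  have hcard : ∀ j p, p < j →
      (fibG g (j, p)).card = (μ.filter (fun T => T.length = j)).card := by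
    intro j p hp
    refine Finset.card_bij (fun i _ => S i) ?_ ?_ ?_
    · intro i hi
      rw [fibG, Finset.mem_filter] at hi
      refine Finset.mem_filter.mpr ⟨hmem i, ?_⟩
      rw [← hlen i, hi.2]
    · intro a ha b hb hab
      have hab' : S a = S b := hab
      rw [fibG, Finset.mem_filter] at ha hb
      have hpa : (S a).idxOf a = p := by rw [← hidx a, ha.2]
      have hpb : (S b).idxOf b = p := by rw [← hidx b, hb.2]
      have hlta : (S a).idxOf a < (S a).length := List.idxOf_lt_length_iff.mpr (hin a)
      have hltb : (S b).idxOf b < (S b).length := List.idxOf_lt_length_iff.mpr (hin b)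
      have e1 : (S a).getD p a = a := by
        rw [← hpa, List.getD_eq_getElem _ _ hlta, List.getElem_idxOf hlta]
      have e2 : (S b).getD p a = b := by
        rw [← hpb, List.getD_eq_getElem _ _ hltb, List.getElem_idxOf hltb]
      rw [← e1, ← e2, hab']
    · intro T hT
      rw [Finset.mem_filter] at hT
      have hplen : p < T.length := by rw [hT.2]; exact hp
      refine ⟨T[p], ?_, ?_⟩
      · have hxT : T[p] ∈ T := List.getElem_mem hplen
        have hTeq : S T[p] = T := (bp_uniq h hT.1 (hmem T[p]) hxT (hin T[p])).symm
        rw [fibG, Finset.mem_filter]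
        refine ⟨Finset.mem_univ _, ?_⟩
        have h1 : (g T[p]).1 = j := by rw [hlen T[p], hTeq, hT.2]
        have h2 : (g T[p]).2 = p := by
          rw [hidx T[p], hTeq]
          exact List.Nodup.idxOf_getElem (bp_nodup h hT.1) p hplen
        exact Prod.ext h1 h2
      · have hxT : T[p] ∈ T := List.getElem_mem hplen
        exact (bp_uniq h hT.1 (hmem T[p]) hxT (hin T[p])).symm
  constructor
  · constructor
    · intro i
      rw [hlen i, hidx i]
      exact List.idxOf_lt_length_iff.mpr (hin i)
    · intro j p hp
      rw [hcard j p hp, hcard j 0 (Nat.lt_of_le_of_lt (Nat.zero_le p) hp)]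
  · rw [phiBP, phiG, hlcm]
    exact List.map_congr_left (fun t _ => hblock t)

/-- arithmetic: residue patterns determine modulus and residue. -/
lemma mod_pattern_unique {L j j' p p' : ℕ} (hL : 0 < L) (hj : j ∣ L) (hj' : j' ∣ L)
    (hp : p < j) (hp' : p' < j')
    (hiff : ∀ t, t < L → (t % j = p ↔ t % j' = p')) : j = j' ∧ p = p' := by
  have hjL : j ≤ L := Nat.le_of_dvd hL hj
  have hj'L : j' ≤ L := Nat.le_of_dvd hL hj'
  have h1 : p % j' = p' := (hiff p (lt_of_lt_of_le hp hjL)).1 (Nat.mod_eq_of_lt hp)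
  have h2 : p' % j = p := (hiff p' (lt_of_lt_of_le hp' hj'L)).2 (Nat.mod_eq_of_lt hp')
  have hle1 : p' ≤ p := h1 ▸ Nat.mod_le p j'
  have hle2 : p ≤ p' := h2 ▸ Nat.mod_le p' j
  have hpp : p = p' := le_antisymm hle2 hle1
  subst hpp
  refine ⟨?_, rfl⟩
  have key : ∀ a b : ℕ, a ∣ L → b ∣ L → p < a → p < b →
      (∀ t, t < L → (t % a = p → t % b = p)) → ¬a < b := by
    intro a b ha hb hpa hpb hif hab
    have h2a : 2 * a ≤ L := by
      obtain ⟨k, hk⟩ := ha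
      have hbL : b ≤ L := Nat.le_of_dvd hL hb
      have hk2 : 2 ≤ k := by
        rcases Nat.lt_or_ge k 2 with hk' | hk'
        · interval_cases k <;> omega
        · exact hk'
      calc 2 * a = a * 2 := by ring
        _ ≤ a * k := Nat.mul_le_mul_left a hk2
        _ = L := hk.symm
    have ht : p + a < L := by omega
    have hta : (p + a) % a = p := by
      rw [Nat.add_mod_right, Nat.mod_eq_of_lt hpa]
    have htb := hif _ ht hta
    by_cases hcase : p + a < b
    · rw [Nat.mod_eq_of_lt hcase] at htb; omega
    · push_neg at hcase
      have hlt : p + a - b < b := by omega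
      rw [Nat.mod_eq_sub_mod hcase, Nat.mod_eq_of_lt hlt] at htb
      omega
  by_contra hne
  rcases Nat.lt_or_ge j j' with hlt | hge
  · exact key j j' hj hj' hp hp' (fun t ht => (hiff t ht).1) hlt
  · exact key j' j hj' hj hp' hp (fun t ht => (hiff t ht).2)
      (lt_of_le_of_ne hge (Ne.symm hne))

lemma glen_pos (hv : ValidG g) (i : Fin n) : 0 < glen g := by
  rw [Nat.pos_iff_ne_zero]
  intro h0
  have := Finset.lcm_eq_zero_iff.mp h0
  obtain ⟨x, -, hx⟩ := this
  have hx' : (g x).1 = 0 := hx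
  have := hv.1 x
  omega

lemma phiG_injOn (hv : ValidG g) (hv' : ValidG g') (heq : phiG g = phiG g') :
    g = g' := by
  funext i
  have hL : 0 < glen g := glen_pos hv i
  have hlen : glen g = glen g' := by
    have := congrArg List.length heq
    simpa [phiG] using this
  have hblocks : ∀ t, t < glen g →
      (Finset.univ.filter (fun i => t % (g i).1 = (g i).2)) =
        (Finset.univ.filter (fun i => t % (g' i).1 = (g' i).2)) := by
    intro t ht
    have h1 : (phiG g)[t]? = (phiG g')[t]? := by rw [heq]
    rw [phiG, phiG, List.getElem?_map, List.getElem?_map,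
      List.getElem?_range ht, List.getElem?_range (hlen ▸ ht)] at h1
    simpa using h1
  have hiff : ∀ t, t < glen g → (t % (g i).1 = (g i).2 ↔ t % (g' i).1 = (g' i).2) := by
    intro t ht
    have := Finset.ext_iff.mp (hblocks t ht) i
    simpa using this
  have hdvd : (g i).1 ∣ glen g := Finset.dvd_lcm (Finset.mem_univ i)
  have hdvd' : (g' i).1 ∣ glen g := hlen ▸ Finset.dvd_lcm (Finset.mem_univ i)
  obtain ⟨h1, h2⟩ := mod_pattern_unique hL hdvd hdvd' (hv.1 i) (hv'.1 i) hiff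
  exact Prod.ext h1 h2

/-! ### Construction of a schedule from a valid position map -/

noncomputable def srtG (g : Fin n → ℕ × ℕ) (j q : ℕ) : List (Fin n) :=
  (fibG g (j, q)).sort (· ≤ ·)

noncomputable def rnkG (g : Fin n → ℕ × ℕ) (i : Fin n) : ℕ :=
  (srtG g (g i).1 (g i).2).idxOf i

noncomputable def blockOfG (g : Fin n → ℕ × ℕ) (i : Fin n) : List (Fin n) :=
  (List.range (g i).1).map (fun q => (srtG g (g i).1 q).getD (rnkG g i) i)

noncomputable def muOfG (g : Fin n → ℕ × ℕ) : Finset (List (Fin n)) :=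
  Finset.univ.image (blockOfG g)

lemma mem_fib_self (g : Fin n → ℕ × ℕ) (i : Fin n) :
    i ∈ fibG g ((g i).1, (g i).2) := by
  rw [fibG, Finset.mem_filter]
  exact ⟨Finset.mem_univ _, rfl⟩

lemma mem_srt_self (g : Fin n → ℕ × ℕ) (i : Fin n) :
    i ∈ srtG g (g i).1 (g i).2 := by
  rw [srtG, Finset.mem_sort]
  exact mem_fib_self g i

lemma length_srtG (hv : ValidG g) {j q : ℕ} (hq : q < j) :
    (srtG g j q).length = (fibG g (j, 0)).card := by
  rw [srtG, Finset.length_sort]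
  exact hv.2 j q hq

lemma rnkG_lt (hv : ValidG g) (i : Fin n) :
    rnkG g i < (fibG g ((g i).1, 0)).card := by
  have h1 : rnkG g i < (srtG g (g i).1 (g i).2).length :=
    List.idxOf_lt_length_iff.mpr (mem_srt_self g i)
  rwa [length_srtG hv (hv.1 i)] at h1

lemma entry_spec (hv : ValidG g) (i : Fin n) {q : ℕ} (hq : q < (g i).1) :
    g ((srtG g (g i).1 q).getD (rnkG g i) i) = ((g i).1, q) ∧
      blockOfG g ((srtG g (g i).1 q).getD (rnkG g i) i) = blockOfG g i := by
  have hk : rnkG g i < (srtG g (g i).1 q).length := by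
    rw [length_srtG hv hq]; exact rnkG_lt hv i
  have hee : (srtG g (g i).1 q).getD (rnkG g i) i = (srtG g (g i).1 q)[rnkG g i] :=
    List.getD_eq_getElem _ _ hk
  set e := (srtG g (g i).1 q).getD (rnkG g i) i with he
  have hmem : e ∈ fibG g ((g i).1, q) := by
    rw [hee, ← Finset.mem_sort (α := Fin n) (· ≤ ·)]
    exact List.getElem_mem hk
  have hge : g e = ((g i).1, q) := (Finset.mem_filter.mp hmem).2
  have hrnk : rnkG g e = rnkG g i := by
    rw [rnkG, hge]
    simp only
    rw [hee]
    exact List.Nodup.idxOf_getElem (Finset.sort_nodup _ _) _ hk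
  refine ⟨hge, ?_⟩
  rw [blockOfG, blockOfG, hge, hrnk]
  simp only
  refine List.ext_getElem (by simp) ?_
  intro t h1 h2
  simp only [List.getElem_map, List.getElem_range]
  have ht : t < (g i).1 := by simpa using h1
  have hkt : rnkG g i < (srtG g (g i).1 t).length := by
    rw [length_srtG hv ht]; exact rnkG_lt hv i
  rw [List.getD_eq_getElem _ _ hkt, List.getD_eq_getElem _ _ hkt]

lemma entry_self (hv : ValidG g) (i : Fin n) :
    (srtG g (g i).1 (g i).2).getD (rnkG g i) i = i := by
  have hk : rnkG g i < (srtG g (g i).1 (g i).2).length :=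
    List.idxOf_lt_length_iff.mpr (mem_srt_self g i)
  rw [List.getD_eq_getElem _ _ hk]
  exact List.getElem_idxOf hk

lemma length_blockOfG (g : Fin n → ℕ × ℕ) (i : Fin n) :
    (blockOfG g i).length = (g i).1 := by
  simp [blockOfG]

lemma mem_blockOfG (hv : ValidG g) {x i : Fin n} :
    x ∈ blockOfG g i ↔ blockOfG g x = blockOfG g i := by
  constructor
  · intro hx
    rw [blockOfG, List.mem_map] at hx
    obtain ⟨q, hq, hqx⟩ := hx
    rw [List.mem_range] at hq
    have := entry_spec hv i hq
    rw [hqx] at this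
    exact this.2
  · intro hx
    rw [← hx, blockOfG, List.mem_map]
    exact ⟨(g x).2, List.mem_range.mpr (hv.1 x), entry_self hv x⟩

lemma nodup_blockOfG (hv : ValidG g) (i : Fin n) : (blockOfG g i).Nodup := by
  rw [blockOfG]
  refine List.Nodup.map_on ?_ List.nodup_range
  intro q hq q' hq' hqq
  rw [List.mem_range] at hq hq'
  have h1 := (entry_spec hv i hq).1
  have h2 := (entry_spec hv i hq').1
  rw [hqq] at h1
  rw [h1] at h2
  exact (Prod.ext_iff.mp h2).2

lemma count_blockOfG (hv : ValidG g) (x i : Fin n) :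
    (blockOfG g i).count x = if blockOfG g x = blockOfG g i then 1 else 0 := by
  by_cases h : blockOfG g x = blockOfG g i
  · rw [if_pos h]
    exact List.count_eq_one_of_mem (nodup_blockOfG hv i) ((mem_blockOfG hv).mpr h)
  · rw [if_neg h]
    exact List.count_eq_zero_of_not_mem (fun hm => h ((mem_blockOfG hv).mp hm))

lemma isBP_muOfG (hv : ValidG g) : IsBP n (muOfG g) := by
  constructor
  · intro T hT
    rw [muOfG, Finset.mem_image] at hT
    obtain ⟨i, -, rfl⟩ := hT
    intro hnil
    have h1 := length_blockOfG g i
    rw [hnil] at h1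
    have h2 := hv.1 i
    simp only [List.length_nil] at h1
    omega
  · intro x
    have hcnt : ∀ T ∈ muOfG g, T.count x = if T = blockOfG g x then 1 else 0 := by
      intro T hT
      rw [muOfG, Finset.mem_image] at hT
      obtain ⟨i, -, rfl⟩ := hT
      rw [count_blockOfG hv x i]
      by_cases h : blockOfG g x = blockOfG g i
      · rw [if_pos h, if_pos h.symm]
      · rw [if_neg h, if_neg (fun h' => h h'.symm)]
    rw [Finset.sum_congr rfl hcnt, Finset.sum_ite_eq' (muOfG g) (blockOfG g x)
      (fun _ => 1), if_pos]
    rw [muOfG]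
    exact Finset.mem_image_of_mem _ (Finset.mem_univ x)

lemma posMap_muOfG (hv : ValidG g) : PosMap (muOfG g) g := by
  intro i
  refine ⟨blockOfG g i, Finset.mem_image_of_mem _ (Finset.mem_univ i),
    (mem_blockOfG hv).mpr rfl, (length_blockOfG g i).symm, ?_⟩
  have hp : (g i).2 < (blockOfG g i).length := by
    rw [length_blockOfG]; exact hv.1 i
  have h1 : (blockOfG g i)[(g i).2] = i := by
    simp only [blockOfG, List.getElem_map, List.getElem_range]
    exact entry_self hv i
  have h2 : (blockOfG g i).idxOf ((blockOfG g i)[(g i).2]) = (g i).2 :=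
    List.Nodup.idxOf_getElem (nodup_blockOfG hv i) _ hp
  rw [h1] at h2
  exact h2.symm

end BPAux


section Count
variable {α β : Type*} [Fintype α] [DecidableEq α] [DecidableEq β]

/-- Finset of functions `α → β` mapping `A` into `s`, junk outside `A`,
with prescribed fiber sizes `c` over `A`. -/
noncomputable def FSet (junk : β) (A : Finset α) (s : Finset β) (c : β → ℕ) :
    Finset (α → β) :=
  (Fintype.piFinset (fun i => if i ∈ A then s else ({junk} : Finset β))).filter
    (fun g => ∀ b ∈ s, (A.filter (fun i => g i = b)).card = c b)

lemma mem_FSet {junk : β} {A : Finset α} {s : Finset β} {c : β → ℕ} {g : α → β} :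
    g ∈ FSet junk A s c ↔
      (∀ i ∈ A, g i ∈ s) ∧ (∀ i ∉ A, g i = junk) ∧
        ∀ b ∈ s, (A.filter (fun i => g i = b)).card = c b := by
  simp only [FSet, mem_filter, Fintype.mem_piFinset]
  constructor
  · rintro ⟨h1, h2⟩
    refine ⟨fun i hi => by simpa [hi] using h1 i, fun i hi => by simpa [hi] using h1 i, h2⟩
  · rintro ⟨h1, h2, h3⟩
    refine ⟨fun i => ?_, h3⟩
    by_cases hi : i ∈ A <;> simp [hi, h1, h2]

lemma card_FSet (junk : β) (c : β → ℕ) :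
    ∀ (s : Finset β) (A : Finset α),
      (FSet junk A s c).card =
        if ∑ b ∈ s, c b = A.card then Nat.multinomial s c else 0 := by
  intro s
  induction s using Finset.induction_on with
  | empty =>
      intro A
      rcases A.eq_empty_or_nonempty with rfl | ⟨a, ha⟩
      · rw [if_pos (by simp)]
        simp only [Nat.multinomial_empty]
        rw [Finset.card_eq_one]
        refine ⟨fun _ => junk, ?_⟩
        ext g
        simp only [mem_FSet, mem_singleton]
        constructor
        · rintro ⟨-, h2, -⟩; funext i; exact h2 i (by simp)
        · rintro rfl; exact ⟨by simp, fun _ _ => rfl, by simp⟩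
      · have hA : 0 < A.card := Finset.card_pos.mpr ⟨a, ha⟩
        rw [if_neg (by simpa using hA.ne)]
        rw [Finset.card_eq_zero]
        ext g
        simp only [mem_FSet, Finset.notMem_empty, iff_false]
        rintro ⟨h1, -, -⟩
        exact absurd (h1 a ha) (by simp)
  | @insert b s hb ih =>
      intro A
      -- fiberwise over T = A.filter (g · = b)
      have hfib : (FSet junk A (insert b s) c).card =
          ∑ T ∈ A.powersetCard (c b),
            ((FSet junk A (insert b s) c).filter
              (fun g => A.filter (fun i => g i = b) = T)).card := by
        refine Finset.card_eq_sum_card_fiberwise (fun g hg => ?_)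
        rw [Finset.mem_coe, mem_FSet] at hg
        rw [Finset.mem_coe, Finset.mem_powersetCard]
        exact ⟨Finset.filter_subset _ _, hg.2.2 b (mem_insert_self _ _)⟩
      rw [hfib]
      -- each fiber is in bijection with FSet junk (A \ T) s c
      have hbij : ∀ T ∈ A.powersetCard (c b),
          ((FSet junk A (insert b s) c).filter
              (fun g => A.filter (fun i => g i = b) = T)).card =
            (FSet junk (A \ T) s c).card := by
        intro T hT
        rw [Finset.mem_powersetCard] at hT
        refine Finset.card_bij' (fun g _ => fun i => if i ∈ T then junk else g i)
          (fun g _ => fun i => if i ∈ T then b else g i) ?_ ?_ ?_ ?_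
        · -- maps into FSet (A\T) s c
          intro g hg
          rw [mem_filter, mem_FSet] at hg
          obtain ⟨⟨h1, h2, h3⟩, hfil⟩ := hg
          rw [mem_FSet]
          have hkey : ∀ b' ∈ s, (A \ T).filter (fun i => (if i ∈ T then junk else g i) = b')
              = A.filter (fun i => g i = b') := by
            intro b' hb'
            ext i
            simp only [mem_filter, mem_sdiff]
            constructor
            · rintro ⟨⟨hiA, hiT⟩, hval⟩
              simp only [if_neg hiT] at hval
              exact ⟨hiA, hval⟩
            · rintro ⟨hiA, hval⟩
              have hiT : i ∉ T := by
                intro hiT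
                have : g i = b := by have := hfil ▸ hiT; exact (mem_filter.mp this).2
                rw [this] at hval; exact hb (hval ▸ hb')
              exact ⟨⟨hiA, hiT⟩, by simp [hiT, hval]⟩
          refine ⟨?_, ?_, ?_⟩
          · intro i hi
            rw [mem_sdiff] at hi
            rw [if_neg hi.2]
            have := h1 i hi.1
            rw [mem_insert] at this
            rcases this with h | h
            · exfalso; apply hi.2; rw [← hfil, mem_filter]; exact ⟨hi.1, h⟩
            · exact h
          · intro i hi
            rw [mem_sdiff, not_and, not_not] at hi
            by_cases hiT : i ∈ T
            · simp [hiT]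
            · by_cases hiA : i ∈ A
              · exact absurd (hi hiA) hiT
              · simp [hiT, h2 i hiA]
          · intro b' hb'
            rw [hkey b' hb', h3 b' (mem_insert_of_mem hb')]
        · -- reverse maps into the fiber
          intro g hg
          rw [mem_FSet] at hg
          obtain ⟨h1, h2, h3⟩ := hg
          have hTA : T ⊆ A := hT.1
          have hfil : A.filter (fun i => (if i ∈ T then b else g i) = b) = T := by
            ext i
            simp only [mem_filter]
            constructor
            · rintro ⟨hiA, hval⟩
              by_contra hiT
              rw [if_neg hiT] at hval
              have : i ∈ A \ T := mem_sdiff.mpr ⟨hiA, hiT⟩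
              have := h1 i this
              rw [hval] at this; exact hb this
            · intro hiT
              exact ⟨hTA hiT, by simp [hiT]⟩
          rw [mem_filter, mem_FSet]
          dsimp only
          refine ⟨⟨?_, ?_, ?_⟩, hfil⟩
          · intro i hiA
            by_cases hiT : i ∈ T
            · simp [hiT]
            · rw [if_neg hiT]
              exact mem_insert_of_mem (h1 i (mem_sdiff.mpr ⟨hiA, hiT⟩))
          · intro i hiA
            rw [if_neg (fun h => hiA (hTA h))]
            exact h2 i (by simp [hiA])
          · intro b' hb'
            rw [mem_insert] at hb'
            rcases hb' with rfl | hb'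
            · rw [hfil]; exact hT.2
            · rw [← h3 b' hb']
              congr 1
              ext i
              simp only [mem_filter, mem_sdiff]
              constructor
              · rintro ⟨hiA, hval⟩
                have hiT : i ∉ T := by
                  intro hiT; rw [if_pos hiT] at hval; exact hb (hval ▸ hb')
                rw [if_neg hiT] at hval
                exact ⟨⟨hiA, hiT⟩, hval⟩
              · rintro ⟨⟨hiA, hiT⟩, hval⟩
                exact ⟨hiA, by simp [hiT, hval]⟩
        · -- left inverse
          intro g hg
          rw [mem_filter] at hg
          funext i
          dsimp only
          by_cases hiT : i ∈ T
          · simp only [if_pos hiT]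
            have h2 := hg.2
            rw [← h2] at hiT
            exact ((mem_filter.mp hiT).2).symm
          · simp [hiT]
        · -- right inverse
          intro g hg
          rw [mem_FSet] at hg
          funext i
          dsimp only
          by_cases hiT : i ∈ T
          · simp only [if_pos hiT]
            exact (hg.2.1 i (by simp [hiT])).symm
          · simp [hiT]
      rw [Finset.sum_congr rfl hbij]
      by_cases hsum : ∑ b' ∈ insert b s, c b' = A.card
      · rw [if_pos hsum]
        rw [Finset.sum_insert hb] at hsum
        have hcb : c b ≤ A.card := hsum ▸ Nat.le_add_right _ _
        have : ∀ T ∈ A.powersetCard (c b), (FSet junk (A \ T) s c).card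
            = Nat.multinomial s c := by
          intro T hT
          rw [Finset.mem_powersetCard] at hT
          rw [ih, if_pos]
          rw [Finset.card_sdiff_of_subset hT.1, hT.2, ← hsum, Nat.add_sub_cancel_left]
        rw [Finset.sum_congr rfl this, Finset.sum_const, Finset.card_powersetCard,
          Nat.multinomial_insert hb, smul_eq_mul]
        congr 1
        rw [← hsum]
      · rw [if_neg hsum]
        refine Finset.sum_eq_zero (fun T hT => ?_)
        rw [Finset.mem_powersetCard] at hT
        rw [ih, if_neg]
        intro h
        rw [Finset.card_sdiff_of_subset hT.1, hT.2] at h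
        apply hsum
        rw [Finset.sum_insert hb]
        have hcb : c b ≤ A.card := by rw [← hT.2]; exact Finset.card_le_card hT.1
        rw [h, Nat.add_sub_cancel' hcb]
end Count


section Assemble

variable {n : ℕ}

/-- The finset of valid position maps. -/
noncomputable def GV (n : ℕ) : Finset (Fin n → ℕ × ℕ) :=
  @Finset.filter _ ValidG (Classical.decPred _)
    (Fintype.piFinset fun _ : Fin n => ((Finset.Icc 1 n) ×ˢ (Finset.range n)))

lemma validG_bounds {g : Fin n → ℕ × ℕ} (hv : ValidG g) (i : Fin n) :
    (g i).1 ∈ Finset.Icc 1 n ∧ (g i).2 ∈ Finset.range n := by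
  set j := (g i).1 with hj
  have hpos : 1 ≤ j := Nat.one_le_iff_ne_zero.mpr (by have := hv.1 i; omega)
  have hm : 0 < (fibG g (j, 0)).card := by
    rw [← hv.2 j (g i).2 (hv.1 i)]
    exact Finset.card_pos.mpr ⟨i, mem_fib_self g i⟩
  have hdisj : ∀ q ∈ Finset.range j, ∀ q' ∈ Finset.range j, q ≠ q' →
      Disjoint (fibG g (j, q)) (fibG g (j, q')) := by
    intro q _ q' _ hqq
    rw [Finset.disjoint_left]
    intro a ha ha'
    rw [fibG, Finset.mem_filter] at ha ha'
    rw [ha.2] at ha'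
    exact hqq (by simpa using ha'.2)
  have hsum : ∑ q ∈ Finset.range j, (fibG g (j, q)).card ≤ n := by
    rw [← Finset.card_biUnion hdisj]
    calc ((Finset.range j).biUnion fun q => fibG g (j, q)).card
        ≤ (Finset.univ : Finset (Fin n)).card := Finset.card_le_card (Finset.subset_univ _)
      _ = n := by simp
  have hsum' : ∑ q ∈ Finset.range j, (fibG g (j, q)).card = j * (fibG g (j, 0)).card := by
    rw [Finset.sum_congr rfl (fun q hq => hv.2 j q (Finset.mem_range.mp hq)),
      Finset.sum_const, Finset.card_range, smul_eq_mul]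
  have hjn : j ≤ n := by
    calc j = j * 1 := (mul_one j).symm
      _ ≤ j * (fibG g (j, 0)).card := Nat.mul_le_mul_left j hm
      _ ≤ n := by omega
  refine ⟨Finset.mem_Icc.mpr ⟨hpos, hjn⟩, Finset.mem_range.mpr ?_⟩
  have := hv.1 i
  omega

lemma mem_GV {g : Fin n → ℕ × ℕ} : g ∈ GV n ↔ ValidG g := by
  classical
  rw [GV, Finset.mem_filter, Fintype.mem_piFinset]
  constructor
  · exact fun h => h.2
  · intro hv
    refine ⟨fun i => ?_, hv⟩
    rw [Finset.mem_product]
    exact validG_bounds hv i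

/-- The multiset of o-block lengths. -/
def partsOf (g : Fin n → ℕ × ℕ) : Multiset ℕ :=
  (Finset.univ.filter (fun i : Fin n => (g i).2 = 0)).val.map (fun i => (g i).1)

lemma count_partsOf (g : Fin n → ℕ × ℕ) (j : ℕ) :
    (partsOf g).count j = (fibG g (j, 0)).card := by
  rw [partsOf, Multiset.count_map]
  have h1 : (Finset.univ.filter (fun i : Fin n => (g i).2 = 0)).val.filter
      (fun i => j = (g i).1) =
      ((Finset.univ.filter (fun i : Fin n => (g i).2 = 0)).filter
        (fun i => j = (g i).1)).val := by
    rw [Finset.filter_val]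
    try rfl
  rw [h1]
  have h2 : (Finset.univ.filter (fun i : Fin n => (g i).2 = 0)).filter
      (fun i => j = (g i).1) = fibG g (j, 0) := by
    ext i
    simp only [Finset.mem_filter, Finset.mem_univ, true_and, fibG, Prod.ext_iff]
    constructor
    · rintro ⟨h1', h2'⟩; exact ⟨h2'.symm, h1'⟩
    · rintro ⟨h1', h2'⟩; exact ⟨h2', h1'.symm⟩
  rw [h2]
  rfl

lemma sum_partsOf {g : Fin n → ℕ × ℕ} (hv : ValidG g) : (partsOf g).sum = n := by
  classical
  set A0 := Finset.univ.filter (fun i : Fin n => (g i).2 = 0) with hA0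
  have hs0 : (partsOf g).sum = ∑ i ∈ A0, (g i).1 := by
    rw [partsOf, Finset.sum]
  rw [hs0]
  rw [Finset.sum_comp (fun j => j) (fun i => (g i).1)]
  -- now : ∑ j ∈ A0.image _, (card) • j
  have himg : A0.image (fun i => (g i).1) = Finset.univ.image (fun i : Fin n => (g i).1) := by
    apply Finset.Subset.antisymm
    · exact Finset.image_subset_image (Finset.filter_subset _ _)
    · intro j hj
      rw [Finset.mem_image] at hj ⊢
      obtain ⟨i, -, rfl⟩ := hj
      have hm : 0 < (fibG g ((g i).1, 0)).card := by
        rw [← hv.2 (g i).1 (g i).2 (hv.1 i)]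
        exact Finset.card_pos.mpr ⟨i, by
          rw [← Prod.mk.eta (p := g i)]; exact mem_fib_self g i⟩
      obtain ⟨x, hx⟩ := Finset.card_pos.mp hm
      rw [fibG, Finset.mem_filter] at hx
      refine ⟨x, ?_, ?_⟩
      · rw [hA0, Finset.mem_filter]
        exact ⟨Finset.mem_univ _, by rw [hx.2]⟩
      · rw [hx.2]
  have hfilA0 : ∀ j, A0.filter (fun i => (g i).1 = j) = fibG g (j, 0) := by
    intro j
    ext i
    simp only [hA0, Finset.mem_filter, Finset.mem_univ, true_and, fibG, Prod.ext_iff]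
    tauto
  have hn : n = ∑ j ∈ Finset.univ.image (fun i : Fin n => (g i).1),
      j * (fibG g (j, 0)).card := by
    have h1 : (Finset.univ : Finset (Fin n)).card =
        ∑ j ∈ Finset.univ.image (fun i : Fin n => (g i).1),
          (Finset.univ.filter (fun i : Fin n => (g i).1 = j)).card :=
      Finset.card_eq_sum_card_image _ _
    have h2 : ∀ j ∈ Finset.univ.image (fun i : Fin n => (g i).1),
        (Finset.univ.filter (fun i : Fin n => (g i).1 = j)).card =
          j * (fibG g (j, 0)).card := by
      intro j hj
      obtain ⟨i0, -, hi0⟩ := Finset.mem_image.mp hj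
      have hjpos : 0 < j := by have := hv.1 i0; omega
      have h3 : (Finset.univ.filter (fun i : Fin n => (g i).1 = j)).card =
          ∑ p ∈ Finset.range j,
            ((Finset.univ.filter (fun i : Fin n => (g i).1 = j)).filter
              (fun i => (g i).2 = p)).card := by
        apply Finset.card_eq_sum_card_fiberwise
        intro x hx
        rw [Finset.mem_coe, Finset.mem_filter] at hx
        rw [Finset.mem_coe, Finset.mem_range, ← hx.2]
        exact hv.1 x
      rw [h3]
      have h4 : ∀ p ∈ Finset.range j,
          ((Finset.univ.filter (fun i : Fin n => (g i).1 = j)).filter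
            (fun i => (g i).2 = p)).card = (fibG g (j, 0)).card := by
        intro p hp
        have h5 : (Finset.univ.filter (fun i : Fin n => (g i).1 = j)).filter
            (fun i => (g i).2 = p) = fibG g (j, p) := by
          ext i
          simp only [Finset.mem_filter, Finset.mem_univ, true_and, fibG, Prod.ext_iff]
          try tauto
        rw [h5]
        exact hv.2 j p (Finset.mem_range.mp hp)
      rw [Finset.sum_congr rfl h4, Finset.sum_const, Finset.card_range, smul_eq_mul]
    calc n = (Finset.univ : Finset (Fin n)).card := by simp
      _ = _ := by rw [h1]; exact Finset.sum_congr rfl h2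
  rw [himg]
  conv_rhs => rw [hn]
  apply Finset.sum_congr rfl
  intro j _
  rw [hfilA0 j, smul_eq_mul, mul_comm]

lemma partsOf_pos {g : Fin n → ℕ × ℕ} (hv : ValidG g) {j : ℕ}
    (hj : j ∈ partsOf g) : 0 < j := by
  rw [partsOf, Multiset.mem_map] at hj
  obtain ⟨i, -, rfl⟩ := hj
  have := hv.1 i
  omega

open Classical in
/-- The partition associated to a valid position map. -/
noncomputable def shapeOf (g : Fin n → ℕ × ℕ) : Nat.Partition n :=
  if h : ValidG g then
    ⟨partsOf g, fun hj => partsOf_pos h hj, sum_partsOf h⟩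
  else
    ⟨Multiset.replicate n 1, fun hj => by rw [Multiset.eq_of_mem_replicate hj]; omega,
      by simp⟩

lemma shapeOf_parts {g : Fin n → ℕ × ℕ} (hv : ValidG g) :
    (shapeOf g).parts = partsOf g := by
  unfold shapeOf
  rw [dif_pos hv]

/-- The slot set of a partition. -/
def sP (P : Nat.Partition n) : Finset (ℕ × ℕ) :=
  P.parts.toFinset.biUnion (fun j => ({j} : Finset ℕ) ×ˢ Finset.range j)

lemma mem_sP {P : Nat.Partition n} {b : ℕ × ℕ} :
    b ∈ sP P ↔ b.1 ∈ P.parts ∧ b.2 < b.1 := by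
  rw [sP, Finset.mem_biUnion]
  constructor
  · rintro ⟨j, hj, hb⟩
    rw [Finset.mem_product, Finset.mem_singleton, Finset.mem_range] at hb
    rw [Multiset.mem_toFinset] at hj
    rw [hb.1]
    exact ⟨hj, hb.1 ▸ hb.2⟩
  · rintro ⟨h1, h2⟩
    exact ⟨b.1, Multiset.mem_toFinset.mpr h1,
      Finset.mem_product.mpr ⟨Finset.mem_singleton_self _, Finset.mem_range.mpr h2⟩⟩

lemma sP_pairwiseDisjoint (P : Nat.Partition n) :
    Set.PairwiseDisjoint (↑P.parts.toFinset)
      (fun j => ({j} : Finset ℕ) ×ˢ Finset.range j) := by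
  intro j _ j' _ hjj
  apply Finset.disjoint_left.mpr
  intro b hb hb'
  rw [Finset.mem_product, Finset.mem_singleton] at hb hb'
  exact hjj (hb.1.symm.trans hb'.1)

lemma sum_sP (P : Nat.Partition n) :
    ∑ b ∈ sP P, P.parts.count b.1 = n := by
  rw [sP, Finset.sum_biUnion (sP_pairwiseDisjoint P)]
  have h1 : ∀ j ∈ P.parts.toFinset,
      ∑ b ∈ ({j} : Finset ℕ) ×ˢ Finset.range j, P.parts.count b.1 =
        P.parts.count j * j := by
    intro j _
    rw [Finset.sum_product, Finset.sum_singleton]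
    dsimp only
    rw [Finset.sum_const, Finset.card_range, smul_eq_mul, mul_comm]
  rw [Finset.sum_congr rfl h1]
  have h2 := Finset.sum_multiset_map_count P.parts (id : ℕ → ℕ)
  rw [Multiset.map_id] at h2
  calc ∑ j ∈ P.parts.toFinset, P.parts.count j * j
      = ∑ j ∈ P.parts.toFinset, P.parts.count j • id j := by
        simp [smul_eq_mul]
    _ = P.parts.sum := h2.symm
    _ = n := P.parts_sum

lemma prod_sP (P : Nat.Partition n) :
    ∏ b ∈ sP P, (P.parts.count b.1)! =
      ∏ j ∈ Finset.Icc 1 n, ((P.parts.count j)!) ^ j := by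
  rw [sP, Finset.prod_biUnion (sP_pairwiseDisjoint P)]
  have h1 : ∀ j ∈ P.parts.toFinset,
      ∏ b ∈ ({j} : Finset ℕ) ×ˢ Finset.range j, (P.parts.count b.1)! =
        ((P.parts.count j)!) ^ j := by
    intro j _
    rw [Finset.prod_product, Finset.prod_singleton]
    dsimp only
    rw [Finset.prod_const, Finset.card_range]
  rw [Finset.prod_congr rfl h1]
  apply Finset.prod_subset
  · intro j hj
    rw [Multiset.mem_toFinset] at hj
    rw [Finset.mem_Icc]
    refine ⟨P.parts_pos hj, ?_⟩
    calc j ≤ P.parts.sum := Multiset.single_le_sum (fun x _ => Nat.zero_le x) j hj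
      _ = n := P.parts_sum
  · intro j _ hj
    rw [Multiset.count_eq_zero_of_notMem (fun h => hj (Multiset.mem_toFinset.mpr h))]
    simp

end Assemble

lemma filter_shape_eq (P : Nat.Partition n) :
    (GV n).filter (fun g => shapeOf g = P) =
      FSet ((0, 0) : ℕ × ℕ) Finset.univ (sP P) (fun b => P.parts.count b.1) := by
  ext g
  rw [Finset.mem_filter, mem_FSet, mem_GV]
  constructor
  · rintro ⟨hv, hP⟩
    have hparts : partsOf g = P.parts := by rw [← shapeOf_parts hv, hP]
    have hcount : ∀ j, (fibG g (j, 0)).card = P.parts.count j := by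
      intro j; rw [← count_partsOf, hparts]
    refine ⟨fun i _ => ?_, by simp, fun b hb => ?_⟩
    · rw [mem_sP]
      refine ⟨?_, hv.1 i⟩
      have hm : 0 < (fibG g ((g i).1, 0)).card := by
        rw [← hv.2 (g i).1 (g i).2 (hv.1 i)]
        exact Finset.card_pos.mpr ⟨i, mem_fib_self g i⟩
      rw [hcount] at hm
      exact Multiset.count_pos.mp hm
    · rw [mem_sP] at hb
      have e1 : (Finset.univ.filter (fun i => g i = b)).card = (fibG g (b.1, b.2)).card := by
        rw [Prod.mk.eta]; rfl
      rw [e1, hv.2 b.1 b.2 hb.2, hcount b.1]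
  · rintro ⟨h1, -, h3⟩
    have hval : ValidG g := by
      constructor
      · exact fun i => (mem_sP.mp (h1 i (Finset.mem_univ i))).2
      · intro j p hp
        by_cases hj : j ∈ P.parts
        · have hb1 : ((j, p) : ℕ × ℕ) ∈ sP P := mem_sP.mpr ⟨hj, hp⟩
          have hb0 : ((j, 0) : ℕ × ℕ) ∈ sP P :=
            mem_sP.mpr ⟨hj, P.parts_pos hj⟩
          have e1 := h3 _ hb1
          have e0 := h3 _ hb0
          dsimp only at e1 e0
          rw [show fibG g (j, p) = Finset.univ.filter (fun i => g i = (j, p)) from rfl,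
            show fibG g (j, 0) = Finset.univ.filter (fun i => g i = (j, 0)) from rfl,
            e1, e0]
        · have he : ∀ q, fibG g (j, q) = ∅ := by
            intro q
            rw [Finset.eq_empty_iff_forall_notMem]
            intro x hx
            rw [fibG, Finset.mem_filter] at hx
            have hm := mem_sP.mp (h1 x (Finset.mem_univ x))
            rw [hx.2] at hm
            exact hj hm.1
          rw [he p, he 0]
    refine ⟨hval, ?_⟩
    have hparts : partsOf g = P.parts := by
      apply Multiset.ext.mpr
      intro j
      rw [count_partsOf]
      by_cases hj : j ∈ P.parts
      · have hb0 : ((j, 0) : ℕ × ℕ) ∈ sP P :=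
          mem_sP.mpr ⟨hj, P.parts_pos hj⟩
        exact h3 _ hb0
      · rw [Multiset.count_eq_zero_of_notMem hj]
        have he : fibG g (j, 0) = ∅ := by
          rw [Finset.eq_empty_iff_forall_notMem]
          intro x hx
          rw [fibG, Finset.mem_filter] at hx
          have hm := mem_sP.mp (h1 x (Finset.mem_univ x))
          rw [hx.2] at hm
          exact hj hm.1
        rw [he]
        rfl
    have := shapeOf_parts hval
    apply Nat.Partition.ext
    rw [this, hparts]

/-- The number of equivalence classes of block-parallel update schedules of size `n`
under `≡₀` (where `μ ≡₀ μ'` iff `φ(μ) = φ(μ')`), i.e. the number of distinct values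
of `φ` on `BP_n`, equals `Σ_{λ ⊢ n} n! / ∏_j (m_λ(j)!)^j`. -/
theorem card_bp_mod_eqzero (n : ℕ) (hn : 1 ≤ n) :
    {L : List (Finset (Fin n)) | ∃ μ : Finset (List (Fin n)), IsBP n μ ∧ phiBP μ = L}.ncard =
      ∑ P : Nat.Partition n, n ! / ∏ j ∈ Finset.Icc 1 n, ((P.parts.count j)!) ^ j := by
  have hset : {L : List (Finset (Fin n)) | ∃ μ, IsBP n μ ∧ phiBP μ = L} =
      phiG '' {g | ValidG g} := by
    ext L
    simp only [Set.mem_setOf_eq, Set.mem_image]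
    constructor
    · rintro ⟨μ, hμ, rfl⟩
      obtain ⟨g, hg⟩ := posMap_exists hμ
      obtain ⟨hv, he⟩ := phiBP_eq_phiG hμ hg
      exact ⟨g, hv, he.symm⟩
    · rintro ⟨g, hv, rfl⟩
      exact ⟨muOfG g, isBP_muOfG hv,
        (phiBP_eq_phiG (isBP_muOfG hv) (posMap_muOfG hv)).2⟩
  rw [hset, Set.ncard_image_of_injOn (s := {g : Fin n → ℕ × ℕ | ValidG g})
    (f := phiG) (fun a ha b hb hab => phiG_injOn ha hb hab)]
  have hG : {g : Fin n → ℕ × ℕ | ValidG g} = ↑(GV n) := by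
    ext g
    simp only [Set.mem_setOf_eq, Finset.coe_filter, Finset.mem_coe]
    exact (mem_GV).symm
  rw [hG, Set.ncard_coe_finset]
  rw [Finset.card_eq_sum_card_fiberwise
    (f := shapeOf) (t := Finset.univ) (fun g _ => Finset.mem_univ (shapeOf g))]
  apply Finset.sum_congr rfl
  intro P _
  rw [filter_shape_eq P, card_FSet, if_pos (by rw [sum_sP P]; simp)]
  rw [Nat.multinomial, sum_sP P, prod_sP P]
end

section
/- For every n ≥ 1, the coefficient of X^n in the polynomial ∏_{j=1}^{n} ( Σ_{k=0}^{n} X^{j·k} / (k!)^j ) over ℚ equals |BP_n / ≡_0| / n!; equivalently, the exponential generating function of the sequence (|BP_n^0|)_{n∈ℕ} is ∏_{j ≥ 1} Σ_{k ≥ 0} (x^k / k!)^j. -/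
open Finset Nat

namespace BPAux

variable {n : ℕ}

/-- fiber cardinality of a function on a fintype -/
def fcard {α β : Type*} [Fintype α] [DecidableEq β] (f : α → β) (b : β) : ℕ :=
  (Finset.univ.filter fun a => f a = b).card

def ValidF (n : ℕ) : Set (Fin n → ℕ × ℕ) :=
  {f | (∀ i, (f i).2 < (f i).1) ∧
    ∀ j r r' : ℕ, r < j → r' < j → fcard f (j, r) = fcard f (j, r')}

def lenLcm (f : Fin n → ℕ × ℕ) : ℕ := Finset.univ.lcm fun i => (f i).1

def psiBlock (f : Fin n → ℕ × ℕ) (t : ℕ) : Finset (Fin n) :=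
  Finset.univ.filter fun i => t % (f i).1 = (f i).2

def psi (f : Fin n → ℕ × ℕ) : List (Finset (Fin n)) :=
  (List.range (lenLcm f)).map (psiBlock f)

lemma lenLcm_pos (f : Fin n → ℕ × ℕ) (hf : ∀ i, (f i).2 < (f i).1) : 0 < lenLcm f := by
  rcases Nat.eq_zero_or_pos (lenLcm f) with h | h
  · exfalso
    rw [lenLcm, Finset.lcm_eq_zero_iff] at h
    obtain ⟨i, -, hi⟩ := h
    have := hf i; omega
  · exact h

lemma dvd_lenLcm (f : Fin n → ℕ × ℕ) (i : Fin n) : (f i).1 ∣ lenLcm f :=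
  Finset.dvd_lcm (Finset.mem_univ i)

/-- the occurrence set of an arithmetic progression in `range ℓ` -/
lemma filter_mod_card {ℓ j r : ℕ} (hj : 0 < j) (hd : j ∣ ℓ) (hr : r < j) :
    ((Finset.range ℓ).filter fun t => t % j = r).card = ℓ / j := by
  have himg : ((Finset.range (ℓ / j)).image fun q => j * q + r) =
      (Finset.range ℓ).filter fun t => t % j = r := by
    ext t
    simp only [Finset.mem_image, Finset.mem_filter, Finset.mem_range]
    constructor
    · rintro ⟨q, hq, rfl⟩
      constructor
      · obtain ⟨c, rfl⟩ := hd
        have : j * q + j ≤ j * c := by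
          have : q + 1 ≤ c := by
            rwa [Nat.mul_div_cancel_left _ hj] at hq
          calc j * q + j = j * (q + 1) := by ring
            _ ≤ j * c := Nat.mul_le_mul_left _ this
        omega
      · rw [Nat.add_comm, Nat.add_mul_mod_self_left, Nat.mod_eq_of_lt hr]
    · rintro ⟨ht, hmod⟩
      refine ⟨t / j, ?_, ?_⟩
      · obtain ⟨c, rfl⟩ := hd
        simpa [Nat.mul_div_cancel_left _ hj] using
          Nat.div_lt_div_of_lt_of_dvd (⟨c, rfl⟩ : j ∣ j * c) ht
      · have := Nat.div_add_mod t j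
        omega
  rw [← himg, Finset.card_image_of_injective _ (fun a b h => Nat.eq_of_mul_eq_mul_left hj (Nat.add_right_cancel h)), Finset.card_range]

lemma psi_injOn : Set.InjOn (psi (n := n)) (ValidF n) := by
  intro f hf g hg hfg
  have hlen : lenLcm f = lenLcm g := by
    have := congrArg List.length hfg
    simpa [psi] using this
  have hblocks : ∀ t < lenLcm f, psiBlock f t = psiBlock g t := by
    intro t ht
    have h1 : (psi f)[t]? = (psi g)[t]? := by rw [hfg]
    rw [psi, psi, ← hlen] at h1
    simp only [List.getElem?_map, List.getElem?_range ht, Option.map_some] at h1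
    simpa using h1
  funext i
  set ℓ := lenLcm f with hℓ
  have hℓpos : 0 < ℓ := lenLcm_pos f hf.1
  have hOcc : ((Finset.range ℓ).filter fun t => t % (f i).1 = (f i).2) =
      ((Finset.range ℓ).filter fun t => t % (g i).1 = (g i).2) := by
    ext t
    simp only [Finset.mem_filter, Finset.mem_range]
    constructor
    · rintro ⟨ht, hm⟩
      refine ⟨ht, ?_⟩
      have := hblocks t ht
      have hi : i ∈ psiBlock f t := by simp [psiBlock, hm]
      rw [this] at hi
      simpa [psiBlock] using hi
    · rintro ⟨ht, hm⟩
      refine ⟨ht, ?_⟩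
      have := hblocks t ht
      have hi : i ∈ psiBlock g t := by simp [psiBlock, hm]
      rw [← this] at hi
      simpa [psiBlock] using hi
  -- recover r as min and j from card
  have hjf : (f i).1 ∣ ℓ := dvd_lenLcm f i
  have hjg : (g i).1 ∣ ℓ := hlen ▸ dvd_lenLcm g i
  have hjfpos : 0 < (f i).1 := lt_of_le_of_lt (Nat.zero_le _) (hf.1 i)
  have hjgpos : 0 < (g i).1 := lt_of_le_of_lt (Nat.zero_le _) (hg.1 i)
  have hmemf : (f i).2 ∈ (Finset.range ℓ).filter fun t => t % (f i).1 = (f i).2 := by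
    simp only [Finset.mem_filter, Finset.mem_range]
    exact ⟨lt_of_lt_of_le (hf.1 i) (Nat.le_of_dvd hℓpos hjf),
      Nat.mod_eq_of_lt (hf.1 i)⟩
  have hmemg : (g i).2 ∈ (Finset.range ℓ).filter fun t => t % (g i).1 = (g i).2 := by
    simp only [Finset.mem_filter, Finset.mem_range]
    exact ⟨lt_of_lt_of_le (hg.1 i) (Nat.le_of_dvd hℓpos hjg),
      Nat.mod_eq_of_lt (hg.1 i)⟩
  have hr : (f i).2 = (g i).2 := by
    have h1 : (f i).2 ≤ (g i).2 := by
      have := hOcc ▸ hmemg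
      simp only [Finset.mem_filter] at this
      calc (f i).2 = (g i).2 % (f i).1 := this.2.symm
        _ ≤ (g i).2 := Nat.mod_le _ _
    have h2 : (g i).2 ≤ (f i).2 := by
      have := hOcc.symm ▸ hmemf
      simp only [Finset.mem_filter] at this
      calc (g i).2 = (f i).2 % (g i).1 := this.2.symm
        _ ≤ (f i).2 := Nat.mod_le _ _
    omega
  have hj : (f i).1 = (g i).1 := by
    have hc := congrArg Finset.card hOcc
    rw [filter_mod_card hjfpos hjf (hf.1 i), filter_mod_card hjgpos hjg (hg.1 i)] at hc
    have e1 : (f i).1 = ℓ / (ℓ / (f i).1) :=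
      (Nat.div_div_self hjf hℓpos.ne').symm
    have e2 : (g i).1 = ℓ / (ℓ / (g i).1) :=
      (Nat.div_div_self hjg hℓpos.ne').symm
    rw [e1, e2, hc]
  exact Prod.ext hj hr

end BPAux

section BPtoF
variable {n : ℕ} {μ : Finset (List (Fin n))}

lemma nodup_of_isBP (h : IsBP n μ) {S} (hS : S ∈ μ) : S.Nodup := by
  rw [List.nodup_iff_count_le_one]
  intro i
  calc S.count i ≤ μ.sum (fun S => S.count i) :=
        Finset.single_le_sum (fun _ _ => Nat.zero_le _) hS
    _ = 1 := h.2 i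

lemma existsUnique_block (h : IsBP n μ) (i : Fin n) : ∃! S, S ∈ μ ∧ i ∈ S := by
  have h1 := h.2 i
  have hex : ∃ S ∈ μ, i ∈ S := by
    by_contra hc
    push_neg at hc
    have : μ.sum (fun S => S.count i) = 0 :=
      Finset.sum_eq_zero fun S hS => List.count_eq_zero.2 (hc S hS)
    omega
  obtain ⟨S, hS, hiS⟩ := hex
  refine ⟨S, ⟨hS, hiS⟩, ?_⟩
  rintro S' ⟨hS', hiS'⟩
  by_contra hne
  have hsub : ({S', S} : Finset (List (Fin n))) ⊆ μ := by
    intro T hT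
    simp only [Finset.mem_insert, Finset.mem_singleton] at hT
    rcases hT with rfl | rfl <;> assumption
  have h2 : 2 ≤ μ.sum fun T => T.count i := by
    calc 2 ≤ S'.count i + S.count i := by
          have := List.count_pos_iff.2 hiS
          have := List.count_pos_iff.2 hiS'
          omega
      _ = ({S', S} : Finset (List (Fin n))).sum (fun T => T.count i) :=
          (Finset.sum_pair hne).symm
      _ ≤ μ.sum fun T => T.count i :=
          Finset.sum_le_sum_of_subset hsub
  omega

open BPAux in
lemma bp_to_valid (h : IsBP n μ) : ∃ f ∈ ValidF n, psi f = phiBP μ := by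
  choose B hB using fun i => existsUnique_block h i
  have hBμ : ∀ i, B i ∈ μ := fun i => (hB i).1.1
  have hBi : ∀ i, i ∈ B i := fun i => (hB i).1.2
  have huniq : ∀ (i : Fin n) (S : List (Fin n)), S ∈ μ → i ∈ S → S = B i :=
    fun i S hS hiS => (hB i).2 S ⟨hS, hiS⟩
  set f : Fin n → ℕ × ℕ := fun i => ((B i).length, (B i).idxOf i) with hf
  have hlt : ∀ i, (B i).idxOf i < (B i).length :=
    fun i => List.idxOf_lt_length_iff.2 (hBi i)
  have hgetidx : ∀ i, (B i)[(B i).idxOf i]'(hlt i) = i :=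
    fun i => List.getElem_idxOf (hlt i)
  have hBsome : ∀ (i : Fin n) (m : ℕ), (B i)[m]? = some i ↔ m = (B i).idxOf i := by
    intro i m
    constructor
    · intro hm
      obtain ⟨hml, hget⟩ := List.getElem?_eq_some_iff.1 hm
      have hnd := nodup_of_isBP h (hBμ i)
      have : (B i)[m]'hml = (B i)[(B i).idxOf i]'(hlt i) := by rw [hget, hgetidx]
      exact hnd.getElem_inj_iff.1 this
    · rintro rfl
      rw [List.getElem?_eq_getElem (hlt i)]
      exact congrArg some (hgetidx i)
  have hblock : ∀ t, blockAt μ t = psiBlock f t := by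
    intro t
    ext i
    simp only [blockAt, psiBlock, Finset.mem_biUnion, Finset.mem_filter, Finset.mem_univ,
      true_and]
    constructor
    · rintro ⟨S, hS, hiS⟩
      rw [Option.mem_toFinset, Option.mem_def] at hiS
      have hpos : 0 < S.length := List.length_pos_iff.2 (h.1 S hS)
      have hmlt : t % S.length < S.length := Nat.mod_lt _ hpos
      have hiS' : i ∈ S := by
        have := List.getElem?_eq_getElem hmlt
        rw [this] at hiS
        exact (Option.some_inj.1 hiS) ▸ List.getElem_mem _
      have hSB : S = B i := huniq i S hS hiS'
      rw [hSB] at hiS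
      exact (hBsome i _).1 hiS
    · intro ht
      refine ⟨B i, hBμ i, ?_⟩
      rw [Option.mem_toFinset, Option.mem_def]
      exact (hBsome i _).2 ht
  have hlen : bpLen μ = lenLcm f := by
    apply Nat.dvd_antisymm
    · apply Finset.lcm_dvd
      intro S hS
      obtain ⟨i, hi⟩ := List.exists_mem_of_ne_nil S (h.1 S hS)
      rw [huniq i S hS hi]
      exact dvd_lenLcm f i
    · exact Finset.lcm_dvd fun i _ => Finset.dvd_lcm (hBμ i)
  have hfib : ∀ j r, r < j → fcard f (j, r) = (μ.filter fun S => S.length = j).card := by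
    intro j r hr
    have key : ∀ (S : List (Fin n)), S ∈ μ.filter (fun S => S.length = j) →
        ∀ (hrS : r < S.length), f (S[r]'hrS) = (j, r) ∧ S = B (S[r]'hrS) := by
      intro S hS hrS
      obtain ⟨hSμ, hSl⟩ := Finset.mem_filter.1 hS
      have hsome : S[r]? = some (S[r]'hrS) := List.getElem?_eq_getElem hrS
      obtain ⟨x, hgen⟩ : ∃ x, S[r]'hrS = x := ⟨_, rfl⟩
      rw [hgen] at hsome ⊢
      have hx : x ∈ S := List.mem_of_getElem? hsome
      have hSB : S = B x := huniq x S hSμ hx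
      rw [hSB] at hsome
      have hidx := (hBsome _ _).1 hsome
      refine ⟨?_, hSB⟩
      have hlen' : (B x).length = j := by rw [← hSB]; exact hSl
      simp only [hf, Prod.mk.injEq]
      exact ⟨hlen', hidx.symm⟩
    refine Finset.card_bij' (fun i _ => B i)
      (fun S hS => S[r]'(by rw [(Finset.mem_filter.1 hS).2]; exact hr)) ?_ ?_ ?_ ?_
    · intro i hi
      simp only [fcard, Finset.mem_filter, Finset.mem_univ, true_and, hf, Prod.mk.injEq] at hi
      exact Finset.mem_filter.2 ⟨hBμ i, hi.1⟩
    · intro S hS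
      simp only [fcard, Finset.mem_filter, Finset.mem_univ, true_and]
      exact (key S hS _).1
    · intro i hi
      simp only [fcard, Finset.mem_filter, Finset.mem_univ, true_and, hf, Prod.mk.injEq] at hi
      have hsome : (B i)[r]? = some i := (hBsome i r).2 hi.2.symm
      obtain ⟨hml, hget⟩ := List.getElem?_eq_some_iff.1 hsome
      exact hget
    · intro S hS
      exact ((key S hS _).2).symm
  refine ⟨f, ⟨fun i => hlt i, fun j r r' hr hr' => by rw [hfib j r hr, hfib j r' hr']⟩, ?_⟩
  rw [psi, phiBP, hlen, show psiBlock f = blockAt μ from funext fun t => (hblock t).symm]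
end BPtoF

namespace BPAux
variable {n : ℕ}

def fib (f : Fin n → ℕ × ℕ) (p : ℕ × ℕ) : Finset (Fin n) :=
  Finset.univ.filter fun i => f i = p

def srt (f : Fin n → ℕ × ℕ) (p : ℕ × ℕ) : List (Fin n) :=
  (fib f p).sort (· ≤ ·)

lemma mem_srt {f : Fin n → ℕ × ℕ} {p : ℕ × ℕ} {i : Fin n} :
    i ∈ srt f p ↔ f i = p := by
  simp [srt, fib, Finset.mem_sort]

lemma srt_nodup (f : Fin n → ℕ × ℕ) (p : ℕ × ℕ) : (srt f p).Nodup :=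
  Finset.sort_nodup _ _

def Lst (f : Fin n → ℕ × ℕ) (i₀ : Fin n) (j m : ℕ) : List (Fin n) :=
  List.ofFn fun r : Fin j => (srt f (j, r.val)).getD m i₀

def mIdx (f : Fin n → ℕ × ℕ) (i : Fin n) : ℕ := (srt f (f i)).idxOf i

def muOf (f : Fin n → ℕ × ℕ) (i₀ : Fin n) : Finset (List (Fin n)) :=
  Finset.univ.image fun i => Lst f i₀ (f i).1 (mIdx f i)

lemma length_Lst (f : Fin n → ℕ × ℕ) (i₀ : Fin n) (j m : ℕ) :
    (Lst f i₀ j m).length = j := by simp [Lst]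

lemma mIdx_lt (f : Fin n → ℕ × ℕ) (i : Fin n) : mIdx f i < (srt f (f i)).length :=
  List.idxOf_lt_length_iff.2 (mem_srt.2 rfl)

lemma srt_getElem_mIdx (f : Fin n → ℕ × ℕ) (i : Fin n) :
    (srt f (f i))[mIdx f i]'(mIdx_lt f i) = i :=
  List.getElem_idxOf (mIdx_lt f i)

lemma srt_idx_of_getElem {f : Fin n → ℕ × ℕ} {p : ℕ × ℕ} {m : ℕ} {i : Fin n}
    (hm : m < (srt f p).length) (hget : (srt f p)[m]'hm = i) :
    (srt f p).idxOf i = m := by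
  have hi : i ∈ srt f p := by rw [← hget]; exact List.getElem_mem _
  have h2 : (srt f p).idxOf i < (srt f p).length := List.idxOf_lt_length_iff.2 hi
  have : (srt f p)[m]'hm = (srt f p)[(srt f p).idxOf i]'h2 := by
    rw [hget, List.getElem_idxOf]
  exact ((srt_nodup f p).getElem_inj_iff.1 this).symm

variable {f : Fin n → ℕ × ℕ} (hv : f ∈ ValidF n)

lemma srt_len_eq (hv : f ∈ ValidF n) {j r r' : ℕ} (hr : r < j) (hr' : r' < j) :
    (srt f (j, r)).length = (srt f (j, r')).length := by
  simp only [srt, Finset.length_sort]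
  exact hv.2 j r r' hr hr'

/-- entry of `Lst` at position `t'` via `getElem?`. -/
lemma Lst_getElem? (f : Fin n → ℕ × ℕ) (i₀ : Fin n) {j m t' : ℕ}
    (hm : ∀ r, r < j → m < (srt f (j, r)).length) (ht' : t' < j) :
    (Lst f i₀ j m)[t']? = some ((srt f (j, t'))[m]'(hm t' ht')) := by
  have hl : t' < (Lst f i₀ j m).length := by rw [length_Lst]; exact ht'
  rw [List.getElem?_eq_getElem hl]
  congr 1
  simp only [Lst, List.getElem_ofFn]
  exact List.getD_eq_getElem _ _ (hm t' ht')

lemma mem_Lst (hv : f ∈ ValidF n) {i₀ : Fin n} {j m : ℕ}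
    (hm : ∀ r, r < j → m < (srt f (j, r)).length)
    {i' : Fin n} : i' ∈ Lst f i₀ j m ↔ ((f i').1 = j ∧ mIdx f i' = m) := by
  constructor
  · intro hmem
    obtain ⟨r, hr0⟩ := List.mem_ofFn.1 hmem
    have hr : (srt f (j, r.val)).getD m i₀ = i' := hr0
    rw [List.getD_eq_getElem _ _ (hm r.val r.isLt)] at hr
    have hfi : f i' = (j, r.val) := by
      apply mem_srt.1
      rw [← hr]; exact List.getElem_mem _
    refine ⟨by rw [hfi], ?_⟩
    rw [mIdx, hfi]
    exact srt_idx_of_getElem (hm r.val r.isLt) hr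
  · rintro ⟨hj, hmi⟩
    have hρ : (f i').2 < j := hj ▸ hv.1 i'
    apply List.mem_ofFn.2
    refine ⟨⟨(f i').2, hρ⟩, ?_⟩
    show (srt f (j, (f i').2)).getD m i₀ = i'
    rw [List.getD_eq_getElem _ _ (hm (f i').2 hρ)]
    have hp : ((j : ℕ), (f i').2) = f i' := by rw [← hj]
    subst hmi
    -- goal : (srt f (j, (f i').2))[mIdx f i'] = i'
    obtain ⟨x, hgen⟩ : ∃ x, (srt f (j, (f i').2))[mIdx f i']'(hm (f i').2 hρ) = x := ⟨_, rfl⟩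
    rw [hgen]
    have hsome : (srt f (j, (f i').2))[mIdx f i']? = some x :=
      hgen ▸ List.getElem?_eq_getElem (hm (f i').2 hρ)
    rw [hp] at hsome
    have h2 := List.getElem?_eq_getElem (mIdx_lt f i')
    rw [hsome] at h2
    have := srt_getElem_mIdx f i'
    obtain ⟨x', h3⟩ : ∃ y, (srt f (f i'))[mIdx f i']'(mIdx_lt f i') = y := ⟨_, rfl⟩
    rw [h3] at this h2
    subst this
    exact Option.some_inj.1 h2

lemma nodup_Lst (i₀ : Fin n) {j m : ℕ} (hm : ∀ r, r < j → m < (srt f (j, r)).length) :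
    (Lst f i₀ j m).Nodup := by
  rw [Lst, List.nodup_ofFn]
  intro r r' hrr0
  have hrr : (srt f (j, r.val)).getD m i₀ = (srt f (j, r'.val)).getD m i₀ := hrr0
  have h1 : f ((srt f (j, r.val)).getD m i₀) = (j, r.val) := by
    rw [List.getD_eq_getElem _ _ (hm r.val r.isLt)]
    apply mem_srt.1 (List.getElem_mem _)
  have h2 : f ((srt f (j, r'.val)).getD m i₀) = (j, r'.val) := by
    rw [List.getD_eq_getElem _ _ (hm r'.val r'.isLt)]
    apply mem_srt.1 (List.getElem_mem _)
  rw [hrr] at h1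
  rw [h1] at h2
  have : r.val = r'.val := by
    have := congrArg Prod.snd h2; simpa using this
  exact Fin.ext this

lemma hm_of_mem (hv : f ∈ ValidF n) (i : Fin n) :
    ∀ r, r < (f i).1 → mIdx f i < (srt f ((f i).1, r)).length := by
  intro r hr
  have h1 : mIdx f i < (srt f (f i)).length := mIdx_lt f i
  have h2 : srt f (f i) = srt f ((f i).1, (f i).2) := by rw [Prod.mk.eta]
  rw [h2] at h1
  rwa [srt_len_eq hv hr (hv.1 i)]

lemma isBP_muOf (hv : f ∈ ValidF n) (i₀ : Fin n) : IsBP n (muOf f i₀) := by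
  constructor
  · intro S hS
    obtain ⟨i, -, rfl⟩ := Finset.mem_image.1 hS
    intro hnil
    have hlen := length_Lst f i₀ (f i).1 (mIdx f i)
    rw [hnil] at hlen
    simp only [List.length_nil] at hlen
    have := hv.1 i
    omega
  · intro i'
    set L : List (Fin n) := Lst f i₀ (f i').1 (mIdx f i') with hL
    have hLmem : L ∈ muOf f i₀ := Finset.mem_image.2 ⟨i', Finset.mem_univ _, rfl⟩
    have hmem : i' ∈ L := (mem_Lst hv (hm_of_mem hv i')).2 ⟨rfl, rfl⟩
    rw [Finset.sum_eq_single L]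
    · exact List.count_eq_one_of_mem (nodup_Lst i₀ (hm_of_mem hv i')) hmem
    · intro S hS hne
      obtain ⟨i, -, rfl⟩ := Finset.mem_image.1 hS
      by_contra hc
      have hmem' : i' ∈ Lst f i₀ (f i).1 (mIdx f i) := by
        have := List.count_pos_iff.1 (Nat.pos_of_ne_zero hc)
        exact this
      obtain ⟨h1, h2⟩ := (mem_Lst hv (hm_of_mem hv i)).1 hmem'
      apply hne
      rw [hL, ← h1, ← h2]
    · intro hL'
      exact absurd hLmem hL'

lemma phiBP_muOf (hv : f ∈ ValidF n) (i₀ : Fin n) : phiBP (muOf f i₀) = psi f := by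
  have hlen : bpLen (muOf f i₀) = lenLcm f := by
    rw [bpLen, muOf, Finset.lcm_image]
    apply Finset.lcm_congr rfl
    intro i _
    exact length_Lst f i₀ (f i).1 (mIdx f i)
  have hblock : ∀ t, blockAt (muOf f i₀) t = psiBlock f t := by
    intro t
    ext i'
    simp only [blockAt, psiBlock, Finset.mem_biUnion, Finset.mem_filter, Finset.mem_univ,
      true_and]
    constructor
    · rintro ⟨S, hS, hsome⟩
      rw [Option.mem_toFinset, Option.mem_def] at hsome
      obtain ⟨i, -, rfl⟩ := Finset.mem_image.1 hS
      rw [length_Lst] at hsome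
      have hjpos : 0 < (f i).1 := lt_of_le_of_lt (Nat.zero_le _) (hv.1 i)
      have htlt : t % (f i).1 < (f i).1 := Nat.mod_lt _ hjpos
      rw [Lst_getElem? f i₀ (hm_of_mem hv i) htlt] at hsome
      have hfi' : f i' = ((f i).1, t % (f i).1) := by
        apply mem_srt.1
        have := List.getElem_mem (hm_of_mem hv i _ htlt)
        rwa [Option.some_inj.1 hsome] at this
      rw [hfi']
    · intro ht
      refine ⟨Lst f i₀ (f i').1 (mIdx f i'), Finset.mem_image.2 ⟨i', Finset.mem_univ _, rfl⟩, ?_⟩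
      rw [Option.mem_toFinset, Option.mem_def, length_Lst]
      have hjpos : 0 < (f i').1 := lt_of_le_of_lt (Nat.zero_le _) (hv.1 i')
      have htlt : t % (f i').1 < (f i').1 := Nat.mod_lt _ hjpos
      rw [Lst_getElem? f i₀ (hm_of_mem hv i') htlt]
      congr 1
      obtain ⟨x, hgen⟩ : ∃ x, (srt f ((f i').1, t % (f i').1))[mIdx f i']'(hm_of_mem hv i' _ htlt) = x := ⟨_, rfl⟩
    
      rw [hgen]
      have hsome : (srt f ((f i').1, t % (f i').1))[mIdx f i']? = some x :=
        hgen ▸ List.getElem?_eq_getElem (hm_of_mem hv i' _ htlt)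
      have hp : ((f i').1, t % (f i').1) = f i' := by rw [ht, Prod.mk.eta]
      rw [hp] at hsome
      have h2 := List.getElem?_eq_getElem (mIdx_lt f i')
      rw [hsome] at h2
      obtain ⟨x', h3⟩ : ∃ y, (srt f (f i'))[mIdx f i']'(mIdx_lt f i') = y := ⟨_, rfl⟩
      have hmid := srt_getElem_mIdx f i'
      rw [h3] at hmid h2
      subst hmid
      exact Option.some_inj.1 h2
  rw [phiBP, psi, hlen, show blockAt (muOf f i₀) = psiBlock f from funext hblock]

lemma image_eq : {L : List (Finset (Fin n)) |
    ∃ μ : Finset (List (Fin n)), IsBP n μ ∧ phiBP μ = L} = psi '' (ValidF n) := by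
  ext L
  simp only [Set.mem_setOf_eq, Set.mem_image]
  constructor
  · rintro ⟨μ, hμ, rfl⟩
    obtain ⟨f, hf, hpsi⟩ := bp_to_valid hμ
    exact ⟨f, hf, hpsi⟩
  · rintro ⟨f, hf, rfl⟩
    rcases Nat.eq_zero_or_pos n with hn | hn
    · subst hn
      refine ⟨∅, ⟨by simp, fun i => absurd i.2 (by omega)⟩, ?_⟩
      have : lenLcm f = 1 := by
        rw [lenLcm]
        simp [Finset.univ_eq_empty]
      rw [phiBP, psi, this, bpLen]
      simp [blockAt, psiBlock, Finset.univ_eq_empty]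
    · exact ⟨muOf f ⟨0, hn⟩, isBP_muOf hf _, phiBP_muOf hf _⟩

end BPAux

namespace BPAux

section Count
variable {β : Type} [DecidableEq β]

lemma fiber_card_subtype {α : Type} [Fintype α] [DecidableEq α] (A : Finset α)
    (f : α → β) (a : β) (hfib : Finset.univ.filter (fun x => f x = a) = A) {b : β} (hb : b ≠ a) :
    (Finset.univ.filter fun x : {x : α // x ∉ A} => f x.val = b).card
      = (Finset.univ.filter fun x : α => f x = b).card := by
  have hj : ∀ x : α, x ∈ Finset.univ.filter (fun x => f x = b) → x ∉ A := by
    intro x hx hxA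
    rw [← hfib] at hxA
    simp only [Finset.mem_filter, Finset.mem_univ, true_and] at hx hxA
    exact hb (by rw [← hx, hxA])
  refine Finset.card_bij' (fun x _ => x.val) (fun x hx => ⟨x, hj x hx⟩) ?_ ?_ ?_ ?_
  · intro x hx
    simp only [Finset.mem_filter, Finset.mem_univ, true_and] at hx ⊢
    exact hx
  · intro x hx
    simp only [Finset.mem_filter, Finset.mem_univ, true_and] at hx ⊢
    exact hx
  · intro x hx
    exact Subtype.ext rfl
  · intro x hx
    rfl

lemma count_fibers (s : Finset β) (m : β → ℕ) :
    ∀ (α : Type) (_ : Fintype α) (_ : DecidableEq α), (∑ b ∈ s, m b) = Fintype.card α →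
    ((Fintype.piFinset fun _ : α => s).filter fun f =>
        ∀ b ∈ s, (Finset.univ.filter fun a => f a = b).card = m b).card
      = Nat.multinomial s m := by
  induction s using Finset.induction_on with
  | empty =>
    intro α _ _ h
    haveI : IsEmpty α := Fintype.card_eq_zero_iff.1 (by simpa using h.symm)
    rw [Nat.multinomial_empty]
    apply Finset.card_eq_one.2
    refine ⟨isEmptyElim, ?_⟩
    ext g
    simp only [Finset.mem_filter, Fintype.mem_piFinset, Finset.mem_singleton]
    constructor
    · intro _
      funext x
      exact isEmptyElim x
    · rintro rfl
      exact ⟨fun x => isEmptyElim x, fun b hb => absurd hb (Finset.notMem_empty b)⟩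
  | @insert a s ha ih =>
    intro α _ _ h
    rw [Finset.sum_insert ha] at h
    have hmaps : ∀ f ∈ (Fintype.piFinset fun _ : α => insert a s).filter (fun f =>
        ∀ b ∈ insert a s, (Finset.univ.filter fun x => f x = b).card = m b),
        (Finset.univ.filter fun x => f x = a) ∈ Finset.univ.powersetCard (m a) := by
      intro f hf
      obtain ⟨-, hfc⟩ := Finset.mem_filter.1 hf
      rw [Finset.mem_powersetCard_univ]
      exact hfc a (Finset.mem_insert_self a s)
    rw [Finset.card_eq_sum_card_fiberwise hmaps]
    have hslice : ∀ A ∈ Finset.univ.powersetCard (m a),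
        (((Fintype.piFinset fun _ : α => insert a s).filter (fun f =>
            ∀ b ∈ insert a s, (Finset.univ.filter fun x => f x = b).card = m b)).filter
          (fun f => (Finset.univ.filter fun x => f x = a) = A)).card
        = Nat.multinomial s m := by
      intro A hA
      rw [Finset.mem_powersetCard_univ] at hA
      have hcard : (∑ b ∈ s, m b) = Fintype.card {x : α // x ∉ A} := by
        have h1 : Fintype.card {x : α // x ∉ A} = Fintype.card α - A.card := by
          rw [← Fintype.card_coe A]
          exact Fintype.card_subtype_compl _
        have h2 : A.card ≤ Fintype.card α := by
          rw [← Finset.card_univ]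
          exact Finset.card_le_card (Finset.subset_univ A)
        omega
      have := ih {x : α // x ∉ A} inferInstance inferInstance hcard
      rw [← this]
      refine Finset.card_bij' (fun f _ => fun x : {x : α // x ∉ A} => f x.val)
        (fun g _ => fun x : α => if hx : x ∈ A then a else g ⟨x, hx⟩) ?_ ?_ ?_ ?_
      · intro f hf
        simp only [Finset.mem_filter, Fintype.mem_piFinset] at hf ⊢
        obtain ⟨⟨hpi, hfc⟩, hfib⟩ := hf
        refine ⟨?_, ?_⟩
        · intro x
          have h1 := hpi x.val
          rw [Finset.mem_insert] at h1
          rcases h1 with h1 | h1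
          · exfalso
            apply x.2
            have hmem : (x : α) ∈ Finset.univ.filter (fun y => f y = a) := by
              simp only [Finset.mem_filter, Finset.mem_univ, true_and]
              exact h1
            rw [hfib] at hmem
            exact hmem
          · exact h1
        · intro b hb
          have hba : b ≠ a := fun hba => ha (hba ▸ hb)
          rw [fiber_card_subtype A f a hfib hba]
          exact hfc b (Finset.mem_insert_of_mem hb)
      · intro g hg
        simp only [Finset.mem_filter, Fintype.mem_piFinset] at hg ⊢
        obtain ⟨hpi, hgc⟩ := hg
        have hfib : (Finset.univ.filter fun x : α =>
            (if hx : x ∈ A then a else g ⟨x, hx⟩) = a) = A := by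
          ext x
          simp only [Finset.mem_filter, Finset.mem_univ, true_and]
          by_cases hx : x ∈ A
          · simp [hx]
          · simp only [hx, dite_false]
            constructor
            · intro hgx
              exact absurd (hgx ▸ hpi ⟨x, hx⟩) ha
            · intro hxA
              exact hxA.elim
        refine ⟨⟨?_, ?_⟩, hfib⟩
        · intro x
          by_cases hx : x ∈ A
          · simp [hx, Finset.mem_insert_self]
          · simp only [hx, dite_false]
            exact Finset.mem_insert_of_mem (hpi ⟨x, hx⟩)
        · intro b hb
          rw [Finset.mem_insert] at hb
          rcases hb with rfl | hb
          · rw [hfib, hA]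
          · have hba : b ≠ a := fun hba => ha (hba ▸ hb)
            rw [← fiber_card_subtype A _ a hfib hba]
            rw [← hgc b hb]
            congr 1
            apply Finset.filter_congr
            intro x _
            have hx : x.val ∉ A := x.2
            simp [hx]
      · intro f hf
        simp only [Finset.mem_filter] at hf
        funext x
        by_cases hx : x ∈ A
        · simp only [hx, dite_true]
          rw [← hf.2] at hx
          simp only [Finset.mem_filter, Finset.mem_univ, true_and] at hx
          exact hx.symm
        · simp [hx]
      · intro g hg
        funext x
        have hx : x.val ∉ A := x.2
        simp [hx]
    rw [Finset.sum_congr rfl hslice, Finset.sum_const, Finset.card_powersetCard,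
      Finset.card_univ, smul_eq_mul, Nat.multinomial_insert ha, h]
end Count

end BPAux

namespace BPAux
variable {n : ℕ}

def sFull (n : ℕ) : Finset (ℕ × ℕ) := Finset.Icc 1 n ×ˢ Finset.range n

lemma part_le {f : Fin n → ℕ × ℕ} (hv : f ∈ ValidF n) (i : Fin n) : (f i).1 ≤ n := by
  set j := (f i).1 with hj
  have hpos : ∀ r, r < j → 0 < fcard f (j, r) := by
    intro r hr
    rw [hv.2 j r (f i).2 hr (hv.1 i)]
    apply Finset.card_pos.2
    refine ⟨i, ?_⟩
    simp [fcard, hj]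
  have hdisj : ∀ r ∈ Finset.range j, ∀ r' ∈ Finset.range j, r ≠ r' →
      Disjoint (Finset.univ.filter fun i' => f i' = (j, r))
        (Finset.univ.filter fun i' => f i' = (j, r')) := by
    intro r _ r' _ hne
    rw [Finset.disjoint_left]
    intro x hx hx'
    simp only [Finset.mem_filter, Finset.mem_univ, true_and] at hx hx'
    rw [hx] at hx'
    exact hne (by simpa using congrArg Prod.snd hx')
  have h2 : ∑ _r ∈ Finset.range j, (1 : ℕ) ≤ ∑ r ∈ Finset.range j, fcard f (j, r) :=
    Finset.sum_le_sum fun r hr => hpos r (Finset.mem_range.1 hr)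
  have h3 : ∑ r ∈ Finset.range j, fcard f (j, r) ≤ n := by
    calc ∑ r ∈ Finset.range j, fcard f (j, r)
        = ((Finset.range j).biUnion fun r => Finset.univ.filter fun i' => f i' = (j, r)).card :=
          (Finset.card_biUnion hdisj).symm
      _ ≤ (Finset.univ : Finset (Fin n)).card := Finset.card_le_card (Finset.subset_univ _)
      _ = n := by simp
  simp only [Finset.sum_const, Finset.card_range, smul_eq_mul, mul_one] at h2
  omega

lemma mem_sFull_of_valid {f : Fin n → ℕ × ℕ} (hv : f ∈ ValidF n) (i : Fin n) :
    f i ∈ sFull n := by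
  rw [sFull, Finset.mem_product, Finset.mem_Icc, Finset.mem_range]
  have h1 := hv.1 i
  have h2 := part_le hv i
  omega

def VF (n : ℕ) : Finset (Fin n → ℕ × ℕ) :=
  (Fintype.piFinset fun _ : Fin n => sFull n).filter
    (fun f => (∀ i, (f i).2 < (f i).1) ∧
      ∀ p ∈ sFull n, ∀ q ∈ sFull n, p.1 = q.1 → p.2 < p.1 → q.2 < q.1 → fcard f p = fcard f q)

lemma mem_VF_iff {f : Fin n → ℕ × ℕ} : f ∈ VF n ↔ f ∈ ValidF n := by
  rw [VF, Finset.mem_filter, Fintype.mem_piFinset]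
  constructor
  · rintro ⟨hpi, hc1, hc2⟩
    refine ⟨hc1, ?_⟩
    intro j r r' hr hr'
    by_cases hjn : j ≤ n
    · have hp : ((j : ℕ), r) ∈ sFull n := by
        rw [sFull, Finset.mem_product, Finset.mem_Icc, Finset.mem_range]; omega
      have hq : ((j : ℕ), r') ∈ sFull n := by
        rw [sFull, Finset.mem_product, Finset.mem_Icc, Finset.mem_range]; omega
      exact hc2 _ hp _ hq rfl hr hr'
    · have hemp : ∀ r'' : ℕ, fcard f (j, r'') = 0 := by
        intro r''
        rw [fcard, Finset.card_eq_zero, Finset.filter_eq_empty_iff]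
        intro i' _ hfi
        have := hpi i'
        rw [hfi, sFull, Finset.mem_product, Finset.mem_Icc] at this
        omega
      rw [hemp r, hemp r']
  · intro hv
    exact ⟨mem_sFull_of_valid hv, hv.1, fun p _ q _ hpq hp hq => by
      obtain ⟨p1, p2⟩ := p
      obtain ⟨q1, q2⟩ := q
      simp only at hpq hp hq
      subst hpq
      exact hv.2 p1 p2 q2 hp hq⟩

lemma validF_eq_VF : ValidF n = ↑(VF n) := by
  ext f
  rw [Finset.mem_coe, mem_VF_iff]

noncomputable def kappa (f : Fin n → ℕ × ℕ) : ℕ →₀ ℕ :=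
  Finsupp.onFinset (Finset.Icc 1 n)
    (fun j => if j ∈ Finset.Icc 1 n then j * fcard f (j, 0) else 0)
    (fun j h => by by_contra hc; simp [hc] at h)

lemma kappa_apply (f : Fin n → ℕ × ℕ) (j : ℕ) :
    kappa f j = if j ∈ Finset.Icc 1 n then j * fcard f (j, 0) else 0 :=
  Finsupp.onFinset_apply

lemma sum_ite_range {j : ℕ} (c : ℕ) (hj : j ≤ n) :
    ∑ r ∈ Finset.range n, (if r < j then c else 0) = j * c := by
  rw [Finset.sum_ite, Finset.sum_const_zero, add_zero, Finset.sum_const, smul_eq_mul]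
  congr 1
  have : (Finset.range n).filter (fun r => r < j) = Finset.range j := by
    ext r
    simp only [Finset.mem_filter, Finset.mem_range]
    omega
  rw [this, Finset.card_range]

lemma inner_sum {f : Fin n → ℕ × ℕ} (hv : f ∈ ValidF n) {j : ℕ} (hj : j ∈ Finset.Icc 1 n) :
    ∑ r ∈ Finset.range n, fcard f (j, r) = j * fcard f (j, 0) := by
  rw [Finset.mem_Icc] at hj
  have hstep : ∀ r ∈ Finset.range n, fcard f (j, r) = if r < j then fcard f (j, 0) else 0 := by
    intro r _
    by_cases hr : r < j
    · rw [if_pos hr]; exact hv.2 j r 0 hr (by omega)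
    · rw [if_neg hr, fcard, Finset.card_eq_zero, Finset.filter_eq_empty_iff]
      intro i' _ hfi
      have h1 := hv.1 i'
      rw [hfi] at h1
      simp only at h1
      omega
  rw [Finset.sum_congr rfl hstep, sum_ite_range _ (by omega)]

lemma sum_kappa {f : Fin n → ℕ × ℕ} (hv : f ∈ ValidF n) :
    ∑ j ∈ Finset.Icc 1 n, j * fcard f (j, 0) = n := by
  have hcard : (Finset.univ : Finset (Fin n)).card = ∑ p ∈ sFull n,
      (Finset.univ.filter fun i => f i = p).card :=
    Finset.card_eq_sum_card_fiberwise (fun i _ => mem_sFull_of_valid hv i)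
  have h2 : ∑ p ∈ sFull n, (Finset.univ.filter fun i => f i = p).card
      = ∑ j ∈ Finset.Icc 1 n, ∑ r ∈ Finset.range n, fcard f (j, r) := by
    rw [sFull, Finset.sum_product]
    rfl
  rw [← Finset.sum_congr rfl (fun j hj => inner_sum hv hj), ← h2, ← hcard]
  simp

lemma kappa_mem {f : Fin n → ℕ × ℕ} (hv : f ∈ ValidF n) :
    kappa f ∈ (Finset.finsuppAntidiag (Finset.Icc 1 n) n).filter
      (fun d : ℕ →₀ ℕ => ∀ j ∈ Finset.Icc 1 n, j ∣ d j) := by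
  rw [Finset.mem_filter, Finset.mem_finsuppAntidiag]
  refine ⟨⟨?_, ?_⟩, ?_⟩
  · rw [Finset.sum_congr rfl (fun j hj => by rw [kappa_apply, if_pos hj])]
    exact sum_kappa hv
  · intro j hj
    simp only [Finsupp.mem_support_iff, kappa_apply] at hj
    by_contra hc
    rw [if_neg hc] at hj
    exact hj rfl
  · intro j hj
    rw [kappa_apply, if_pos hj]
    exact Dvd.intro _ rfl

lemma slice_eq (hn : 1 ≤ n) {d : ℕ →₀ ℕ}
    (hd : d ∈ (Finset.finsuppAntidiag (Finset.Icc 1 n) n).filter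
      (fun d : ℕ →₀ ℕ => ∀ j ∈ Finset.Icc 1 n, j ∣ d j)) :
    (VF n).filter (fun f => kappa f = d)
      = (Fintype.piFinset fun _ : Fin n => sFull n).filter fun f =>
          ∀ p ∈ sFull n, (Finset.univ.filter fun a => f a = p).card
            = (fun p : ℕ × ℕ => if p.2 < p.1 then d p.1 / p.1 else 0) p := by
  obtain ⟨hd1, hd2⟩ := Finset.mem_filter.1 hd
  rw [Finset.mem_finsuppAntidiag] at hd1
  ext f
  rw [Finset.mem_filter, Finset.mem_filter, Fintype.mem_piFinset]
  constructor
  · rintro ⟨hVF, hkap⟩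
    have hv : f ∈ ValidF n := mem_VF_iff.1 hVF
    refine ⟨mem_sFull_of_valid hv, ?_⟩
    intro p hp
    obtain ⟨j, r⟩ := p
    rw [sFull, Finset.mem_product, Finset.mem_Icc, Finset.mem_range] at hp
    simp only
    by_cases hr : r < j
    · rw [if_pos hr]
      have h1 : fcard f (j, r) = fcard f (j, 0) := hv.2 j r 0 hr (by omega)
      have h2 : d j = j * fcard f (j, 0) := by
        rw [← hkap, kappa_apply, if_pos (Finset.mem_Icc.2 ⟨hp.1.1, hp.1.2⟩)]
      rw [h2, Nat.mul_div_cancel_left _ (by omega : 0 < j)]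
      exact h1
    · rw [if_neg hr, Finset.card_eq_zero, Finset.filter_eq_empty_iff]
      intro i' _ hfi
      have h1 := hv.1 i'
      rw [hfi] at h1
      simp only at h1
      omega
  · rintro ⟨hpi, hfib⟩
    have hc1 : ∀ i, (f i).2 < (f i).1 := by
      intro i
      by_contra hc
      have h0 := hfib (f i) (hpi i)
      simp only [if_neg hc] at h0
      rw [Finset.card_eq_zero, Finset.filter_eq_empty_iff] at h0
      exact h0 (Finset.mem_univ i) rfl
    have hVF : f ∈ VF n := by
      rw [VF, Finset.mem_filter, Fintype.mem_piFinset]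
      refine ⟨hpi, hc1, ?_⟩
      intro p hp q hq hpq hp2 hq2
      have h1 := hfib p hp
      have h2 := hfib q hq
      simp only [if_pos hp2, if_pos hq2] at h1 h2
      rw [fcard, fcard, h1, h2, hpq]
    refine ⟨hVF, ?_⟩
    ext j
    rw [kappa_apply]
    by_cases hj : j ∈ Finset.Icc 1 n
    · rw [if_pos hj]
      have h0 : ((j : ℕ), 0) ∈ sFull n := by
        rw [sFull, Finset.mem_product, Finset.mem_range]
        exact ⟨hj, by omega⟩
      have h1 := hfib (j, 0) h0
      have hjpos : 0 < j := by rw [Finset.mem_Icc] at hj; omega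
      simp only [if_pos hjpos] at h1
      rw [fcard, h1, Nat.mul_div_cancel' (hd2 j hj)]
    · rw [if_neg hj]
      by_contra hc
      exact hj (hd1.2 (Finsupp.mem_support_iff.2 fun h => hc h.symm))

lemma card_VF (hn : 1 ≤ n) : (VF n).card
    = ∑ d ∈ (Finset.finsuppAntidiag (Finset.Icc 1 n) n).filter
        (fun d : ℕ →₀ ℕ => ∀ j ∈ Finset.Icc 1 n, j ∣ d j),
      Nat.multinomial (sFull n) (fun p => if p.2 < p.1 then d p.1 / p.1 else 0) := by
  rw [Finset.card_eq_sum_card_fiberwise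
    (f := kappa) (fun f hf => kappa_mem (mem_VF_iff.1 hf))]
  apply Finset.sum_congr rfl
  intro d hd
  rw [slice_eq hn hd]
  apply count_fibers
  -- sum condition
  obtain ⟨hd1, hd2⟩ := Finset.mem_filter.1 hd
  rw [Finset.mem_finsuppAntidiag] at hd1
  rw [Fintype.card_fin]
  rw [sFull, Finset.sum_product]
  calc ∑ j ∈ Finset.Icc 1 n, ∑ r ∈ Finset.range n,
        (fun p : ℕ × ℕ => if p.2 < p.1 then d p.1 / p.1 else 0) (j, r)
      = ∑ j ∈ Finset.Icc 1 n, j * (d j / j) := by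
        apply Finset.sum_congr rfl
        intro j hj
        rw [Finset.mem_Icc] at hj
        have hb : ∀ r ∈ Finset.range n,
            (fun p : ℕ × ℕ => if p.2 < p.1 then d p.1 / p.1 else 0) (j, r)
              = if r < j then d j / j else 0 := fun r _ => rfl
        rw [Finset.sum_congr rfl hb]
        exact sum_ite_range _ (by omega)
    _ = ∑ j ∈ Finset.Icc 1 n, d j := by
        apply Finset.sum_congr rfl
        intro j hj
        exact Nat.mul_div_cancel' (hd2 j hj)
    _ = n := hd1.1

lemma multinomial_cast (hn : 1 ≤ n) {d : ℕ →₀ ℕ}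
    (hd : d ∈ (Finset.finsuppAntidiag (Finset.Icc 1 n) n).filter
      (fun d : ℕ →₀ ℕ => ∀ j ∈ Finset.Icc 1 n, j ∣ d j)) :
    (Nat.multinomial (sFull n) (fun p => if p.2 < p.1 then d p.1 / p.1 else 0) : ℚ)
      = (n ! : ℚ) * ∏ j ∈ Finset.Icc 1 n, ((1 : ℚ) / ((d j / j)! : ℚ) ^ j) := by
  obtain ⟨hd1, hd2⟩ := Finset.mem_filter.1 hd
  rw [Finset.mem_finsuppAntidiag] at hd1
  have hspec := Nat.multinomial_spec (sFull n) (fun p => if p.2 < p.1 then d p.1 / p.1 else 0)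
  have hsum : ∑ p ∈ sFull n, (fun p : ℕ × ℕ => if p.2 < p.1 then d p.1 / p.1 else 0) p = n := by
    rw [sFull, Finset.sum_product]
    calc ∑ j ∈ Finset.Icc 1 n, ∑ r ∈ Finset.range n,
          (fun p : ℕ × ℕ => if p.2 < p.1 then d p.1 / p.1 else 0) (j, r)
        = ∑ j ∈ Finset.Icc 1 n, j * (d j / j) := by
          apply Finset.sum_congr rfl
          intro j hj
          rw [Finset.mem_Icc] at hj
          have hb : ∀ r ∈ Finset.range n,
              (fun p : ℕ × ℕ => if p.2 < p.1 then d p.1 / p.1 else 0) (j, r)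
                = if r < j then d j / j else 0 := fun r _ => rfl
          rw [Finset.sum_congr rfl hb]
          exact sum_ite_range _ (by omega)
      _ = ∑ j ∈ Finset.Icc 1 n, d j := by
          apply Finset.sum_congr rfl
          intro j hj
          exact Nat.mul_div_cancel' (hd2 j hj)
      _ = n := hd1.1
  have hprod : (∏ p ∈ sFull n, ((fun p : ℕ × ℕ => if p.2 < p.1 then d p.1 / p.1 else 0) p)!)
      = ∏ j ∈ Finset.Icc 1 n, ((d j / j)!) ^ j := by
    rw [sFull, Finset.prod_product]
    apply Finset.prod_congr rfl
    intro j hj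
    rw [Finset.mem_Icc] at hj
    have hstep : ∀ r ∈ Finset.range n,
        ((if r < j then d j / j else 0) : ℕ)! = if r < j then (d j / j)! else 1 := by
      intro r _
      split_ifs <;> simp
    rw [Finset.prod_congr rfl hstep, Finset.prod_ite, Finset.prod_const_one, mul_one,
      Finset.prod_const]
    congr 1
    have : (Finset.range n).filter (fun r => r < j) = Finset.range j := by
      ext r
      simp only [Finset.mem_filter, Finset.mem_range]
      omega
    rw [this, Finset.card_range]
  rw [hsum, hprod] at hspec
  have hCpos : 0 < ∏ j ∈ Finset.Icc 1 n, ((d j / j)!) ^ j :=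
    Finset.prod_pos fun j _ => pow_pos (Nat.factorial_pos _) j
  have hcast : ((∏ j ∈ Finset.Icc 1 n, ((d j / j)!) ^ j : ℕ) : ℚ)
      * (Nat.multinomial (sFull n) (fun p => if p.2 < p.1 then d p.1 / p.1 else 0) : ℚ)
      = (n ! : ℚ) := by
    exact_mod_cast congrArg (Nat.cast (R := ℚ)) hspec
  have hCne : ((∏ j ∈ Finset.Icc 1 n, ((d j / j)!) ^ j : ℕ) : ℚ) ≠ 0 :=
    Nat.cast_ne_zero.2 hCpos.ne'
  have h2 : ∏ j ∈ Finset.Icc 1 n, ((1 : ℚ) / ((d j / j)! : ℚ) ^ j)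
      = 1 / ((∏ j ∈ Finset.Icc 1 n, ((d j / j)!) ^ j : ℕ) : ℚ) := by
    push_cast
    rw [Finset.prod_div_distrib]
    simp
  rw [h2, mul_one_div, eq_div_iff hCne, mul_comm]
  exact_mod_cast hspec

end BPAux

namespace BPAux
open Polynomial

lemma coeff_side (n : ℕ) (hn : 1 ≤ n) :
    (∏ j ∈ Finset.Icc 1 n, ∑ k ∈ Finset.range (n + 1),
        (C ((1 : ℚ) / (k ! : ℚ) ^ j)) * X ^ (j * k)).coeff n
      = ∑ d ∈ (Finset.finsuppAntidiag (Finset.Icc 1 n) n).filter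
          (fun d : ℕ →₀ ℕ => ∀ j ∈ Finset.Icc 1 n, j ∣ d j),
        ∏ j ∈ Finset.Icc 1 n, ((1 : ℚ) / ((d j / j)! : ℚ) ^ j) := by
  set P : ℕ → ℚ[X] := fun j => ∑ k ∈ Finset.range (n + 1),
    (C ((1 : ℚ) / (k ! : ℚ) ^ j)) * X ^ (j * k) with hP
  have h0 : (∏ j ∈ Finset.Icc 1 n, P j).coeff n
      = ∑ d ∈ Finset.finsuppAntidiag (Finset.Icc 1 n) n,
          ∏ j ∈ Finset.Icc 1 n, (P j).coeff (d j) := by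
    have h2 : ((∏ j ∈ Finset.Icc 1 n, P j : ℚ[X]) : PowerSeries ℚ)
        = ∏ j ∈ Finset.Icc 1 n, ((P j : ℚ[X]) : PowerSeries ℚ) := by
      have := map_prod (Polynomial.coeToPowerSeries.ringHom (R := ℚ)) P (Finset.Icc 1 n)
      simpa only [Polynomial.coeToPowerSeries.ringHom_apply] using this
    calc (∏ j ∈ Finset.Icc 1 n, P j).coeff n
        = PowerSeries.coeff n ((∏ j ∈ Finset.Icc 1 n, P j : ℚ[X]) : PowerSeries ℚ) :=
          (Polynomial.coeff_coe _ _).symm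
      _ = PowerSeries.coeff n (∏ j ∈ Finset.Icc 1 n, ((P j : ℚ[X]) : PowerSeries ℚ)) := by
          rw [h2]
      _ = ∑ d ∈ Finset.finsuppAntidiag (Finset.Icc 1 n) n,
            ∏ j ∈ Finset.Icc 1 n, PowerSeries.coeff (d j) ((P j : ℚ[X]) : PowerSeries ℚ) :=
          PowerSeries.coeff_prod _ _ _
      _ = ∑ d ∈ Finset.finsuppAntidiag (Finset.Icc 1 n) n,
            ∏ j ∈ Finset.Icc 1 n, (P j).coeff (d j) := by
          apply Finset.sum_congr rfl
          intro d _
          exact Finset.prod_congr rfl fun j _ => Polynomial.coeff_coe _ _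
  have hterm : ∀ d ∈ Finset.finsuppAntidiag (Finset.Icc 1 n) n, ∀ j ∈ Finset.Icc 1 n,
      (P j).coeff (d j) = if j ∣ d j then ((1 : ℚ) / ((d j / j)! : ℚ) ^ j) else 0 := by
    intro d hd j hj
    rw [Finset.mem_finsuppAntidiag] at hd
    have hdj : d j ≤ n := by
      rw [← hd.1]
      exact Finset.single_le_sum (fun _ _ => Nat.zero_le _) hj
    rw [Finset.mem_Icc] at hj
    rw [hP]
    simp only [Polynomial.finset_sum_coeff, Polynomial.coeff_C_mul, Polynomial.coeff_X_pow]
    by_cases hdvd : j ∣ d j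
    · rw [if_pos hdvd]
      rw [Finset.sum_eq_single (d j / j)]
      · rw [if_pos (Nat.mul_div_cancel' hdvd).symm, mul_one]
      · intro k _ hne
        rw [if_neg, mul_zero]
        intro heq
        apply hne
        rw [heq, Nat.mul_div_cancel_left _ (by omega : 0 < j)]
      · intro hmem
        exfalso
        apply hmem
        rw [Finset.mem_range]
        have := Nat.div_le_self (d j) j
        omega
    · rw [if_neg hdvd]
      apply Finset.sum_eq_zero
      intro k _
      rw [if_neg, mul_zero]
      intro heq
      exact hdvd ⟨k, heq⟩
  rw [h0, Finset.sum_congr rfl (fun d hd => Finset.prod_congr rfl (hterm d hd))]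
  have hsplit : ∀ d ∈ Finset.finsuppAntidiag (Finset.Icc 1 n) n,
      (∏ j ∈ Finset.Icc 1 n, if j ∣ d j then ((1 : ℚ) / ((d j / j)! : ℚ) ^ j) else 0)
        = if (∀ j ∈ Finset.Icc 1 n, j ∣ d j)
            then ∏ j ∈ Finset.Icc 1 n, ((1 : ℚ) / ((d j / j)! : ℚ) ^ j) else 0 := by
    intro d _
    by_cases hall : ∀ j ∈ Finset.Icc 1 n, j ∣ d j
    · rw [if_pos hall]
      exact Finset.prod_congr rfl fun j hj => if_pos (hall j hj)
    · rw [if_neg hall]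
      push_neg at hall
      obtain ⟨j, hj, hnd⟩ := hall
      exact Finset.prod_eq_zero hj (if_neg hnd)
  rw [Finset.sum_congr rfl hsplit, ← Finset.sum_filter]

end BPAux


open Polynomial in
/-- The coefficient of `X^n` in `∏_{j=1}^{n} (Σ_{k=0}^{n} X^{j·k} / (k!)^j)` over `ℚ`
equals `|BP_n/≡₀| / n!`, where `|BP_n/≡₀|` is the number of distinct values of `φ`
on `BP_n` (equivalently, the exponential generating function of `(|BP_n^0|)` is
`∏_{j≥1} Σ_{k≥0} (x^k/k!)^j`; parts of size `> n` and multiplicities `> n` cannot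
contribute to the coefficient of `X^n`). -/
theorem egf_bp_mod_eqzero (n : ℕ) (hn : 1 ≤ n) :
    (∏ j ∈ Finset.Icc 1 n, ∑ k ∈ Finset.range (n + 1),
        (C ((1 : ℚ) / (k ! : ℚ) ^ j)) * X ^ (j * k)).coeff n =
      (({L : List (Finset (Fin n)) |
          ∃ μ : Finset (List (Fin n)), IsBP n μ ∧ phiBP μ = L}.ncard : ℚ)) / (n ! : ℚ) := by
  have hncard : ({L : List (Finset (Fin n)) |
      ∃ μ : Finset (List (Fin n)), IsBP n μ ∧ phiBP μ = L}).ncard = (BPAux.VF n).card := by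
    rw [BPAux.image_eq, Set.ncard_image_of_injOn BPAux.psi_injOn, BPAux.validF_eq_VF,
      Set.ncard_coe_finset]
  rw [BPAux.coeff_side n hn, hncard, BPAux.card_VF hn]
  rw [Nat.cast_sum, Finset.sum_div]
  apply Finset.sum_congr rfl
  intro d hd
  rw [BPAux.multinomial_cast hn hd, mul_comm, mul_div_assoc, div_self, mul_one]
  exact Nat.cast_ne_zero.2 (Nat.factorial_pos n).ne'
end

section
/- For any two block-parallel update schedules μ, μ' ∈ BP_n, one has φ(μ) = φ(μ') if and only if for every Boolean automata network f of size n, the dynamics coincide: f^{⟨μ⟩} = f^{⟨μ'⟩}. -/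
open Finset Nat

/-- Update of the automata in block `W`: `f^{(W)}(x)_i = f_i(x)` if `i ∈ W`, else `x_i`. -/
def blockUpdate {n : ℕ} (f : Fin n → (Fin n → Bool) → Bool) (W : Finset (Fin n))
    (x : Fin n → Bool) : Fin n → Bool :=
  fun i => if i ∈ W then f i x else x i

/-- Sequential application of a list of block updates (leftmost block first). -/
def seqUpdate {n : ℕ} (f : Fin n → (Fin n → Bool) → Bool)
    (Ws : List (Finset (Fin n))) (x : Fin n → Bool) : Fin n → Bool :=
  Ws.foldl (fun y W => blockUpdate f W y) x

/-- The block-parallel dynamics `f^⟨μ⟩ = f^{(W_{ℓ−1})} ∘ ⋯ ∘ f^{(W_0)}`. -/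
def bpUpdate {n : ℕ} (f : Fin n → (Fin n → Bool) → Bool) (μ : Finset (List (Fin n))) :
    (Fin n → Bool) → (Fin n → Bool) :=
  seqUpdate f (phiBP μ)

namespace BPaux

variable {n : ℕ}

/-- The o-block containing `i` (junk if none). -/
noncomputable def blk (μ : Finset (List (Fin n))) (i : Fin n) : List (Fin n) :=
  if h : ∃ S ∈ μ, i ∈ S then h.choose else []

/-- position of `i` in its o-block -/
noncomputable def pos (μ : Finset (List (Fin n))) (i : Fin n) : ℕ := (blk μ i).idxOf i

/-- period of `i` = length of its o-block -/
noncomputable def per (μ : Finset (List (Fin n))) (i : Fin n) : ℕ := (blk μ i).length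

variable {μ : Finset (List (Fin n))}

lemma exists_mem (hμ : IsBP n μ) (i : Fin n) : ∃ S ∈ μ, i ∈ S := by
  have h1 := hμ.2 i
  have : ∃ S ∈ μ, S.count i ≠ 0 := by
    by_contra hc
    push_neg at hc
    have : (μ.sum fun S => S.count i) = 0 := Finset.sum_eq_zero hc
    omega
  obtain ⟨S, hS, hc⟩ := this
  exact ⟨S, hS, List.count_pos_iff.1 (Nat.pos_of_ne_zero hc)⟩

lemma blk_mem (hμ : IsBP n μ) (i : Fin n) : blk μ i ∈ μ := by
  rw [blk, dif_pos (exists_mem hμ i)]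
  exact (exists_mem hμ i).choose_spec.1

lemma mem_blk (hμ : IsBP n μ) (i : Fin n) : i ∈ blk μ i := by
  rw [blk, dif_pos (exists_mem hμ i)]
  exact (exists_mem hμ i).choose_spec.2

lemma count_le_one (hμ : IsBP n μ) (S : List (Fin n)) (hS : S ∈ μ) (i : Fin n) : S.count i ≤ 1 := by
  have h1 := hμ.2 i
  calc S.count i ≤ μ.sum fun S => S.count i :=
        Finset.single_le_sum (fun _ _ => Nat.zero_le _) hS
  _ = 1 := h1

lemma nodup_of_mem (hμ : IsBP n μ) (S : List (Fin n)) (hS : S ∈ μ) : S.Nodup :=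
  List.nodup_iff_count_le_one.2 fun a => count_le_one hμ S hS a

lemma eq_blk (hμ : IsBP n μ) {S : List (Fin n)} (hS : S ∈ μ) {i : Fin n} (hi : i ∈ S) : S = blk μ i := by
  by_contra hne
  have h2 : ({S, blk μ i} : Finset (List (Fin n))).sum (fun S => S.count i) ≤
      μ.sum fun S => S.count i := by
    apply Finset.sum_le_sum_of_subset
    intro T hT
    simp only [Finset.mem_insert, Finset.mem_singleton] at hT
    rcases hT with rfl | rfl
    · exact hS
    · exact blk_mem hμ i
  rw [Finset.sum_pair hne] at h2
  have c1 : 1 ≤ S.count i := List.count_pos_iff.2 hi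
  have c2 : 1 ≤ (blk μ i).count i := List.count_pos_iff.2 (mem_blk hμ i)
  have := hμ.2 i
  omega

lemma per_pos (hμ : IsBP n μ) (i : Fin n) : 0 < per μ i := by
  have := hμ.1 _ (blk_mem hμ i)
  simpa [per, List.length_pos_iff] using this

lemma pos_lt (hμ : IsBP n μ) (i : Fin n) : pos μ i < per μ i :=
  List.idxOf_lt_length_iff.2 (mem_blk hμ i)

lemma getElem_blk (hμ : IsBP n μ) (i : Fin n) : (blk μ i)[pos μ i]'(pos_lt hμ i) = i :=
  List.getElem_idxOf _

lemma per_dvd (hμ : IsBP n μ) (i : Fin n) : per μ i ∣ bpLen μ := Finset.dvd_lcm (blk_mem hμ i)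

lemma bpLen_pos (hμ : IsBP n μ) : 0 < bpLen μ := by
  rw [Nat.pos_iff_ne_zero]
  intro h0
  rw [bpLen, Finset.lcm_eq_zero_iff] at h0
  obtain ⟨S, hS, hlen⟩ := h0
  exact hμ.1 S hS (List.length_eq_zero_iff.1 hlen)

lemma mem_blockAt (hμ : IsBP n μ) {i : Fin n} {t : ℕ} :
    i ∈ blockAt μ t ↔ t % per μ i = pos μ i := by
  constructor
  · intro h
    rw [blockAt, Finset.mem_biUnion] at h
    obtain ⟨S, hS, hi⟩ := h
    rw [Option.mem_toFinset, Option.mem_def] at hi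
    have hlt : t % S.length < S.length := by
      apply Nat.mod_lt
      have := hμ.1 S hS
      exact List.length_pos_iff.2 this
    rw [List.getElem?_eq_getElem hlt] at hi
    have hmem : i ∈ S := by
      rw [← Option.some_inj.1 hi]; exact List.getElem_mem _
    have hSeq : S = blk μ i := eq_blk hμ hS hmem
    subst hSeq
    have heq := (Option.some_inj.1 hi).trans (getElem_blk hμ i).symm
    exact ((nodup_of_mem hμ _ hS).getElem_inj_iff).1 heq
  · intro h
    rw [blockAt, Finset.mem_biUnion]
    refine ⟨blk μ i, blk_mem hμ i, ?_⟩
    rw [Option.mem_toFinset, Option.mem_def]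
    have hlt : t % per μ i < per μ i := Nat.mod_lt _ (per_pos hμ i)
    rw [show t % (blk μ i).length = pos μ i from h]
    rw [List.getElem?_eq_getElem (pos_lt hμ i)]
    rw [getElem_blk hμ i]


/-! ### trajectories -/

def traj (f : Fin n → (Fin n → Bool) → Bool) (ν : Finset (List (Fin n)))
    (x : Fin n → Bool) (t : ℕ) : Fin n → Bool :=
  seqUpdate f ((List.range t).map (blockAt ν)) x

lemma traj_zero (f) (ν : Finset (List (Fin n))) (x) : traj f ν x 0 = x := rfl

lemma traj_succ (f) (ν : Finset (List (Fin n))) (x) (t : ℕ) :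
    traj f ν x (t + 1) = blockUpdate f (blockAt ν t) (traj f ν x t) := by
  unfold traj seqUpdate
  rw [List.range_succ, List.map_append, List.foldl_append]
  rfl

lemma bpUpdate_eq_traj (f) (ν : Finset (List (Fin n))) (x) :
    bpUpdate f ν x = traj f ν x (bpLen ν) := rfl

/-- compute a trajectory from a closed-form invariant -/
lemma traj_eq_of_step (f) (ν : Finset (List (Fin n))) (g : ℕ → Fin n → Bool)
    (hs : ∀ t, blockUpdate f (blockAt ν t) (g t) = g (t + 1)) :
    ∀ t, traj f ν (g 0) t = g t := by
  intro t
  induction t with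
  | zero => rfl
  | succ t ih => rw [traj_succ, ih, hs t]

/-- two schedules that agree on blocks below `u` have equal trajectories up to `u` -/
lemma traj_eq_traj (f) (ν ν' : Finset (List (Fin n))) (x) (u : ℕ)
    (h : ∀ t < u, blockAt ν t = blockAt ν' t) :
    ∀ t ≤ u, traj f ν x t = traj f ν' x t := by
  intro t ht
  induction t with
  | zero => rfl
  | succ t ih =>
      rw [traj_succ, traj_succ, ih (by omega), h t (by omega)]

/-- persistence of a monotonically-latched coordinate -/
lemma traj_persist (f) (ν : Finset (List (Fin n))) (x) (i : Fin n)
    (hf : ∀ y : Fin n → Bool, y i = true → f i y = true)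
    {t : ℕ} (ht : traj f ν x t i = true) :
    ∀ s, t ≤ s → traj f ν x s i = true := by
  intro s hs
  induction s with
  | zero => exact (Nat.le_zero.1 hs) ▸ ht
  | succ s ih =>
      rcases Nat.lt_or_ge t (s+1) with hlt | hge
      · have hst := ih (by omega)
        rw [traj_succ, blockUpdate]
        split
        · exact hf _ hst
        · exact hst
      · exact (Nat.le_antisymm hs hge) ▸ ht


lemma pos_le_of_memt (hν : IsBP n ν) {i : Fin n} {t : ℕ} (h : t % per ν i = pos ν i) :
    pos ν i ≤ t := h ▸ Nat.mod_le t _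

lemma pos_mod (hν : IsBP n ν) (i : Fin n) : pos ν i % per ν i = pos ν i :=
  Nat.mod_eq_of_lt (pos_lt hν i)

lemma pos_lt_bpLen (hν : IsBP n ν) (i : Fin n) : pos ν i < bpLen ν :=
  lt_of_lt_of_le (pos_lt hν i) (Nat.le_of_dvd (bpLen_pos hν) (per_dvd hν i))

/-! ### the order gadget -/

def fO (a b : Fin n) : Fin n → (Fin n → Bool) → Bool :=
  fun k => if k = a then fun _ => true else if k = b then fun x => x b && x a else fun x => x k

lemma gadgetO {ν : Finset (List (Fin n))} (hν : IsBP n ν) (a b : Fin n) (hab : a ≠ b) :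
    bpUpdate (fO a b) ν (fun k => decide (k = b)) b = decide (pos ν a < pos ν b) := by
  have hg := traj_eq_of_step (fO a b) ν
      (fun t j => if j = a then decide (pos ν a < t)
        else if j = b then decide (t ≤ pos ν b ∨ pos ν a < pos ν b) else decide (j = b)) ?step
  case step =>
    intro t
    funext j
    simp only [blockUpdate]
    by_cases hja : j = a
    · subst hja
      simp only [if_pos rfl, fO, if_neg hab]
      by_cases hmem : j ∈ blockAt ν t
      · have hle := pos_le_of_memt hν ((mem_blockAt hν).1 hmem)
        simp [hmem, decide_eq_true_eq]
        omega
      · have hne : t ≠ pos ν j := by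
          intro hteq
          exact hmem ((mem_blockAt hν).2 (hteq ▸ pos_mod hν j))
        simp only [if_neg hmem]
        apply decide_eq_decide.2
        omega
    · by_cases hjb : j = b
      · subst hjb
        simp only [if_neg hja, if_pos rfl, fO, if_neg hja, if_pos rfl]
        by_cases hmem : j ∈ blockAt ν t
        · have hle := pos_le_of_memt hν ((mem_blockAt hν).1 hmem)
          have hba : ¬ (j = a) := hja
          simp only [if_pos hmem, if_neg hba, if_pos rfl]
          simp only [if_true]
          rw [if_neg hba] <;> try rfl
          rw [← Bool.decide_and]
          exact decide_eq_decide.2 (by omega)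
        · have hne : t ≠ pos ν j := by
            intro hteq
            exact hmem ((mem_blockAt hν).2 (hteq ▸ pos_mod hν j))
          simp only [if_neg hmem]
          apply decide_eq_decide.2
          omega
      · simp only [if_neg hja, if_neg hjb, fO]
        by_cases hmem : j ∈ blockAt ν t <;> simp [hmem, hja, hjb]
  have hx : (fun k => decide (k = b)) =
      (fun j => if j = a then decide (pos ν a < 0)
        else if j = b then decide (0 ≤ pos ν b ∨ pos ν a < pos ν b) else decide (j = b)) := by
    funext j
    by_cases hja : j = a
    · subst hja; simp [hab]
    · by_cases hjb : j = b <;> simp [hja, hjb, Ne.symm hab]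
  rw [bpUpdate_eq_traj, hx, hg (bpLen ν)]
  simp only [if_neg hab.symm, if_pos rfl]
  apply decide_eq_decide.2
  have := pos_lt_bpLen hν b
  omega


lemma pos_of_getElem (hν : IsBP n ν) {S : List (Fin n)} (hS : S ∈ ν) {v : ℕ}
    (hv : v < S.length) :
    pos ν (S[v]'hv) = v ∧ per ν (S[v]'hv) = S.length := by
  have hm : S[v]'hv ∈ S := List.getElem_mem hv
  have hb : S = blk ν (S[v]'hv) := eq_blk hν hS hm
  constructor
  · show (blk ν (S[v]'hv)).idxOf (S[v]'hv) = v
    rw [← hb]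
    have h1 : S.idxOf (S[v]'hv) < S.length := List.idxOf_lt_length_iff.2 hm
    have h2 : S[S.idxOf (S[v]'hv)]'h1 = S[v]'hv := List.getElem_idxOf h1
    exact ((nodup_of_mem hν S hS).getElem_inj_iff).1 h2
  · show (blk ν (S[v]'hv)).length = S.length
    rw [← hb]

lemma pos_eq_of_dyn {μ μ' : Finset (List (Fin n))} (hμ : IsBP n μ) (hμ' : IsBP n μ')
    (hdyn : ∀ f, bpUpdate f μ = bpUpdate f μ') : ∀ i, pos μ i = pos μ' i := by
  have hord : ∀ a b : Fin n, a ≠ b → (pos μ a < pos μ b ↔ pos μ' a < pos μ' b) := by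
    intro a b hab
    have h1 := gadgetO hμ a b hab
    have h2 := gadgetO hμ' a b hab
    rw [hdyn (fO a b)] at h1
    rw [h1] at h2
    exact decide_eq_decide.1 h2
  have main : ∀ v, ∀ i, min (pos μ i) (pos μ' i) = v → pos μ i = pos μ' i := by
    intro v
    induction v using Nat.strong_induction_on with
    | _ v ih =>
      intro i hv
      by_contra hne
      rcases Nat.lt_or_ge (pos μ i) (pos μ' i) with hlt | hge
      · have hvv : pos μ i = v := by omega
        have hvlt : v < (blk μ' i).length := by
          have h1 := pos_lt hμ' i
          have : v < pos μ' i := by omega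
          exact lt_trans this h1
        have hk := pos_of_getElem hμ' (blk_mem hμ' i) hvlt
        have hkj : (blk μ' i)[v]'hvlt ≠ i := by
          intro h
          rw [h] at hk
          omega
        have hlt2 : pos μ' ((blk μ' i)[v]'hvlt) < pos μ' i := by omega
        have h2 : pos μ ((blk μ' i)[v]'hvlt) < pos μ i := (hord _ i hkj).2 hlt2
        have := ih (min (pos μ ((blk μ' i)[v]'hvlt)) (pos μ' ((blk μ' i)[v]'hvlt)))
          (by omega) ((blk μ' i)[v]'hvlt) rfl
        omega
      · have hlt' : pos μ' i < pos μ i := by omega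
        have hvv : pos μ' i = v := by omega
        have hvlt : v < (blk μ i).length := by
          have h1 := pos_lt hμ i
          have : v < pos μ i := by omega
          exact lt_trans this h1
        have hk := pos_of_getElem hμ (blk_mem hμ i) hvlt
        have hkj : (blk μ i)[v]'hvlt ≠ i := by
          intro h
          rw [h] at hk
          omega
        have hlt2 : pos μ ((blk μ i)[v]'hvlt) < pos μ i := by omega
        have h2 : pos μ' ((blk μ i)[v]'hvlt) < pos μ' i := (hord _ i hkj).1 hlt2
        have := ih (min (pos μ ((blk μ i)[v]'hvlt)) (pos μ' ((blk μ i)[v]'hvlt)))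
          (by omega) ((blk μ i)[v]'hvlt) rfl
        omega
  intro i
  exact main _ i rfl


/-! ### counting blocks by length -/

lemma card_blocks (hν : IsBP n ν) (v : ℕ) :
    (ν.filter fun S => v < S.length).card =
      (Finset.univ.filter fun j : Fin n => pos ν j = v).card := by
  refine Finset.card_bij (fun S hS => S[v]'((Finset.mem_filter.1 hS).2)) ?_ ?_ ?_
  · intro S hS
    rw [Finset.mem_filter]
    exact ⟨Finset.mem_univ _, (pos_of_getElem hν (Finset.mem_filter.1 hS).1
      (Finset.mem_filter.1 hS).2).1⟩
  · intro S1 hS1 S2 hS2 heq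
    have h1 := eq_blk hν (Finset.mem_filter.1 hS1).1
      (List.getElem_mem (Finset.mem_filter.1 hS1).2)
    rw [heq] at h1
    have h2 := eq_blk hν (Finset.mem_filter.1 hS2).1
      (List.getElem_mem (Finset.mem_filter.1 hS2).2)
    rw [h1]
    exact h2.symm
  · intro j hj
    have hjv : pos ν j = v := (Finset.mem_filter.1 hj).2
    subst hjv
    have hvlt : pos ν j < (blk ν j).length := pos_lt hν j
    exact ⟨blk ν j, Finset.mem_filter.2 ⟨blk_mem hν j, hvlt⟩, getElem_blk hν j⟩

lemma exists_blk_len {μ μ' : Finset (List (Fin n))} (hμ : IsBP n μ) (hμ' : IsBP n μ')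
    (hpos : ∀ j, pos μ j = pos μ' j) (i : Fin n) :
    ∃ S' ∈ μ', S'.length = per μ i := by
  set d := per μ i with hd
  have hd1 : 1 ≤ d := per_pos hμ i
  have hsub : ∀ (ν : Finset (List (Fin n))),
      (ν.filter fun S => d < S.length) ⊆ (ν.filter fun S => d - 1 < S.length) := by
    intro ν S hS
    rw [Finset.mem_filter] at *
    exact ⟨hS.1, by omega⟩
  have hcards : ∀ w, (μ.filter fun S => w < S.length).card =
      (μ'.filter fun S => w < S.length).card := by
    intro w
    rw [card_blocks hμ, card_blocks hμ']
    congr 1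
    simp [hpos]
  have hlen : (blk μ i).length = d := rfl
  have hssub : (μ.filter fun S => d < S.length) ⊂ (μ.filter fun S => d - 1 < S.length) := by
    refine Finset.ssubset_iff_of_subset (hsub μ) |>.2 ?_
    refine ⟨blk μ i, Finset.mem_filter.2 ⟨blk_mem hμ i, by omega⟩, ?_⟩
    rw [Finset.mem_filter]
    push_neg
    intro _
    omega
  have hlt := Finset.card_lt_card hssub
  rw [hcards d, hcards (d-1)] at hlt
  by_contra hno
  push_neg at hno
  have : (μ'.filter fun S => d - 1 < S.length) ⊆ (μ'.filter fun S => d < S.length) := by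
    intro S hS
    rw [Finset.mem_filter] at *
    refine ⟨hS.1, ?_⟩
    have := hno S hS.1
    omega
  have := Finset.card_le_card this
  omega

/-! ### agreement of early blocks -/

lemma eq_pos_of_mod {p d t u : ℕ} (hp : p < d) (ht : t % d = p) (hu : t < u)
    (hud : u ≤ p + d) : t = p := by
  have hdm := Nat.div_add_mod t d
  rw [ht] at hdm
  rcases Nat.eq_zero_or_pos (t / d) with h0 | h1
  · rw [h0, Nat.mul_zero] at hdm
    omega
  · have : d * 1 ≤ d * (t / d) := Nat.mul_le_mul_left d h1
    omega

lemma blockAt_eq_low {μ μ' : Finset (List (Fin n))} (hμ : IsBP n μ) (hμ' : IsBP n μ')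
    (hpos : ∀ j, pos μ j = pos μ' j) (u : ℕ)
    (hmin : ∀ j, per μ j ≠ per μ' j → u ≤ pos μ j + min (per μ j) (per μ' j)) :
    ∀ t < u, blockAt μ t = blockAt μ' t := by
  intro t ht
  ext j
  rw [mem_blockAt hμ, mem_blockAt hμ']
  by_cases hper : per μ j = per μ' j
  · rw [hper, hpos j]
  · have hm := hmin j hper
    constructor
    · intro h
      have ht2 : t = pos μ j := eq_pos_of_mod (pos_lt hμ j) h ht (by omega)
      rw [ht2, hpos j]
      exact pos_mod hμ' j
    · intro h
      have hplt := pos_lt hμ' j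
      have ht2 : t = pos μ' j := eq_pos_of_mod hplt h ht (by
        have := hpos j
        omega)
      rw [ht2, ← hpos j]
      exact pos_mod hμ j


lemma mod_self_or_ge {p d t : ℕ} (hp : p < d) (ht : t % d = p) : t = p ∨ p + d ≤ t := by
  have hdm := Nat.div_add_mod t d
  rw [ht] at hdm
  rcases Nat.eq_zero_or_pos (t / d) with h0 | h1
  · rw [h0, Nat.mul_zero] at hdm
    omega
  · have : d * 1 ≤ d * (t / d) := Nat.mul_le_mul_left d h1
    omega

lemma keyB1 {μ μ' : Finset (List (Fin n))} (hμ : IsBP n μ) (hμ' : IsBP n μ')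
    (hdyn : ∀ f, bpUpdate f μ = bpUpdate f μ')
    (hpos : ∀ j, pos μ j = pos μ' j) (i : Fin n)
    (hlt : per μ i < per μ' i) (hd2 : 2 ≤ per μ i)
    (hmin : ∀ j, per μ j ≠ per μ' j →
      pos μ i + per μ i ≤ pos μ j + min (per μ j) (per μ' j)) : False := by
  have hqd : pos μ i < per μ i := pos_lt hμ i
  have hqe : pos μ i < per μ' i := by
    have := pos_lt hμ' i
    rw [← hpos i] at this
    exact this
  -- the helper node b at position q+1 in i's μ'-block
  have hq1e : pos μ i + 1 < (blk μ' i).length := by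
    show pos μ i + 1 < per μ' i
    omega
  obtain ⟨b, hbdef⟩ : ∃ b, (blk μ' i)[pos μ i + 1]'hq1e = b := ⟨_, rfl⟩
  have hb := pos_of_getElem hμ' (blk_mem hμ' i) hq1e
  rw [hbdef] at hb
  have hbposs : pos μ' b = pos μ i + 1 := hb.1
  have hbper : per μ' b = per μ' i := hb.2
  -- the helper node c at position q in a μ'-block of length d
  obtain ⟨S', hS', hS'len⟩ := exists_blk_len hμ hμ' hpos i
  have hqS' : pos μ i < S'.length := by omega
  obtain ⟨c, hcdef⟩ : ∃ c, S'[pos μ i]'hqS' = c := ⟨_, rfl⟩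
  have hc := pos_of_getElem hμ' hS' hqS'
  rw [hcdef] at hc
  have hcposs : pos μ' c = pos μ i := hc.1
  have hcper : per μ' c = per μ i := by rw [hc.2, hS'len]
  have hbi : b ≠ i := by
    intro h
    rw [h, ← hpos i] at hbposs
    omega
  have hci : c ≠ i := by
    intro h
    rw [h] at hcper
    omega
  have hcb : c ≠ b := by
    intro h
    rw [h, hbposs] at hcposs
    omega
  -- the network
  set f : Fin n → (Fin n → Bool) → Bool :=
    fun k => if k = i then (fun x => x i || (x b && !(x c)))
      else if k = b then (fun _ => true)
      else if k = c then (fun x => x c || x b)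
      else (fun x => x k) with hfdef
  set g : ℕ → Fin n → Bool :=
    fun t j => if j = b then decide (pos μ i + 1 < t)
      else if j = c then decide (pos μ i + per μ i < t)
      else false with hgdef
  have hfi : ∀ x, f i x = (x i || (x b && !(x c))) := by
    intro x; simp [hfdef]
  have hfb : ∀ x, f b x = true := by
    intro x; simp [hfdef, hbi]
  have hfc : ∀ x, f c x = (x c || x b) := by
    intro x; simp [hfdef, hci, hcb]
  have hfo : ∀ x (j : Fin n), j ≠ i → j ≠ b → j ≠ c → f j x = x j := by
    intro x j h1 h2 h3; simp [hfdef, h1, h2, h3]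
  have hgb : ∀ t, g t b = decide (pos μ i + 1 < t) := by
    intro t; simp [hgdef]
  have hgc : ∀ t, g t c = decide (pos μ i + per μ i < t) := by
    intro t; simp [hgdef, hcb]
  have hgo : ∀ t (j : Fin n), j ≠ b → j ≠ c → g t j = false := by
    intro t j h1 h2; simp [hgdef, h1, h2]
  have hgi : ∀ t, g t i = false :=
    fun t => hgo t i (fun h => hbi h.symm) (fun h => hci h.symm)
  have hstep : ∀ t, blockUpdate f (blockAt μ' t) (g t) = g (t + 1) := by
    intro t
    funext j
    simp only [blockUpdate]
    by_cases hjb : j = b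
    · rw [hjb, hgb (t+1), hgb t]
      by_cases hmem : b ∈ blockAt μ' t
      · have h2 := (mem_blockAt hμ').1 hmem
        rw [hbposs] at h2
        have hle : pos μ i + 1 ≤ t := h2 ▸ Nat.mod_le t _
        rw [if_pos hmem, hfb]
        exact (decide_eq_true (show pos μ i + 1 < t + 1 by omega)).symm
      · have hne : t ≠ pos μ i + 1 := by
          intro hteq
          apply hmem
          rw [mem_blockAt hμ', hbposs, hbper, hteq]
          exact Nat.mod_eq_of_lt (by omega)
        rw [if_neg hmem]
        exact decide_eq_decide.2 (by omega)
    · by_cases hjc : j = c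
      · rw [hjc, hgc (t+1), hgc t]
        by_cases hmem : c ∈ blockAt μ' t
        · have h2 := (mem_blockAt hμ').1 hmem
          rw [hcposs, hcper] at h2
          have hor := mod_self_or_ge hqd h2
          rw [if_pos hmem, hfc, hgc t, hgb t, ← Bool.decide_or]
          exact decide_eq_decide.2 (by omega)
        · have hne : t ≠ pos μ i + per μ i := by
            intro hteq
            apply hmem
            rw [mem_blockAt hμ', hcposs, hcper, hteq, Nat.add_mod_right]
            exact Nat.mod_eq_of_lt hqd
          rw [if_neg hmem]
          exact decide_eq_decide.2 (by omega)
      · by_cases hji : j = i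
        · rw [hji, hgi (t+1), hgi t]
          by_cases hmem : i ∈ blockAt μ' t
          · have h2 := (mem_blockAt hμ').1 hmem
            rw [← hpos i] at h2
            have hor := mod_self_or_ge hqe h2
            rw [if_pos hmem, hfi, hgi t, hgb t, hgc t, Bool.false_or, ← decide_not,
              ← Bool.decide_and]
            exact decide_eq_false (by omega)
          · rw [if_neg hmem]
        · rw [hgo t j hjb hjc, hgo (t+1) j hjb hjc]
          by_cases hmem : j ∈ blockAt μ' t
          · rw [if_pos hmem, hfo _ j hji hjb hjc, hgo t j hjb hjc]
          · rw [if_neg hmem]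
  have hg0 : (fun _ : Fin n => false) = g 0 := by
    funext j
    by_cases hjb : j = b
    · rw [hjb, hgb]
      simp
    · by_cases hjc : j = c
      · rw [hjc, hgc]
        simp
      · rw [hgo 0 j hjb hjc]
  have htraj' : ∀ t, traj f μ' (fun _ => false) t = g t := by
    rw [hg0]
    exact traj_eq_of_step f μ' g hstep
  -- lower agreement
  have hagree : ∀ t < pos μ i + per μ i, blockAt μ t = blockAt μ' t :=
    blockAt_eq_low hμ hμ' hpos (pos μ i + per μ i) hmin
  have htraju : traj f μ (fun _ => false) (pos μ i + per μ i) = g (pos μ i + per μ i) := by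
    rw [traj_eq_traj f μ μ' _ (pos μ i + per μ i) hagree (pos μ i + per μ i) le_rfl]
    exact htraj' (pos μ i + per μ i)
  -- at substep u = q + d the automaton i fires in μ
  have hmemu : i ∈ blockAt μ (pos μ i + per μ i) := by
    rw [mem_blockAt hμ, Nat.add_mod_right]
    exact Nat.mod_eq_of_lt hqd
  have hfire : traj f μ (fun _ => false) (pos μ i + per μ i + 1) i = true := by
    rw [traj_succ]
    simp only [blockUpdate]
    rw [if_pos hmemu, htraju, hfi, hgi _, hgb _, hgc _]
    rw [decide_eq_true (show pos μ i + 1 < pos μ i + per μ i by omega),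
      decide_eq_false (show ¬ (pos μ i + per μ i < pos μ i + per μ i) by omega)]
    rfl
  have hpersist : ∀ y : Fin n → Bool, y i = true → f i y = true := by
    intro y hy
    rw [hfi, hy, Bool.true_or]
  -- the length of μ is at least u + 1
  have hdvdL : per μ i ∣ bpLen μ := per_dvd hμ i
  obtain ⟨T, hT, hTlen⟩ := exists_blk_len hμ' hμ (fun j => (hpos j).symm) i
  have hedvdL : per μ' i ∣ bpLen μ := hTlen ▸ Finset.dvd_lcm hT
  have hL2d : pos μ i + per μ i + 1 ≤ bpLen μ := by
    have hlcm : Nat.lcm (per μ i) (per μ' i) ∣ bpLen μ := Nat.lcm_dvd hdvdL hedvdL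
    have hLpos := bpLen_pos hμ
    have hlcmpos : 0 < Nat.lcm (per μ i) (per μ' i) :=
      Nat.pos_of_ne_zero (Nat.lcm_ne_zero (by omega) (by omega))
    have hle : Nat.lcm (per μ i) (per μ' i) ≤ bpLen μ := Nat.le_of_dvd hLpos hlcm
    have helcm : per μ' i ≤ Nat.lcm (per μ i) (per μ' i) :=
      Nat.le_of_dvd hlcmpos (Nat.dvd_lcm_right _ _)
    obtain ⟨m, hm⟩ := Nat.dvd_lcm_left (per μ i) (per μ' i)
    have hm2 : 2 ≤ m := by
      rcases Nat.lt_or_ge m 2 with hmm | hmm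
      · interval_cases m <;> omega
      · exact hmm
    have : per μ i * 2 ≤ per μ i * m := Nat.mul_le_mul_left _ hm2
    omega
  have hfinμ : traj f μ (fun _ => false) (bpLen μ) i = true :=
    traj_persist f μ _ i hpersist hfire (bpLen μ) hL2d
  have hfinμ' : traj f μ' (fun _ => false) (bpLen μ') i = false := by
    rw [htraj' (bpLen μ'), hgi]
  have h2 : bpUpdate f μ (fun _ => false) i = bpUpdate f μ' (fun _ => false) i := by
    rw [hdyn f]
  rw [bpUpdate_eq_traj, bpUpdate_eq_traj, hfinμ, hfinμ'] at h2
  exact absurd h2 (by simp)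



lemma keyB2 {μ μ' : Finset (List (Fin n))} (hμ : IsBP n μ) (hμ' : IsBP n μ')
    (hdyn : ∀ f, bpUpdate f μ = bpUpdate f μ')
    (hpos : ∀ j, pos μ j = pos μ' j) (i : Fin n)
    (hlt : per μ i < per μ' i) (hd1 : per μ i = 1) : False := by
  have hq0 : pos μ i = 0 := by
    have := pos_lt hμ i
    omega
  have he2 : 2 ≤ per μ' i := by omega
  -- the node k at position 1 in i's μ'-block
  have h1e : 1 < (blk μ' i).length := he2
  obtain ⟨k, hkdef⟩ : ∃ k, (blk μ' i)[1]'h1e = k := ⟨_, rfl⟩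
  have hk := pos_of_getElem hμ' (blk_mem hμ' i) h1e
  rw [hkdef] at hk
  have hkposs : pos μ' k = 1 := hk.1
  have hkpos : pos μ k = 1 := by rw [hpos k, hkposs]
  have hkper2 : 2 ≤ per μ k := by
    have := pos_lt hμ k
    omega
  have hki : k ≠ i := by
    intro h
    rw [h] at hkpos
    omega
  -- the node c heading k's μ-block
  have h0k : 0 < (blk μ k).length := per_pos hμ k
  obtain ⟨c, hcdef⟩ : ∃ c, (blk μ k)[0]'h0k = c := ⟨_, rfl⟩
  have hc := pos_of_getElem hμ (blk_mem hμ k) h0k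
  rw [hcdef] at hc
  have hcpos : pos μ c = 0 := hc.1
  have hcper : per μ c = per μ k := hc.2
  have hcposs : pos μ' c = 0 := by rw [← hpos c, hcpos]
  have hci : c ≠ i := by
    intro h
    rw [h] at hcper
    omega
  have hck : c ≠ k := by
    intro h
    rw [h] at hcpos
    omega
  -- the network
  set f : Fin n → (Fin n → Bool) → Bool :=
    fun j => if j = i then (fun x => x i || (x c && !(x k)))
      else if j = c then (fun _ => true)
      else if j = k then (fun _ => true)
      else (fun x => x j) with hfdef
  set g : ℕ → Fin n → Bool :=
    fun t j => if j = c then decide (0 < t) else if j = k then decide (1 < t)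
      else false with hgdef
  have hfi : ∀ x, f i x = (x i || (x c && !(x k))) := by
    intro x; simp [hfdef]
  have hfc : ∀ x, f c x = true := by
    intro x; simp [hfdef, hci]
  have hfk : ∀ x, f k x = true := by
    intro x; simp [hfdef, hki, Ne.symm hck]
  have hfo : ∀ x (j : Fin n), j ≠ i → j ≠ c → j ≠ k → f j x = x j := by
    intro x j h1 h2 h3; simp [hfdef, h1, h2, h3]
  have hgc : ∀ t, g t c = decide (0 < t) := by
    intro t; simp [hgdef]
  have hgk : ∀ t, g t k = decide (1 < t) := by
    intro t; simp [hgdef, Ne.symm hck]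
  have hgo : ∀ t (j : Fin n), j ≠ c → j ≠ k → g t j = false := by
    intro t j h1 h2; simp [hgdef, h1, h2]
  have hgi : ∀ t, g t i = false :=
    fun t => hgo t i (fun h => hci h.symm) (fun h => hki h.symm)
  have hstep : ∀ t, blockUpdate f (blockAt μ' t) (g t) = g (t + 1) := by
    intro t
    funext j
    simp only [blockUpdate]
    by_cases hjc : j = c
    · rw [hjc, hgc (t+1), hgc t]
      by_cases hmem : c ∈ blockAt μ' t
      · rw [if_pos hmem, hfc]
        exact (decide_eq_true (show 0 < t + 1 by omega)).symm
      · have hne : t ≠ 0 := by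
          intro hteq
          apply hmem
          rw [mem_blockAt hμ', hcposs, hteq]
          exact Nat.zero_mod _
        rw [if_neg hmem]
        exact decide_eq_decide.2 (by omega)
    · by_cases hjk : j = k
      · rw [hjk, hgk (t+1), hgk t]
        by_cases hmem : k ∈ blockAt μ' t
        · have h2 := (mem_blockAt hμ').1 hmem
          rw [hkposs] at h2
          have hle : 1 ≤ t := h2 ▸ Nat.mod_le t _
          rw [if_pos hmem, hfk]
          exact (decide_eq_true (show 1 < t + 1 by omega)).symm
        · have hne : t ≠ 1 := by
            intro hteq
            apply hmem
            rw [mem_blockAt hμ', hkposs, hk.2, hteq]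
            exact Nat.mod_eq_of_lt (by omega)
          rw [if_neg hmem]
          exact decide_eq_decide.2 (by omega)
      · by_cases hji : j = i
        · rw [hji, hgi (t+1), hgi t]
          by_cases hmem : i ∈ blockAt μ' t
          · have h2 := (mem_blockAt hμ').1 hmem
            rw [← hpos i, hq0] at h2
            have hne1 : t ≠ 1 := by
              intro hteq
              rw [hteq, Nat.mod_eq_of_lt (show 1 < per μ' i by omega)] at h2
              omega
            rw [if_pos hmem, hfi, hgi t, hgc t, hgk t, Bool.false_or, ← decide_not,
              ← Bool.decide_and]
            exact decide_eq_false (by omega)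
          · rw [if_neg hmem]
        · rw [hgo t j hjc hjk, hgo (t+1) j hjc hjk]
          by_cases hmem : j ∈ blockAt μ' t
          · rw [if_pos hmem, hfo _ j hji hjc hjk, hgo t j hjc hjk]
          · rw [if_neg hmem]
  have hg0 : (fun _ : Fin n => false) = g 0 := by
    funext j
    by_cases hjc : j = c
    · rw [hjc, hgc]
      simp
    · by_cases hjk : j = k
      · rw [hjk, hgk]
        simp
      · rw [hgo 0 j hjc hjk]
  have htraj' : ∀ t, traj f μ' (fun _ => false) t = g t := by
    rw [hg0]
    exact traj_eq_of_step f μ' g hstep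
  have hagree : ∀ t < 1, blockAt μ t = blockAt μ' t := by
    apply blockAt_eq_low hμ hμ' hpos 1
    intro j _
    have h1 := per_pos hμ j
    have h2 := per_pos hμ' j
    omega
  have htraju : traj f μ (fun _ => false) 1 = g 1 := by
    rw [traj_eq_traj f μ μ' _ 1 hagree 1 le_rfl]
    exact htraj' 1
  have hmemu : i ∈ blockAt μ 1 := by
    rw [mem_blockAt hμ, hq0, hd1]
  have hfire : traj f μ (fun _ => false) 2 i = true := by
    rw [show (2 : ℕ) = 1 + 1 from rfl, traj_succ]
    simp only [blockUpdate]
    rw [if_pos hmemu, htraju, hfi, hgi _, hgc _, hgk _]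
    rw [decide_eq_true (show (0:ℕ) < 1 by omega),
      decide_eq_false (show ¬ ((1:ℕ) < 1) by omega)]
    rfl
  have hpersist : ∀ y : Fin n → Bool, y i = true → f i y = true := by
    intro y hy
    rw [hfi, hy, Bool.true_or]
  have hL2 : 2 ≤ bpLen μ := by
    have h1 : per μ k ≤ bpLen μ := Nat.le_of_dvd (bpLen_pos hμ) (per_dvd hμ k)
    omega
  have hfinμ : traj f μ (fun _ => false) (bpLen μ) i = true :=
    traj_persist f μ _ i hpersist hfire (bpLen μ) hL2
  have hfinμ' : traj f μ' (fun _ => false) (bpLen μ') i = false := by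
    rw [htraj' (bpLen μ'), hgi]
  have h2 : bpUpdate f μ (fun _ => false) i = bpUpdate f μ' (fun _ => false) i := by
    rw [hdyn f]
  rw [bpUpdate_eq_traj, bpUpdate_eq_traj, hfinμ, hfinμ'] at h2
  exact absurd h2 (by simp)

/-- periods agree -/
lemma per_eq_of_dyn {μ μ' : Finset (List (Fin n))} (hμ : IsBP n μ) (hμ' : IsBP n μ')
    (hdyn : ∀ f, bpUpdate f μ = bpUpdate f μ') : ∀ i, per μ i = per μ' i := by
  have hpos := pos_eq_of_dyn hμ hμ' hdyn
  by_contra hne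
  push_neg at hne
  obtain ⟨i0, hi0⟩ := hne
  -- take the minimizer of pos + min per
  obtain ⟨i, hiD, himin⟩ := Finset.exists_min_image
    (Finset.univ.filter fun j : Fin n => per μ j ≠ per μ' j)
    (fun j => pos μ j + min (per μ j) (per μ' j))
    ⟨i0, Finset.mem_filter.2 ⟨Finset.mem_univ _, hi0⟩⟩
  have hiD' : per μ i ≠ per μ' i := (Finset.mem_filter.1 hiD).2
  have hmin : ∀ j, per μ j ≠ per μ' j →
      pos μ i + min (per μ i) (per μ' i) ≤ pos μ j + min (per μ j) (per μ' j) := by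
    intro j hj
    exact himin j (Finset.mem_filter.2 ⟨Finset.mem_univ _, hj⟩)
  rcases Nat.lt_or_ge (per μ i) (per μ' i) with hlt | hge
  · have hmin2 : ∀ j, per μ j ≠ per μ' j →
        pos μ i + per μ i ≤ pos μ j + min (per μ j) (per μ' j) := by
      intro j hj
      have := hmin j hj
      omega
    rcases Nat.lt_or_ge (per μ i) 2 with hd1 | hd2
    · exact keyB2 hμ hμ' hdyn hpos i hlt (by have := per_pos hμ i; omega)
    · exact keyB1 hμ hμ' hdyn hpos i hlt hd2 hmin2
  · have hlt' : per μ' i < per μ i := by omega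
    have hpos' : ∀ j, pos μ' j = pos μ j := fun j => (hpos j).symm
    have hdyn' : ∀ f, bpUpdate f μ' = bpUpdate f μ := fun f => (hdyn f).symm
    rcases Nat.lt_or_ge (per μ' i) 2 with hd1 | hd2
    · exact keyB2 hμ' hμ hdyn' hpos' i hlt' (by have := per_pos hμ' i; omega)
    · apply keyB1 hμ' hμ hdyn' hpos' i hlt' hd2
      intro j hj
      have := hmin j (fun h => hj h.symm)
      rw [hpos' j, hpos' i] at *
      omega


lemma bpLen_dvd {μ μ' : Finset (List (Fin n))} (hμ : IsBP n μ) (hμ' : IsBP n μ')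
    (hper : ∀ i, per μ i = per μ' i) : bpLen μ ∣ bpLen μ' := by
  apply Finset.lcm_dvd
  intro S hS
  obtain ⟨i0, hi0⟩ := List.exists_mem_of_ne_nil S (hμ.1 S hS)
  have hSb : S = blk μ i0 := eq_blk hμ hS hi0
  have hlen : S.length = per μ i0 := by rw [hSb]; rfl
  rw [hlen, hper i0]
  exact per_dvd hμ' i0

end BPaux

/-- Two block-parallel update schedules have the same block-sequence form `φ`
iff every Boolean automata network has the exact same dynamics under both. -/
theorem phi_eq_iff_forall_dynamics_eq (n : ℕ) (μ μ' : Finset (List (Fin n)))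
    (hμ : IsBP n μ) (hμ' : IsBP n μ') :
    phiBP μ = phiBP μ' ↔
      ∀ f : Fin n → (Fin n → Bool) → Bool, bpUpdate f μ = bpUpdate f μ' := by
  constructor
  · intro h f
    unfold bpUpdate
    rw [h]
  · intro hdyn
    have hpos := BPaux.pos_eq_of_dyn hμ hμ' hdyn
    have hper := BPaux.per_eq_of_dyn hμ hμ' hdyn
    have hblock : blockAt μ = blockAt μ' := by
      funext t
      ext j
      rw [BPaux.mem_blockAt hμ, BPaux.mem_blockAt hμ', hpos j, hper j]
    have hlen : bpLen μ = bpLen μ' :=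
      Nat.dvd_antisymm (BPaux.bpLen_dvd hμ hμ' hper)
        (BPaux.bpLen_dvd hμ' hμ (fun i => (hper i).symm))
    unfold phiBP
    rw [hlen, hblock]
end
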